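/- arXiv:1105.0841 — 8 statements merged into one kernel-verified Lean document; each statement's English description precedes it below -/
import Mathlib

section
/- Let n ≥ 2 and s ≥ 1 be integers and let a = (a_1,…,a_n) be a vector of positive integers with gcd(a_1,…,a_n) = 1. Then the s-Frobenius number satisfies the lower bound F_s(a) ≥ s^{1/(n-1)} · ((n-1)! · a_1·a_2·…·a_n)^{1/(n-1)} − (a_1 + a_2 + … + a_n). -/
lemma binom_aux (k : ℕ) : ∀ y d : ℝ, 0 ≤ y → 0 ≤ d →
    y ^ (k+1) + (k+1) * d * y ^ k ≤ (y + d) ^ (k+1) := by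
  induction k with
  | zero => intro y d hy hd; simp
  | succ k ih =>
    intro y d hy hd
    have h := ih y d hy hd
    have hp : 0 ≤ (y:ℝ) + d := by linarith
    have h2 := mul_le_mul_of_nonneg_left h hp
    have e : (y + d) * (y + d) ^ (k+1) = (y + d) ^ (k + 1 + 1) := by ring
    rw [e] at h2
    push_cast
    simp only [pow_succ] at h2 ⊢
    nlinarith [pow_nonneg hy k, pow_nonneg hy (k+1),
      mul_nonneg (mul_nonneg hd hd) (pow_nonneg hy k)]

lemma finite_sol {k : ℕ} (a : Fin k → ℕ) (ha : ∀ i, 0 < a i) (N : ℕ) :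
    {w : Fin k → ℕ | ∑ i, a i * w i ≤ N}.Finite := by
  apply Set.Finite.subset (Set.Finite.pi (fun i : Fin k => Set.finite_Iic N))
  intro w hw
  simp only [Set.mem_pi, Set.mem_univ, Set.mem_Iic, forall_true_left]
  intro i
  calc w i ≤ a i * w i := Nat.le_mul_of_pos_left _ (ha i)
    _ ≤ ∑ j, a j * w j := Finset.single_le_sum (f := fun j => a j * w j)
          (fun j _ => Nat.zero_le _) (Finset.mem_univ i)
    _ ≤ N := hw

lemma count_bound : ∀ (k : ℕ) (a : Fin k → ℕ), (∀ i, 0 < a i) → ∀ N : ℕ,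
    ({w : Fin k → ℕ | ∑ i, a i * w i ≤ N}.ncard : ℝ) * (k.factorial * ∏ i, (a i : ℝ))
      ≤ ((N : ℝ) + ∑ i, (a i : ℝ)) ^ k := by
  intro k
  induction k with
  | zero =>
    intro a ha N
    have h1 : {w : Fin 0 → ℕ | ∑ i, a i * w i ≤ N} = Set.univ := by
      ext w; simp
    rw [h1, Set.ncard_univ]
    simp
  | succ k ih =>
    intro a ha N
    induction N using Nat.strong_induction_on with
    | _ N ihN =>
    have ha0 : 0 < a 0 := ha 0
    -- decomposition of the solution set
    have hsum : ∀ w : Fin (k+1) → ℕ,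
        ∑ i, a i * w i = a 0 * w 0 + ∑ i : Fin k, a i.succ * w i.succ :=
      fun w => Fin.sum_univ_succ _
    set S : Set (Fin (k+1) → ℕ) := {w | ∑ i, a i * w i ≤ N} with hSdef
    set T : Set (Fin k → ℕ) := {v | ∑ i, a i.succ * v i ≤ N} with hTdef
    set S' : Set (Fin (k+1) → ℕ) := {w | ∑ i, a i * w i ≤ N - a 0} with hS'def
    have inj0 : Function.Injective (fun v : Fin k → ℕ => (Fin.cons 0 v : Fin (k+1) → ℕ)) := by
      intro v v' h
      funext i
      have := congrFun h i.succ
      simpa using this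
    have inj1 : Function.Injective
        (fun v : Fin (k+1) → ℕ => (Fin.cons (v 0 + 1) (Fin.tail v) : Fin (k+1) → ℕ)) := by
      intro v v' h
      have h0 : v 0 = v' 0 := by
        have := congrFun h 0
        simpa using this
      funext i
      induction i using Fin.cases with
      | zero => exact h0
      | succ i =>
        have := congrFun h i.succ
        simpa [Fin.tail] using this
    have hS0 : {w ∈ S | w 0 = 0} = (fun v : Fin k → ℕ => (Fin.cons 0 v : Fin (k+1) → ℕ)) '' T := by
      ext w
      constructor
      · rintro ⟨hw, h00⟩
        refine ⟨Fin.tail w, ?_, ?_⟩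
        · have := hsum w
          rw [h00] at this
          simp only [Nat.mul_zero, Nat.zero_add] at this
          simpa [hTdef, Fin.tail, ← this] using (show ∑ i, a i * w i ≤ N from hw)
        · rw [← h00]
          exact Fin.cons_self_tail w
      · rintro ⟨v, hv, rfl⟩
        constructor
        · show ∑ i, a i * (Fin.cons 0 v : Fin (k+1) → ℕ) i ≤ N
          rw [hsum]
          simpa using (show ∑ i, a i.succ * v i ≤ N from hv)
        · simp
    by_cases hc : a 0 ≤ N
    · have hS1 : {w ∈ S | w 0 ≠ 0}
          = (fun v : Fin (k+1) → ℕ => (Fin.cons (v 0 + 1) (Fin.tail v) : Fin (k+1) → ℕ)) '' S' := by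
        ext w
        constructor
        · rintro ⟨hw, h00⟩
          obtain ⟨m, hm⟩ : ∃ m, w 0 = m + 1 := ⟨w 0 - 1, by omega⟩
          refine ⟨Fin.cons m (Fin.tail w), ?_, ?_⟩
          · show ∑ i, a i * (Fin.cons m (Fin.tail w) : Fin (k+1) → ℕ) i ≤ N - a 0
            rw [hsum]
            simp only [Fin.cons_zero, Fin.cons_succ]
            rw [Nat.le_sub_iff_add_le hc]
            have := hsum w
            rw [hm] at this
            have hle : ∑ i, a i * w i ≤ N := hw
            rw [this] at hle
            have e : a 0 * (m + 1) = a 0 * m + a 0 := by ring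
            rw [e] at hle
            have : ∑ i : Fin k, a i.succ * Fin.tail w i = ∑ i : Fin k, a i.succ * w i.succ := rfl
            omega
          · show (Fin.cons ((Fin.cons m (Fin.tail w) : Fin (k+1) → ℕ) 0 + 1)
                (Fin.tail (Fin.cons m (Fin.tail w))) : Fin (k+1) → ℕ) = w
            rw [Fin.cons_zero, Fin.tail_cons, ← hm]
            exact Fin.cons_self_tail w
        · rintro ⟨v, hv, rfl⟩
          constructor
          · show ∑ i, a i * (Fin.cons (v 0 + 1) (Fin.tail v) : Fin (k+1) → ℕ) i ≤ N
            rw [hsum]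
            simp only [Fin.cons_zero, Fin.cons_succ]
            have hv' : ∑ i, a i * v i ≤ N - a 0 := hv
            rw [hsum] at hv'
            have e5 : ∑ i : Fin k, a i.succ * Fin.tail v i = ∑ i : Fin k, a i.succ * v i.succ := rfl
            have e6 : a 0 * (v 0 + 1) = a 0 * v 0 + a 0 := by ring
            omega
          · simp
      have hsplit : S = {w ∈ S | w 0 = 0} ∪ {w ∈ S | w 0 ≠ 0} := by
        ext w; by_cases h : w 0 = 0 <;> simp [h] <;> exact Iff.rfl
      have hfinS : S.Finite := finite_sol a ha N
      have hdisj : Disjoint {w ∈ S | w 0 = 0} {w ∈ S | w 0 ≠ 0} := by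
        rw [Set.disjoint_left]
        rintro w ⟨_, h1⟩ ⟨_, h2⟩
        exact h2 h1
      have key : S.ncard = T.ncard + S'.ncard := by
        rw [hsplit, Set.ncard_union_eq hdisj (hfinS.subset (by intro x hx; exact hx.1))
          (hfinS.subset (by intro x hx; exact hx.1)), hS0, hS1,
          Set.ncard_image_of_injective _ inj0, Set.ncard_image_of_injective _ inj1]
      -- numeric part
      have ihT := ih (fun i => a i.succ) (fun i => ha _) N
      have ihS' := ihN (N - a 0) (by omega)
      rw [key]
      have e1 : ((k+1).factorial : ℝ) * ∏ i : Fin (k+1), (a i:ℝ)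
          = ((k+1) * (a 0:ℝ)) * ((k.factorial:ℝ) * ∏ i : Fin k, (a i.succ : ℝ)) := by
        rw [Fin.prod_univ_succ, Nat.factorial_succ]
        push_cast
        ring
      have e2 : ((N:ℝ) + ∑ i : Fin (k+1), (a i:ℝ))
          = (((N:ℝ)) + ∑ i : Fin k, (a i.succ:ℝ)) + (a 0:ℝ) := by
        rw [Fin.sum_univ_succ]; ring
      have e3 : (((N - a 0 : ℕ)):ℝ) + ∑ i : Fin (k+1), (a i:ℝ)
          = ((N:ℝ) + ∑ i : Fin k, (a i.succ:ℝ)) := by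
        rw [Nat.cast_sub hc, Fin.sum_univ_succ]; ring
      rw [e3] at ihS'
      set y : ℝ := (N:ℝ) + ∑ i : Fin k, (a i.succ:ℝ) with hy
      have hy0 : 0 ≤ y := by
        apply add_nonneg (Nat.cast_nonneg N)
        exact Finset.sum_nonneg fun i _ => Nat.cast_nonneg _
      have hb := binom_aux k y (a 0) hy0 (Nat.cast_nonneg _)
      have t1 : ((T.ncard:ℝ) * (k.factorial * ∏ i : Fin k, (a i.succ : ℝ)))
          * ((k+1) * (a 0:ℝ)) ≤ y^k * ((k+1) * (a 0:ℝ)) := by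
        apply mul_le_mul_of_nonneg_right ihT
        positivity
      rw [e2, e1]
      push_cast
      push_cast at t1 ihS'
      nlinarith [t1, ihS', hb]
    · -- a 0 > N : all solutions have w 0 = 0
      have hS1e : {w ∈ S | w 0 ≠ 0} = (∅ : Set (Fin (k+1) → ℕ)) := by
        ext w
        simp only [Set.mem_empty_iff_false, iff_false]
        rintro ⟨hw, h00⟩
        have hle : ∑ i, a i * w i ≤ N := hw
        rw [hsum] at hle
        have : a 0 ≤ a 0 * w 0 := Nat.le_mul_of_pos_right _ (Nat.pos_of_ne_zero h00)
        omega
      have hsplit : S = {w ∈ S | w 0 = 0} ∪ {w ∈ S | w 0 ≠ 0} := by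
        ext w; by_cases h : w 0 = 0 <;> simp [h] <;> exact Iff.rfl
      have key : S.ncard = T.ncard := by
        rw [hsplit, hS1e, Set.union_empty, hS0, Set.ncard_image_of_injective _ inj0]
      have ihT := ih (fun i => a i.succ) (fun i => ha _) N
      rw [key]
      have e1 : ((k+1).factorial : ℝ) * ∏ i : Fin (k+1), (a i:ℝ)
          = ((k+1) * (a 0:ℝ)) * ((k.factorial:ℝ) * ∏ i : Fin k, (a i.succ : ℝ)) := by
        rw [Fin.prod_univ_succ, Nat.factorial_succ]
        push_cast
        ring
      have e2 : ((N:ℝ) + ∑ i : Fin (k+1), (a i:ℝ))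
          = (((N:ℝ)) + ∑ i : Fin k, (a i.succ:ℝ)) + (a 0:ℝ) := by
        rw [Fin.sum_univ_succ]; ring
      set y : ℝ := (N:ℝ) + ∑ i : Fin k, (a i.succ:ℝ) with hy
      have hy0 : 0 ≤ y := by
        apply add_nonneg (Nat.cast_nonneg N)
        exact Finset.sum_nonneg fun i _ => Nat.cast_nonneg _
      have hb := binom_aux k y (a 0) hy0 (Nat.cast_nonneg _)
      have t1 : ((T.ncard:ℝ) * (k.factorial * ∏ i : Fin k, (a i.succ : ℝ)))
          * ((k+1) * (a 0:ℝ)) ≤ y^k * ((k+1) * (a 0:ℝ)) := by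
        apply mul_le_mul_of_nonneg_right (ih (fun i => a i.succ) (fun i => ha _) N)
        positivity
      rw [e2, e1]
      push_cast
      push_cast at t1
      nlinarith [t1, hb, pow_nonneg hy0 (k+1)]

open Filter Topology

/-- **Lower bound for the s-Frobenius number** (Aliev–Fukshansky–Henk, Theorem 1).
For `n ≥ 2`, `s ≥ 1` and a primitive vector `a` of positive integers, the `s`-Frobenius
number `F` (the largest integer with fewer than `s` representations as a non-negative
integral combination of the `a i`) satisfies
`F ≥ s^(1/(n-1)) * ((n-1)! * a 1 * ... * a n)^(1/(n-1)) - (a 1 + ... + a n)`. -/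
theorem sFrobenius_lower_bound {n s : ℕ} (hn : 2 ≤ n) (hs : 1 ≤ s)
    (a : Fin n → ℕ) (ha : ∀ i, 0 < a i) (hgcd : Finset.univ.gcd a = 1)
    (F : ℤ)
    (hF : IsGreatest
      {b : ℤ | {z : Fin n → ℕ | ∑ i, (a i : ℤ) * (z i : ℤ) = b}.ncard < s} F) :
    (s : ℝ) ^ ((1 : ℝ) / ((n : ℝ) - 1)) *
        (((n - 1).factorial : ℝ) * ∏ i, (a i : ℝ)) ^ ((1 : ℝ) / ((n : ℝ) - 1))
      - ∑ i, (a i : ℝ) ≤ (F : ℝ) := by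
  obtain ⟨k, rfl⟩ : ∃ k, n = k + 1 := ⟨n - 1, by omega⟩
  have hk : 1 ≤ k := by omega
  set R : ℤ → Set (Fin (k+1) → ℕ) :=
    fun b => {z : Fin (k+1) → ℕ | ∑ i, (a i : ℤ) * (z i : ℤ) = b} with hRdef
  have hterm : ∀ (b : ℤ) (z : Fin (k+1) → ℕ), z ∈ R b → ∀ i, (a i : ℤ) * z i ≤ b := by
    intro b z hz i
    rw [← hz]
    exact Finset.single_le_sum (f := fun i => (a i : ℤ) * z i)
      (fun j _ => by positivity) (Finset.mem_univ i)
  have hRfin : ∀ b : ℤ, (R b).Finite := by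
    intro b
    apply Set.Finite.subset (Set.Finite.pi (fun i : Fin (k+1) => Set.finite_Iic b.toNat))
    intro z hz
    simp only [Set.mem_pi, Set.mem_univ, Set.mem_Iic, forall_true_left]
    intro i
    have h1 : (a i : ℤ) * z i ≤ b := hterm b z hz i
    have h2 : (z i : ℤ) ≤ (a i : ℤ) * z i := by
      have : (1 : ℤ) ≤ a i := by exact_mod_cast ha i
      nlinarith [Int.ofNat_nonneg (z i)]
    omega
  have hrep : ∀ b : ℤ, F < b → s ≤ (R b).ncard := by
    intro b hb
    by_contra h
    push_neg at h
    exact absurd (hF.2 h) (not_le.mpr hb)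
  have hF1 : -1 ≤ F := by
    apply hF.2
    have : R (-1) = ∅ := by
      ext z
      simp only [Set.mem_empty_iff_false, iff_false, hRdef, Set.mem_setOf_eq]
      intro h
      have : (0:ℤ) ≤ ∑ i, (a i : ℤ) * z i := Finset.sum_nonneg fun i _ => by positivity
      omega
    show (R (-1)).ncard < s
    rw [this]
    simpa using (show 0 < s by omega)
  set t : ℤ := F + ∑ i, (a i : ℤ) with htdef
  have hσ : (k+1 : ℤ) ≤ ∑ i : Fin (k+1), (a i : ℤ) := by
    calc (k+1 : ℤ) = ∑ _i : Fin (k+1), (1:ℤ) := by simp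
    _ ≤ ∑ i, (a i : ℤ) := Finset.sum_le_sum fun i _ => by exact_mod_cast ha i
  have ht1 : 1 ≤ t := by omega
  set an : ℕ := a (Fin.last k) with handef
  have han : 0 < an := ha _
  have hg : ∀ j : Fin an, ∃ g : Fin s → (Fin (k+1) → ℕ),
      Function.Injective g ∧ ∀ m, g m ∈ R (F + 1 + j) := by
    intro j
    have hb : F < F + 1 + (j : ℤ) := by
      have : (0:ℤ) ≤ (j:ℤ) := by positivity
      omega
    have hfin := hRfin (F + 1 + j)
    have h1 : s ≤ hfin.toFinset.card := by
      rw [← Set.ncard_eq_toFinset_card _ hfin]; exact hrep _ hb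
    obtain ⟨T, hTsub, hTcard⟩ := Finset.exists_subset_card_eq h1
    have e : ↥T ≃ Fin s := Fintype.equivFinOfCardEq (by rwa [Fintype.card_coe])
    refine ⟨fun m => (e.symm m : Fin (k+1) → ℕ), ?_, ?_⟩
    · intro m m' h
      exact e.symm.injective (Subtype.coe_injective h)
    · intro m
      exact (Set.Finite.mem_toFinset hfin).mp (hTsub (e.symm m).2)
  choose g hginj hgmem using hg
  -- the key counting inequality for every scaling factor M
  have key : ∀ M : ℕ, 1 ≤ M →
      ((s : ℝ) * an * (M:ℝ)^k) * ((k.factorial : ℝ) * ∏ i : Fin k, (a i.castSucc : ℝ))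
        ≤ ((M:ℝ) * (t:ℝ) + ∑ i : Fin k, (a i.castSucc : ℝ)) ^ k := by
    intro M hM
    set N : ℕ := (M * t).toNat with hNdef
    have hNt : (N : ℤ) = M * t := by
      have : (0:ℤ) ≤ (M:ℤ) * t := by positivity
      omega
    set W : Set (Fin k → ℕ) := {w : Fin k → ℕ | ∑ i, a i.castSucc * w i ≤ N} with hWdef
    have hWfin : W.Finite := finite_sol _ (fun i => ha _) N
    -- the injection
    have hinj : (s * an * M ^ k : ℕ) ≤ W.ncard := by
      classical
      set Φ : (Fin k → Fin M) × Fin an × Fin s → (Fin k → ℕ) :=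
        fun p => fun i => (p.1 i : ℕ) + M * g p.2.1 p.2.2 i.castSucc with hΦdef
      have hsum : ∀ (j : Fin an) (m : Fin s),
          ∑ i : Fin k, (a i.castSucc : ℤ) * (g j m i.castSucc : ℤ)
            = F + 1 + j - an * (g j m (Fin.last k) : ℤ) := by
        intro j m
        have h1 : ∑ i : Fin (k+1), (a i : ℤ) * (g j m i : ℤ) = F + 1 + j := by
          have := hgmem j m
          rw [hRdef] at this
          exact this
        rw [Fin.sum_univ_castSucc] at h1
        rw [← handef] at h1
        linarith
      have hmem : ∀ p, Φ p ∈ W := by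
        rintro ⟨u, j, m⟩
        show ∑ i : Fin k, a i.castSucc * ((u i : ℕ) + M * g j m i.castSucc) ≤ N
        have hcast : ((∑ i : Fin k, a i.castSucc * ((u i : ℕ) + M * g j m i.castSucc) : ℕ) : ℤ)
            = ∑ i : Fin k, (a i.castSucc : ℤ) * ((u i : ℤ) + M * (g j m i.castSucc : ℤ)) := by
          push_cast
          exact Finset.sum_congr rfl fun i _ => by ring
        have hbound : ∑ i : Fin k, (a i.castSucc : ℤ) * ((u i : ℤ) + M * (g j m i.castSucc : ℤ))
            ≤ (M:ℤ) * t := by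
          have e1 : ∑ i : Fin k, (a i.castSucc : ℤ) * ((u i : ℤ) + M * (g j m i.castSucc : ℤ))
              = (∑ i : Fin k, (a i.castSucc : ℤ) * (u i : ℤ))
                + M * ∑ i : Fin k, (a i.castSucc : ℤ) * (g j m i.castSucc : ℤ) := by
            rw [Finset.mul_sum, ← Finset.sum_add_distrib]
            congr 1; funext i; ring
          rw [e1, hsum j m]
          have e2 : (∑ i : Fin k, (a i.castSucc : ℤ) * (u i : ℤ))
              ≤ (M - 1) * ∑ i : Fin k, (a i.castSucc : ℤ) := by
            rw [Finset.mul_sum]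
            apply Finset.sum_le_sum
            intro i _
            have h1 : (u i : ℤ) ≤ (M:ℤ) - 1 := by
              have := u i |>.isLt
              omega
            have h2 : (0:ℤ) ≤ a i.castSucc := by positivity
            nlinarith
          have e3 : F + 1 + (j:ℤ) - an * (g j m (Fin.last k) : ℤ) ≤ F + an := by
            have h1 : (j : ℤ) + 1 ≤ an := by exact_mod_cast j.isLt
            have h2 : (0:ℤ) ≤ an * (g j m (Fin.last k) : ℤ) := by positivity
            omega
          have e4 : (M:ℤ) * (F + 1 + (j:ℤ) - an * (g j m (Fin.last k) : ℤ)) ≤ M * (F + an) := by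
            apply mul_le_mul_of_nonneg_left e3 (by positivity)
          have e5 : ∑ i : Fin (k+1), (a i : ℤ) = (∑ i : Fin k, (a i.castSucc : ℤ)) + an := by
            rw [Fin.sum_univ_castSucc, ← handef]
          have e6 : (0:ℤ) ≤ ∑ i : Fin k, (a i.castSucc : ℤ) :=
            Finset.sum_nonneg fun i _ => by positivity
          have hM1 : (1:ℤ) ≤ (M:ℤ) := by exact_mod_cast hM
          nlinarith
        have : ((∑ i : Fin k, a i.castSucc * ((u i : ℕ) + M * g j m i.castSucc) : ℕ) : ℤ)
            ≤ (N : ℤ) := by rw [hcast, hNt]; exact hbound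
        exact_mod_cast this
      have hΦinj : Function.Injective Φ := by
        rintro ⟨u, j, m⟩ ⟨u', j', m'⟩ h
        have hcomp : ∀ i : Fin k,
            (u i : ℕ) + M * g j m i.castSucc = (u' i : ℕ) + M * g j' m' i.castSucc :=
          fun i => congrFun h i
        have hu : ∀ i, (u i : ℕ) = (u' i : ℕ) := by
          intro i
          have h1 := hcomp i
          have h2 : ((u i : ℕ) + M * g j m i.castSucc) % M = (u i : ℕ) % M :=
            Nat.add_mul_mod_self_left _ _ _
          have h3 : ((u' i : ℕ) + M * g j' m' i.castSucc) % M = (u' i : ℕ) % M :=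
            Nat.add_mul_mod_self_left _ _ _
          have h4 : (u i : ℕ) % M = (u i : ℕ) := Nat.mod_eq_of_lt (u i).isLt
          have h5 : (u' i : ℕ) % M = (u' i : ℕ) := Nat.mod_eq_of_lt (u' i).isLt
          rw [← h4, ← h2, h1, h3, h5]
        have hz : ∀ i : Fin k, g j m i.castSucc = g j' m' i.castSucc := by
          intro i
          have h1 := hcomp i
          rw [hu i] at h1
          have h2 : M * g j m i.castSucc = M * g j' m' i.castSucc := by omega
          exact Nat.eq_of_mul_eq_mul_left (by omega) h2
        -- now compare the last coordinates via the sums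
        have hs1 := hsum j m
        have hs2 := hsum j' m'
        have hzsum : ∑ i : Fin k, (a i.castSucc : ℤ) * (g j m i.castSucc : ℤ)
            = ∑ i : Fin k, (a i.castSucc : ℤ) * (g j' m' i.castSucc : ℤ) := by
          apply Finset.sum_congr rfl
          intro i _
          rw [hz i]
        have heq : (j:ℤ) + an * (g j' m' (Fin.last k) : ℤ)
            = (j':ℤ) + an * (g j m (Fin.last k) : ℤ) := by
          have hE := hs1.symm.trans (hzsum.trans hs2)
          linarith [hE]
        have heqn : (j:ℕ) + an * (g j' m' (Fin.last k))
            = (j':ℕ) + an * (g j m (Fin.last k)) := by exact_mod_cast heq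
        have hjj : (j:ℕ) = (j':ℕ) := by
          have h2 : ((j:ℕ) + an * g j' m' (Fin.last k)) % an = (j:ℕ) % an :=
            Nat.add_mul_mod_self_left _ _ _
          have h3 : ((j':ℕ) + an * g j m (Fin.last k)) % an = (j':ℕ) % an :=
            Nat.add_mul_mod_self_left _ _ _
          have h4 : (j:ℕ) % an = (j:ℕ) := Nat.mod_eq_of_lt j.isLt
          have h5 : (j':ℕ) % an = (j':ℕ) := Nat.mod_eq_of_lt j'.isLt
          have h6 : ((j:ℕ) + an * g j' m' (Fin.last k)) % an
              = ((j':ℕ) + an * g j m (Fin.last k)) % an := by rw [heqn]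
          rw [← h4, ← h2, h6, h3, h5]
        have hj : j = j' := Fin.ext hjj
        subst hj
        have hlast : g j m (Fin.last k) = g j m' (Fin.last k) := by
          have : an * g j m' (Fin.last k) = an * g j m (Fin.last k) := by omega
          exact (Nat.eq_of_mul_eq_mul_left han this).symm
        have hgm : g j m = g j m' := by
          funext i
          induction i using Fin.lastCases with
          | last => exact hlast
          | cast i => exact hz i
        have hm : m = m' := hginj j hgm
        subst hm
        have huu : u = u' := by
          funext i
          exact Fin.ext (hu i)
        rw [huu]
      -- conclude the cardinality bound
      haveI := hWfin.to_subtype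
      have hcard := Nat.card_le_card_of_injective
        (fun p => (⟨Φ p, hmem p⟩ : ↥W)) (by
          intro p p' h
          exact hΦinj (congrArg Subtype.val h))
      rw [Nat.card_coe_set_eq] at hcard
      calc s * an * M ^ k = Nat.card ((Fin k → Fin M) × Fin an × Fin s) := by
            rw [Nat.card_prod, Nat.card_prod, Nat.card_pi]
            simp [Nat.card_eq_fintype_card, mul_comm, mul_assoc, mul_left_comm]
        _ ≤ W.ncard := hcard
    -- combine with the volume bound
    have hcb := count_bound k (fun i => a i.castSucc) (fun i => ha _) N
    have hNR : (N : ℝ) = (M:ℝ) * (t:ℝ) := by exact_mod_cast hNt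
    rw [hNR] at hcb
    calc ((s : ℝ) * an * (M:ℝ)^k) * ((k.factorial : ℝ) * ∏ i : Fin k, (a i.castSucc : ℝ))
        ≤ (W.ncard : ℝ) * ((k.factorial : ℝ) * ∏ i : Fin k, (a i.castSucc : ℝ)) := by
          apply mul_le_mul_of_nonneg_right _ (by positivity)
          exact_mod_cast hinj
      _ ≤ ((M:ℝ) * (t:ℝ) + ∑ i : Fin k, (a i.castSucc : ℝ)) ^ k := hcb
  -- pass to the limit M → ∞
  set P' : ℝ := ∏ i : Fin k, (a i.castSucc : ℝ) with hP'def
  set σ' : ℝ := ∑ i : Fin k, (a i.castSucc : ℝ) with hσ'def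
  set c : ℝ := (s:ℝ) * an * ((k.factorial : ℝ) * P') with hcdef
  have key' : ∀ M : ℕ, 1 ≤ M → c * (M:ℝ)^k ≤ ((M:ℝ) * (t:ℝ) + σ')^k := by
    intro M hM
    have := key M hM
    calc c * (M:ℝ)^k = ((s : ℝ) * an * (M:ℝ)^k) * ((k.factorial : ℝ) * P') := by ring
      _ ≤ _ := this
  have htR : (1:ℝ) ≤ (t:ℝ) := by exact_mod_cast ht1
  have hmain : c ≤ (t:ℝ) ^ k := by
    have h1 : ∀ M : ℕ, 1 ≤ M → c ≤ ((t:ℝ) + σ'/(M:ℝ))^k := by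
      intro M hM
      have hMpos : (0:ℝ) < M := by exact_mod_cast hM
      have e1 : (M:ℝ) * (t:ℝ) + σ' = M * ((t:ℝ) + σ'/M) := by field_simp
      have h2 := key' M hM
      rw [e1, mul_pow] at h2
      rw [mul_comm c ((M:ℝ)^k)] at h2
      exact le_of_mul_le_mul_left h2 (by positivity)
    have hlim : Tendsto (fun M : ℕ => ((t:ℝ) + σ'/(M:ℝ))^k) atTop (𝓝 (((t:ℝ) + 0)^k)) :=
      (tendsto_const_nhds.add (tendsto_const_div_atTop_nhds_zero_nat σ')).pow k
    have := ge_of_tendsto hlim (eventually_atTop.mpr ⟨1, fun M hM => h1 M hM⟩)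
    simpa using this
  -- final rpow computation
  set P : ℝ := (k.factorial : ℝ) * ∏ i : Fin (k+1), (a i : ℝ) with hPdef
  have hprod : ∏ i : Fin (k+1), (a i : ℝ) = P' * an := by
    rw [Fin.prod_univ_castSucc, ← handef, hP'def]
  have hsP : (s:ℝ) * P ≤ (t:ℝ)^k := by
    calc (s:ℝ) * P = c := by rw [hPdef, hprod, hcdef]; ring
      _ ≤ (t:ℝ)^k := hmain
  have hP1 : (1:ℝ) ≤ P := by
    rw [hPdef]
    have h1 : (1:ℝ) ≤ (k.factorial : ℝ) := by exact_mod_cast k.factorial_pos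
    have h2 : (1:ℝ) ≤ ∏ i : Fin (k+1), (a i : ℝ) := by
      have : 1 ≤ ∏ i : Fin (k+1), a i := Finset.one_le_prod' fun i _ => ha i
      rw [← Nat.cast_prod]
      exact_mod_cast this
    nlinarith
  have hfinal : (s:ℝ) ^ ((1:ℝ)/(k:ℝ)) * P ^ ((1:ℝ)/(k:ℝ)) ≤ (t:ℝ) := by
    have hs0 : (0:ℝ) ≤ s := by positivity
    have hP0 : (0:ℝ) ≤ P := by linarith
    have ht0 : (0:ℝ) ≤ (t:ℝ) := by linarith
    have hk0 : (k:ℝ) ≠ 0 := by positivity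
    have h1 : (s:ℝ) ^ ((1:ℝ)/(k:ℝ)) * P ^ ((1:ℝ)/(k:ℝ)) = ((s:ℝ) * P) ^ ((1:ℝ)/(k:ℝ)) :=
      (Real.mul_rpow hs0 hP0).symm
    have h2 : ((s:ℝ) * P) ^ ((1:ℝ)/(k:ℝ)) ≤ ((t:ℝ) ^ k) ^ ((1:ℝ)/(k:ℝ)) :=
      Real.rpow_le_rpow (by positivity) hsP (by positivity)
    have h3 : ((t:ℝ) ^ k) ^ ((1:ℝ)/(k:ℝ)) = (t:ℝ) := by
      rw [← Real.rpow_natCast (t:ℝ) k, ← Real.rpow_mul ht0]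
      rw [mul_one_div, div_self hk0, Real.rpow_one]
    rw [h1]
    rw [h3] at h2
    exact h2
  -- rewrite the goal
  have hn1 : ((k+1:ℕ):ℝ) - 1 = (k:ℝ) := by push_cast; ring
  have hfac : (k+1) - 1 = k := by omega
  rw [hn1, hfac]
  have htR2 : (t:ℝ) = (F:ℝ) + ∑ i : Fin (k+1), (a i : ℝ) := by
    rw [htdef]
    push_cast
    ring
  rw [htR2] at hfinal
  rw [hPdef] at hfinal
  linarith
end

section
/- Let n ≥ 2 and s ≥ 1 be integers and let a = (a_1,…,a_n) be a vector of positive integers with gcd(a_1,…,a_n) = 1. Then the s-Frobenius number satisfies the upper bound F_s(a) ≤ F_1(a) + (s−1)^{1/(n-1)} · ((n-1)! · a_1·a_2·…·a_n)^{1/(n-1)}, where F_1(a) is the classical Frobenius number of a. -/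
open Finset

private lemma pow_succ_sub_le : ∀ (m a b : ℕ), b ≤ a →
    a ^ (m + 1) ≤ b ^ (m + 1) + (m + 1) * (a ^ m * (a - b)) := by
  intro m
  induction m with
  | zero => intro a b h; simp only [zero_add, pow_one, pow_zero, one_mul]; omega
  | succ m ih =>
    intro a b h
    have h2 := ih a b h
    have h5 : b ^ (m + 1) ≤ a ^ (m + 1) := Nat.pow_le_pow_left h _
    have h6 : (a - b) * b ^ (m + 1) ≤ (a - b) * a ^ (m + 1) := Nat.mul_le_mul_left _ h5
    have h4 : a * a ^ (m + 1) ≤ a * (b ^ (m + 1) + (m + 1) * (a ^ m * (a - b))) :=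
      Nat.mul_le_mul_left a h2
    have h7 : a * b ^ (m + 1) = b ^ (m + 2) + (a - b) * b ^ (m + 1) := by
      have hab : a = b + (a - b) := by omega
      calc a * b ^ (m + 1) = (b + (a - b)) * b ^ (m + 1) := by rw [← hab]
        _ = b ^ (m + 2) + (a - b) * b ^ (m + 1) := by ring
    calc a ^ (m + 2) = a * a ^ (m + 1) := by ring
      _ ≤ a * (b ^ (m + 1) + (m + 1) * (a ^ m * (a - b))) := h4
      _ = a * b ^ (m + 1) + (m + 1) * (a ^ (m + 1) * (a - b)) := by ring
      _ = b ^ (m + 2) + (a - b) * b ^ (m + 1) + (m + 1) * (a ^ (m + 1) * (a - b)) := by rw [h7]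
      _ ≤ b ^ (m + 2) + (a - b) * a ^ (m + 1) + (m + 1) * (a ^ (m + 1) * (a - b)) := by
          exact Nat.add_le_add_right (Nat.add_le_add_left h6 _) _
      _ = b ^ (m + 2) + (m + 2) * (a ^ (m + 1) * (a - b)) := by ring

private lemma key_sum (cL N : ℕ) (hcL : 0 < cL) (t : ℕ) :
    (t + 1) ^ (N + 1) ≤ (N + 1) * (cL * ∑ k ∈ Finset.range (t / cL + 1), (t - cL * k + 1) ^ N) := by
  have hmain : ∀ d : ℕ, d ≤ t / cL + 1 →
      (t + 1 - cL * (t / cL + 1 - d)) ^ (N + 1)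
        ≤ (N + 1) * (cL * ∑ k ∈ Finset.Ico (t / cL + 1 - d) (t / cL + 1), (t - cL * k + 1) ^ N) := by
    intro d
    induction d with
    | zero =>
      intro _
      have e1 : cL * (t / cL) + t % cL = t := Nat.div_add_mod t cL
      have e2 : t % cL < cL := Nat.mod_lt t hcL
      have e3 : cL * (t / cL + 1 - 0) = cL * (t / cL) + cL := by rw [Nat.sub_zero, Nat.mul_add, Nat.mul_one]
      have h2 : t + 1 - cL * (t / cL + 1 - 0) = 0 := by omega
      rw [h2]
      simp [zero_pow (Nat.succ_ne_zero N)]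
    | succ d ih =>
      intro hd
      have hdK : d ≤ t / cL + 1 := by omega
      have ihd := ih hdK
      set j := t / cL - d with hj
      have hj1 : t / cL + 1 - (d + 1) = j := by omega
      have hj2 : t / cL + 1 - d = j + 1 := by omega
      have hcLj : cL * j ≤ t := by
        calc cL * j ≤ cL * (t / cL) := Nat.mul_le_mul_left _ (by omega)
          _ = t / cL * cL := Nat.mul_comm _ _
          _ ≤ t := Nat.div_mul_le_self t cL
      have e4 : cL * (j + 1) = cL * j + cL := by ring
      rw [hj2] at ihd
      rw [hj1]
      have hBA : t + 1 - cL * (j + 1) ≤ t + 1 - cL * j := by omega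
      have hABc : (t + 1 - cL * j) - (t + 1 - cL * (j + 1)) ≤ cL := by omega
      have hpow := pow_succ_sub_le N (t + 1 - cL * j) (t + 1 - cL * (j + 1)) hBA
      have hAeq : t + 1 - cL * j = t - cL * j + 1 := by omega
      have hsum : ∑ k ∈ Finset.Ico j (t / cL + 1), (t - cL * k + 1) ^ N
          = (t - cL * j + 1) ^ N + ∑ k ∈ Finset.Ico (j + 1) (t / cL + 1), (t - cL * k + 1) ^ N :=
        Finset.sum_eq_sum_Ico_succ_bot (by omega) _
      calc (t + 1 - cL * j) ^ (N + 1)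
          ≤ (t + 1 - cL * (j + 1)) ^ (N + 1)
            + (N + 1) * ((t + 1 - cL * j) ^ N * ((t + 1 - cL * j) - (t + 1 - cL * (j + 1)))) := hpow
        _ ≤ (N + 1) * (cL * ∑ k ∈ Finset.Ico (j + 1) (t / cL + 1), (t - cL * k + 1) ^ N)
            + (N + 1) * ((t + 1 - cL * j) ^ N * cL) := by
            exact Nat.add_le_add ihd (Nat.mul_le_mul_left _ (Nat.mul_le_mul_left _ hABc))
        _ = (N + 1) * (cL * ((t - cL * j + 1) ^ N
              + ∑ k ∈ Finset.Ico (j + 1) (t / cL + 1), (t - cL * k + 1) ^ N)) := by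
            rw [hAeq]; ring
        _ = (N + 1) * (cL * ∑ k ∈ Finset.Ico j (t / cL + 1), (t - cL * k + 1) ^ N) := by rw [hsum]
  have h := hmain (t / cL + 1) le_rfl
  simp only [Nat.sub_self, Nat.mul_zero, Nat.sub_zero] at h
  rw [← Finset.range_eq_Ico] at h
  exact h

private def simFinset : (N : ℕ) → (Fin N → ℕ) → ℕ → Finset (Fin N → ℕ)
  | 0, _, _ => {![]}
  | N + 1, c, t =>
    (Finset.range (t / c (Fin.last N) + 1)).biUnion fun k =>
      (simFinset N (fun j => c j.castSucc) (t - c (Fin.last N) * k)).image fun y => Fin.snoc y k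

private lemma simFinset_mem : ∀ (N : ℕ) (c : Fin N → ℕ) (t : ℕ) (y : Fin N → ℕ),
    y ∈ simFinset N c t → ∑ j, c j * y j ≤ t := by
  intro N
  induction N with
  | zero => intro c t y _; simp
  | succ N ih =>
    intro c t y hy
    simp only [simFinset, Finset.mem_biUnion, Finset.mem_range, Finset.mem_image] at hy
    obtain ⟨k, hk, y', hy', rfl⟩ := hy
    have h1 := ih _ _ _ hy'
    have h2 : c (Fin.last N) * k ≤ t := by
      calc c (Fin.last N) * k ≤ c (Fin.last N) * (t / c (Fin.last N)) :=
            Nat.mul_le_mul_left _ (by omega)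
        _ = t / c (Fin.last N) * c (Fin.last N) := Nat.mul_comm _ _
        _ ≤ t := Nat.div_mul_le_self _ _
    rw [Fin.sum_univ_castSucc]
    simp only [Fin.snoc_castSucc, Fin.snoc_last]
    omega

private lemma simFinset_card : ∀ (N : ℕ) (c : Fin N → ℕ), (∀ j, 0 < c j) → ∀ t : ℕ,
    (t + 1) ^ N ≤ N.factorial * (∏ j, c j) * (simFinset N c t).card := by
  intro N
  induction N with
  | zero => intro c _ t; simp [simFinset]
  | succ N ih =>
    intro c hc t
    have hcL : 0 < c (Fin.last N) := hc _
    have hsnoc : ∀ k : ℕ, Function.Injective fun y : Fin N → ℕ => (Fin.snoc y k : Fin (N + 1) → ℕ) := by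
      intro k y y' h
      funext j
      have := congrFun h j.castSucc
      simpa [Fin.snoc_castSucc] using this
    have hdisj : ∀ k1 ∈ Finset.range (t / c (Fin.last N) + 1), ∀ k2 ∈ Finset.range (t / c (Fin.last N) + 1),
        k1 ≠ k2 → Disjoint
          ((simFinset N (fun j => c j.castSucc) (t - c (Fin.last N) * k1)).image
            fun y => (Fin.snoc y k1 : Fin (N + 1) → ℕ))
          ((simFinset N (fun j => c j.castSucc) (t - c (Fin.last N) * k2)).image
            fun y => (Fin.snoc y k2 : Fin (N + 1) → ℕ)) := by
      intro k1 _ k2 _ hk12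
      rw [Finset.disjoint_left]
      intro x hx1 hx2
      rw [Finset.mem_image] at hx1 hx2
      obtain ⟨y1, _, rfl⟩ := hx1
      obtain ⟨y2, _, h2⟩ := hx2
      apply hk12
      have := congrFun h2 (Fin.last N)
      simpa [Fin.snoc_last] using this.symm
    have hcard : (simFinset (N + 1) c t).card
        = ∑ k ∈ Finset.range (t / c (Fin.last N) + 1),
            (simFinset N (fun j => c j.castSucc) (t - c (Fin.last N) * k)).card := by
      rw [simFinset, Finset.card_biUnion hdisj]
      exact Finset.sum_congr rfl fun k _ => Finset.card_image_of_injective _ (hsnoc k)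
    have hfact : (N + 1).factorial * ∏ j : Fin (N + 1), c j
        = (N + 1) * (c (Fin.last N) * (N.factorial * ∏ j : Fin N, c j.castSucc)) := by
      rw [Fin.prod_univ_castSucc, Nat.factorial_succ]; ring
    calc (t + 1) ^ (N + 1)
        ≤ (N + 1) * (c (Fin.last N) * ∑ k ∈ Finset.range (t / c (Fin.last N) + 1),
            (t - c (Fin.last N) * k + 1) ^ N) := key_sum _ N hcL t
      _ ≤ (N + 1) * (c (Fin.last N) * ∑ k ∈ Finset.range (t / c (Fin.last N) + 1),
            N.factorial * (∏ j : Fin N, c j.castSucc)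
              * (simFinset N (fun j => c j.castSucc) (t - c (Fin.last N) * k)).card) := by
          refine Nat.mul_le_mul_left _ (Nat.mul_le_mul_left _ (Finset.sum_le_sum fun k _ => ?_))
          exact ih _ (fun j => hc _) _
      _ = (N + 1).factorial * (∏ j : Fin (N + 1), c j) * (simFinset (N + 1) c t).card := by
          rw [hcard, hfact, Finset.mul_sum, Finset.mul_sum, Finset.mul_sum]
          exact Finset.sum_congr rfl fun k _ => by ring

/-- **Upper bound for the s-Frobenius number** (Aliev–Fukshansky–Henk, Theorem 1).
For `n ≥ 2`, `s ≥ 1` and a primitive vector `a` of positive integers, the `s`-Frobenius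
number `Fs` satisfies `Fs ≤ F1 + (s-1)^(1/(n-1)) * ((n-1)! * a 1 * ... * a n)^(1/(n-1))`,
where `F1` is the classical Frobenius number of `a`. -/
theorem sFrobenius_upper_bound {n s : ℕ} (hn : 2 ≤ n) (hs : 1 ≤ s)
    (a : Fin n → ℕ) (ha : ∀ i, 0 < a i) (hgcd : Finset.univ.gcd a = 1)
    (Fs F1 : ℤ)
    (hFs : IsGreatest
      {b : ℤ | {z : Fin n → ℕ | ∑ i, (a i : ℤ) * (z i : ℤ) = b}.ncard < s} Fs)
    (hF1 : IsGreatest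
      {b : ℤ | {z : Fin n → ℕ | ∑ i, (a i : ℤ) * (z i : ℤ) = b}.ncard < 1} F1) :
    (Fs : ℝ) ≤ (F1 : ℝ) + ((s : ℝ) - 1) ^ ((1 : ℝ) / ((n : ℝ) - 1)) *
        (((n - 1).factorial : ℝ) * ∏ i, (a i : ℝ)) ^ ((1 : ℝ) / ((n : ℝ) - 1)) := by
  obtain ⟨N, rfl⟩ : ∃ m, n = m + 1 := ⟨n - 1, by omega⟩
  have hN : 1 ≤ N := by omega
  have hNR0 : (0 : ℝ) < (N : ℝ) := by exact_mod_cast hN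
  have haL : 0 < a (Fin.last N) := ha _
  -- every integer greater than F1 is representable
  have hrep : ∀ x : ℤ, F1 < x → ∃ w : Fin (N + 1) → ℕ, ∑ i, (a i : ℤ) * (w i : ℤ) = x := by
    intro x hx
    have hxnot : x ∉ {b : ℤ | {z : Fin (N + 1) → ℕ | ∑ i, (a i : ℤ) * (z i : ℤ) = b}.ncard < 1} :=
      fun hmem => absurd (hF1.2 hmem) (not_le.mpr hx)
    have hne : {z : Fin (N + 1) → ℕ | ∑ i, (a i : ℤ) * (z i : ℤ) = x}.ncard ≠ 0 := by
      intro h0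
      refine hxnot ?_
      show {z : Fin (N + 1) → ℕ | ∑ i, (a i : ℤ) * (z i : ℤ) = x}.ncard < 1
      rw [h0]
      exact Nat.zero_lt_one
    obtain ⟨w, hw⟩ := Set.nonempty_of_ncard_ne_zero hne
    exact ⟨w, hw⟩
  by_contra hcon
  push_neg at hcon
  rw [show ((N + 1 : ℕ) : ℝ) - 1 = (N : ℝ) by push_cast; ring,
      show (N + 1 - 1) = N from rfl] at hcon
  set P : ℝ := (N.factorial : ℝ) * ∏ i, (a i : ℝ) with hP
  have hPnn : (0 : ℝ) ≤ P := by positivity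
  have hsnn : (0 : ℝ) ≤ (s : ℝ) - 1 := by
    have : (1 : ℝ) ≤ (s : ℝ) := by exact_mod_cast hs
    linarith
  have hEnn : (0 : ℝ) ≤ ((s : ℝ) - 1) * P := mul_nonneg hsnn hPnn
  rw [← Real.mul_rpow hsnn hPnn] at hcon
  set E : ℝ := ((s : ℝ) - 1) * P with hE
  have hQnn : (0 : ℝ) ≤ E ^ ((1 : ℝ) / (N : ℝ)) := Real.rpow_nonneg hEnn _
  have hEpow : (E ^ ((1 : ℝ) / (N : ℝ))) ^ N = E := by
    rw [← Real.rpow_natCast (E ^ ((1 : ℝ) / (N : ℝ))) N, ← Real.rpow_mul hEnn,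
      one_div, inv_mul_cancel₀ (ne_of_gt hNR0), Real.rpow_one]
  have hF1Fs : F1 < Fs := by
    have h1 : (F1 : ℝ) < (Fs : ℝ) := by linarith
    exact_mod_cast h1
  set d : ℕ := (Fs - F1 - 1).toNat with hddef
  have hd : (d : ℤ) = Fs - F1 - 1 := Int.toNat_of_nonneg (by omega)
  have hdR : ((d : ℝ)) + 1 = (Fs : ℝ) - (F1 : ℝ) := by
    have h1 : ((d : ℤ) : ℝ) = ((Fs - F1 - 1 : ℤ) : ℝ) := by rw [hd]
    push_cast at h1
    linarith
  have hkeyR : E < ((d : ℝ) + 1) ^ N := by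
    calc E = (E ^ ((1 : ℝ) / (N : ℝ))) ^ N := hEpow.symm
      _ < ((d : ℝ) + 1) ^ N := by
          apply pow_lt_pow_left₀ _ hQnn (by omega)
          rw [hdR]; linarith
  have hkeyN : (s - 1) * (N.factorial * ∏ i, a i) < (d + 1) ^ N := by
    have h1 : (((s - 1) * (N.factorial * ∏ i, a i) : ℕ) : ℝ) < (((d + 1) ^ N : ℕ) : ℝ) := by
      push_cast [Nat.cast_sub hs]
      convert hkeyR using 2 <;> push_cast <;> ring
    exact_mod_cast h1
  -- the finset of small lattice points
  have hcpos : ∀ j : Fin N, 0 < a j.castSucc := fun j => ha _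
  have hScard := simFinset_card N (fun j => a j.castSucc) hcpos d
  set S : Finset (Fin N → ℕ) := simFinset N (fun j => a j.castSucc) d with hS
  have hsnoc_inj : Function.Injective fun y : Fin N → ℕ => (Fin.snoc y 0 : Fin (N + 1) → ℕ) := by
    intro y y' h
    funext j
    have := congrFun h j.castSucc
    simpa [Fin.snoc_castSucc] using this
  set D : Finset (Fin (N + 1) → ℕ) := S.image (fun y => (Fin.snoc y 0 : Fin (N + 1) → ℕ)) with hD
  have hDcard : D.card = S.card := Finset.card_image_of_injective _ hsnoc_inj
  have hDprop : ∀ v ∈ D, v (Fin.last N) = 0 ∧ ∑ i, a i * v i ≤ d := by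
    intro v hv
    rw [hD, Finset.mem_image] at hv
    obtain ⟨y, hy, rfl⟩ := hv
    refine ⟨by simp [Fin.snoc_last], ?_⟩
    have h1 := simFinset_mem N (fun j => a j.castSucc) d y hy
    rw [Fin.sum_univ_castSucc]
    simp only [Fin.snoc_castSucc, Fin.snoc_last, Nat.mul_zero, Nat.add_zero]
    exact h1
  -- the representation set is finite
  have hFs0 : 0 ≤ Fs := by
    have hm1 : (-1 : ℤ) ∈ {b : ℤ | {z : Fin (N + 1) → ℕ | ∑ i, (a i : ℤ) * (z i : ℤ) = b}.ncard < 1} := by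
      have hempty : {z : Fin (N + 1) → ℕ | ∑ i, (a i : ℤ) * (z i : ℤ) = (-1 : ℤ)} = ∅ := by
        ext z
        simp only [Set.mem_setOf_eq, Set.mem_empty_iff_false, iff_false]
        intro hz
        have : (0 : ℤ) ≤ ∑ i, (a i : ℤ) * (z i : ℤ) := Finset.sum_nonneg fun i _ => by positivity
        omega
      simp [Set.mem_setOf_eq, hempty]
    have := hF1.2 hm1
    omega
  set RS : Set (Fin (N + 1) → ℕ) := {z | ∑ i, (a i : ℤ) * (z i : ℤ) = Fs} with hRS
  have hfin : RS.Finite := by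
    apply Set.Finite.subset (Set.Finite.pi fun i : Fin (N + 1) => Set.finite_Iic Fs.toNat)
    intro z hz
    rw [hRS, Set.mem_setOf_eq] at hz
    rw [Set.mem_pi]
    intro i _
    rw [Set.mem_Iic]
    have h1 : (a i : ℤ) * (z i : ℤ) ≤ Fs := by
      rw [← hz]
      exact Finset.single_le_sum (f := fun i => (a i : ℤ) * (z i : ℤ))
        (fun j _ => by positivity) (Finset.mem_univ i)
    have h2 : (z i : ℤ) ≤ Fs := by
      have h3 : (1 : ℤ) ≤ (a i : ℤ) := by exact_mod_cast ha i
      nlinarith [Int.ofNat_nonneg (z i)]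
    have h4 : (z i : ℤ) ≤ (Fs.toNat : ℤ) := by rwa [Int.toNat_of_nonneg hFs0]
    exact_mod_cast h4
  set R : Finset (Fin (N + 1) → ℕ) := hfin.toFinset with hR
  -- chosen representations of F1 + δ
  have hrepδ : ∀ δ : ℕ, 1 ≤ δ → ∃ w : Fin (N + 1) → ℕ, ∑ i, (a i : ℤ) * (w i : ℤ) = F1 + δ := by
    intro δ hδ
    refine hrep _ ?_
    have : (1 : ℤ) ≤ (δ : ℤ) := by exact_mod_cast hδ
    omega
  choose W0 hW0 using hrepδ
  set W : ℕ → (Fin (N + 1) → ℕ) := fun δ => if h : 1 ≤ δ then W0 δ h else 0 with hW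
  have hWspec : ∀ δ : ℕ, 1 ≤ δ → ∑ i, (a i : ℤ) * ((W δ) i : ℤ) = F1 + δ := by
    intro δ hδ
    rw [hW]
    simp only [dif_pos hδ]
    exact hW0 δ hδ
  -- the map into representations
  set φf : (Fin (N + 1) → ℕ) → ℕ := fun v => ∑ i, a i * v i with hφf
  set δf : (Fin (N + 1) → ℕ) → ℕ := fun v => (d - φf v) % a (Fin.last N) + 1 with hδf
  set kf : (Fin (N + 1) → ℕ) → ℕ := fun v => (d - φf v) / a (Fin.last N) with hkf
  set Φ : (Fin (N + 1) → ℕ) → (Fin (N + 1) → ℕ) :=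
    fun v i => v i + W (δf v) i + (if i = Fin.last N then kf v else 0) with hΦ
  have hδ1 : ∀ v, 1 ≤ δf v := fun v => Nat.le_add_left 1 _
  have hδle : ∀ v, δf v ≤ a (Fin.last N) := by
    intro v
    have := Nat.mod_lt (d - φf v) haL
    simp only [hδf]
    omega
  have hΦmem : ∀ v ∈ D, Φ v ∈ R := by
    intro v hv
    obtain ⟨hv0, hvd⟩ := hDprop v hv
    rw [hR, Set.Finite.mem_toFinset, hRS, Set.mem_setOf_eq]
    have hWs := hWspec (δf v) (hδ1 v)
    have hsplit : ∀ i, (a i : ℤ) * (((Φ v) i : ℕ) : ℤ)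
        = (a i : ℤ) * (v i : ℤ) + (a i : ℤ) * ((W (δf v)) i : ℤ)
          + (if i = Fin.last N then (a i : ℤ) * (kf v : ℤ) else 0) := by
      intro i
      rw [hΦ]
      simp only
      push_cast [apply_ite (fun m : ℕ => (m : ℤ))]
      split <;> ring
    rw [Finset.sum_congr rfl fun i _ => hsplit i]
    rw [Finset.sum_add_distrib, Finset.sum_ite_eq' Finset.univ (Fin.last N)
      (fun i => (a i : ℤ) * (kf v : ℤ))]
    simp only [Finset.mem_univ, if_true]
    have hφcast : ((φf v : ℕ) : ℤ) = ∑ i, (a i : ℤ) * (v i : ℤ) := by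
      rw [hφf]
      push_cast
      rfl
    have harith : (δf v : ℤ) + (a (Fin.last N) : ℤ) * (kf v : ℤ) = (d : ℤ) - (φf v : ℤ) + 1 := by
      have h9 : φf v ≤ d := hvd
      have h11 : δf v = (d - φf v) % a (Fin.last N) + 1 := rfl
      have h8 : (d - φf v) % a (Fin.last N) + a (Fin.last N) * kf v = d - φf v := by
        show _ + a (Fin.last N) * ((d - φf v) / a (Fin.last N)) = _
        exact Nat.mod_add_div _ _
      have h10 : δf v + a (Fin.last N) * kf v = d - φf v + 1 := by omega
      have h13 : ((δf v + a (Fin.last N) * kf v : ℕ) : ℤ) = ((d - φf v + 1 : ℕ) : ℤ) := by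
        rw [h10]
      rw [show ((δf v + a (Fin.last N) * kf v : ℕ) : ℤ)
            = (δf v : ℤ) + (a (Fin.last N) : ℤ) * (kf v : ℤ) by push_cast; ring,
          show ((d - φf v + 1 : ℕ) : ℤ) = ((d - φf v : ℕ) : ℤ) + 1 by push_cast; ring,
          Nat.cast_sub h9] at h13
      exact h13
    rw [Finset.sum_add_distrib, ← hφcast, hWs]
    have hdint : (d : ℤ) = Fs - F1 - 1 := hd
    linarith
  have hcardD : D.card ≤ R.card * a (Fin.last N) := by
    have h1 : D.card ≤ (R ×ˢ Finset.range (a (Fin.last N))).card := by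
      apply Finset.card_le_card_of_injOn (fun v => (Φ v, δf v - 1))
      · intro v hv
        rw [Finset.mem_coe, Finset.mem_product]
        refine ⟨hΦmem v hv, Finset.mem_range.mpr ?_⟩
        have := hδle v
        have := hδ1 v
        show δf v - 1 < a (Fin.last N)
        omega
      · intro v hv v' hv' heq
        have hδeq : δf v = δf v' := by
          have h2 := congrArg Prod.snd heq
          simp only at h2
          have := hδ1 v
          have := hδ1 v'
          omega
        have hΦeq : Φ v = Φ v' := congrArg Prod.fst heq
        funext i
        by_cases hi : i = Fin.last N
        · rw [hi, (hDprop v hv).1, (hDprop v' hv').1]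
        · have h3 := congrFun hΦeq i
          rw [hΦ] at h3
          simp only [if_neg hi, hδeq] at h3
          omega
    rw [Finset.card_product, Finset.card_range] at h1
    exact h1
  have hRcard : s ≤ R.card := by
    by_contra hRc
    push_neg at hRc
    have h1 : S.card ≤ (s - 1) * a (Fin.last N) := by
      calc S.card = D.card := hDcard.symm
        _ ≤ R.card * a (Fin.last N) := hcardD
        _ ≤ (s - 1) * a (Fin.last N) := Nat.mul_le_mul_right _ (by omega)
    have h2 : (d + 1) ^ N ≤ N.factorial * (∏ j : Fin N, a j.castSucc) * ((s - 1) * a (Fin.last N)) :=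
      le_trans hScard (Nat.mul_le_mul_left _ h1)
    have h3 : N.factorial * (∏ j : Fin N, a j.castSucc) * ((s - 1) * a (Fin.last N))
        = (s - 1) * (N.factorial * ∏ i, a i) := by
      rw [Fin.prod_univ_castSucc (f := a)]
      ring
    omega
  have hlt : RS.ncard < s := hFs.1
  have hRn : RS.ncard = R.card := by
    rw [hR, ← Set.ncard_coe_finset, Set.Finite.coe_toFinset]
  omega
end

section
/- Let s ≥ 1 be an integer and let a_1 < a_2 be positive integers with gcd(a_1, a_2) = 1. Then the s-Frobenius number of the pair satisfies F_s(a_1, a_2) = s·a_1·a_2 − (a_1 + a_2). -/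
/-- Exact description of the representation set at `B = s·a₁·a₂ − a₁ − a₂`. -/
lemma sFrob_aux_atB {s a₁ a₂ : ℕ} (h₁ : 0 < a₁) (h₁₂ : a₁ < a₂)
    (hgcd : Nat.gcd a₁ a₂ = 1) :
    {z : ℕ × ℕ | (a₁ : ℤ) * (z.1 : ℤ) + (a₂ : ℤ) * (z.2 : ℤ)
        = (s : ℤ) * a₁ * a₂ - (a₁ + a₂)}
      = ↑((Finset.Ico 1 s).image (fun t => (a₂ * t - 1, a₁ * (s - t) - 1))) := by
  have ha₂ : 0 < a₂ := h₁.trans h₁₂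
  ext ⟨x, y⟩
  simp only [Finset.coe_image, Set.mem_image, Finset.mem_coe, Finset.mem_Ico,
    Set.mem_setOf_eq, Prod.mk.injEq]
  constructor
  · intro hxy
    have key : (a₁ : ℤ) * ((x : ℤ) + 1) + (a₂ : ℤ) * ((y : ℤ) + 1)
        = (s : ℤ) * a₁ * a₂ := by linarith
    have hdvd : (a₂ : ℤ) ∣ (a₁ : ℤ) * ((x : ℤ) + 1) :=
      ⟨(s : ℤ) * a₁ - ((y : ℤ) + 1), by linarith⟩
    have hcop : IsCoprime (a₂ : ℤ) (a₁ : ℤ) := by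
      rw [Int.isCoprime_iff_gcd_eq_one, Int.gcd_natCast_natCast, Nat.gcd_comm]
      exact hgcd
    have hdx : (a₂ : ℤ) ∣ ((x : ℤ) + 1) := hcop.dvd_of_dvd_mul_left hdvd
    have hdx' : a₂ ∣ (x + 1) := by
      have : ((x + 1 : ℕ) : ℤ) = (x : ℤ) + 1 := by push_cast; ring
      exact_mod_cast this ▸ hdx
    obtain ⟨t, ht⟩ := hdx'
    have ht1 : 1 ≤ t := by
      rcases Nat.eq_zero_or_pos t with h | h
      · rw [h, Nat.mul_zero] at ht; omega
      · exact h
    -- from key, cancel a₂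
    have key2 : (a₁ : ℤ) * t + ((y : ℤ) + 1) = (s : ℤ) * a₁ := by
      have hxt : ((x : ℤ) + 1) = (a₂ : ℤ) * t := by exact_mod_cast congrArg (Nat.cast : ℕ → ℤ) ht
      have h2 : (a₂ : ℤ) * ((a₁ : ℤ) * t + ((y : ℤ) + 1)) = (a₂ : ℤ) * ((s : ℤ) * a₁) := by
        rw [hxt] at key; ring_nf; ring_nf at key; linarith
      exact mul_left_cancel₀ (by exact_mod_cast ha₂.ne') h2
    have hts : t < s := by
      by_contra hc
      push_neg at hc
      have : (s : ℤ) ≤ (t : ℤ) := by exact_mod_cast hc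
      nlinarith [Int.natCast_nonneg y, Int.natCast_pos.mpr h₁]
    refine ⟨t, ⟨ht1, hts⟩, ?_, ?_⟩
    · omega
    · -- y = a₁*(s-t) - 1
      have hnat : a₁ * t + (y + 1) = s * a₁ := by exact_mod_cast key2
      have hsplit : a₁ * t + a₁ * (s - t) = s * a₁ := by
        rw [← Nat.mul_add, Nat.add_sub_cancel' hts.le, Nat.mul_comm]
      omega
  · rintro ⟨t, ⟨ht1, hts⟩, hx, hy⟩
    subst hx hy
    have h1 : 1 ≤ a₂ * t := Nat.one_le_iff_ne_zero.mpr (by positivity)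
    have h2 : 1 ≤ a₁ * (s - t) := Nat.one_le_iff_ne_zero.mpr
      (Nat.mul_ne_zero h₁.ne' (by omega))
    have h3 : t ≤ s := hts.le
    push_cast [Nat.cast_sub h1, Nat.cast_sub h2, Nat.cast_sub h3]
    ring

/-- Every integer greater than `s·a₁·a₂ − a₁ − a₂` has at least `s` representations. -/
lemma sFrob_aux_big {s a₁ a₂ : ℕ} (hs : 1 ≤ s) (h₁ : 0 < a₁) (h₁₂ : a₁ < a₂)
    (hgcd : Nat.gcd a₁ a₂ = 1) (b : ℤ)
    (hb : (s : ℤ) * a₁ * a₂ - (a₁ + a₂) < b) :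
    s ≤ {z : ℕ × ℕ | (a₁ : ℤ) * (z.1 : ℤ) + (a₂ : ℤ) * (z.2 : ℤ) = b}.ncard := by
  have ha₂ : 0 < a₂ := h₁.trans h₁₂
  haveI : NeZero a₂ := ⟨ha₂.ne'⟩
  have hBnn : (-1 : ℤ) ≤ (s : ℤ) * a₁ * a₂ - (a₁ + a₂) := by
    have h1 : (1 : ℤ) ≤ s := by exact_mod_cast hs
    have h2 : (1 : ℤ) ≤ a₁ := by exact_mod_cast h₁
    have h3' : 2 ≤ a₂ := by omega
    have h3 : (2 : ℤ) ≤ a₂ := by exact_mod_cast h3'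
    nlinarith [mul_nonneg (mul_nonneg (by linarith : (0:ℤ) ≤ (s:ℤ) - 1) (by linarith : (0:ℤ) ≤ (a₁:ℤ))) (by linarith : (0:ℤ) ≤ (a₂:ℤ)),
      mul_nonneg (by linarith : (0:ℤ) ≤ (a₁:ℤ) - 1) (by linarith : (0:ℤ) ≤ (a₂:ℤ) - 1)]
  have hbnn : (0 : ℤ) ≤ b := by linarith
  set n : ℕ := b.toNat with hn
  have hbn : (n : ℤ) = b := Int.toNat_of_nonneg hbnn
  -- the minimal residue x₀
  set x₀ : ℕ := ((n : ZMod a₂) * (a₁ : ZMod a₂)⁻¹).val with hx₀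
  have hx₀lt : x₀ < a₂ := ZMod.val_lt _
  have hinv : (a₁ : ZMod a₂) * (a₁ : ZMod a₂)⁻¹ = 1 := ZMod.coe_mul_inv_eq_one a₁ hgcd
  have hcong : (a₂ : ℤ) ∣ (n : ℤ) - (a₁ : ℤ) * x₀ := by
    have h0 : ((n : ℤ) - (a₁ : ℤ) * x₀ : ℤ) = ((n : ℤ) - ((a₁ * x₀ : ℕ) : ℤ)) := by push_cast; ring
    rw [h0]
    rw [← ZMod.intCast_zmod_eq_zero_iff_dvd]
    push_cast
    have hval : ((x₀ : ℕ) : ZMod a₂) = (n : ZMod a₂) * (a₁ : ZMod a₂)⁻¹ := by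
      rw [hx₀, ZMod.natCast_val, ZMod.cast_id]
    rw [hval]
    calc (n : ZMod a₂) - (a₁ : ZMod a₂) * ((n : ZMod a₂) * (a₁ : ZMod a₂)⁻¹)
        = (n : ZMod a₂) - (n : ZMod a₂) * ((a₁ : ZMod a₂) * (a₁ : ZMod a₂)⁻¹) := by ring
      _ = 0 := by rw [hinv, mul_one, sub_self]
  obtain ⟨m', hm'⟩ := hcong
  have hm'ge : ((s : ℤ) - 1) * a₁ ≤ m' := by
    have h1 : (a₁ : ℤ) * x₀ ≤ (a₁ : ℤ) * (a₂ - 1) := by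
      have : (x₀ : ℤ) ≤ (a₂ : ℤ) - 1 := by have := hx₀lt; omega
      have ha₁ : (0 : ℤ) ≤ a₁ := Int.natCast_nonneg a₁
      nlinarith
    have h2 : (a₂ : ℤ) * (((s : ℤ) - 1) * a₁ - 1) < (a₂ : ℤ) * m' := by
      have ha₂' : (0 : ℤ) < a₂ := by exact_mod_cast ha₂
      nlinarith [hbn]
    have ha₂' : (0 : ℤ) < a₂ := by exact_mod_cast ha₂
    have := lt_of_mul_lt_mul_left (by linarith [h2] : (a₂ : ℤ) * (((s : ℤ) - 1) * a₁ - 1) < (a₂ : ℤ) * m') ha₂'.le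
    linarith
  have hm'nn : (0 : ℤ) ≤ m' := by
    have h1 : (0 : ℤ) ≤ ((s : ℤ) - 1) * a₁ := by
      have hs' : (1 : ℤ) ≤ s := by exact_mod_cast hs
      exact mul_nonneg (by linarith) (Int.natCast_nonneg a₁)
    linarith
  set m : ℕ := m'.toNat with hm
  have hmm : (m : ℤ) = m' := Int.toNat_of_nonneg hm'nn
  have hmge : (s - 1) * a₁ ≤ m := by
    have : (((s - 1) * a₁ : ℕ) : ℤ) ≤ (m : ℤ) := by
      rw [hmm]; push_cast [Nat.cast_sub hs]; exact hm'ge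
    exact_mod_cast this
  -- the s solutions
  set f : ℕ → ℕ × ℕ := fun k => (x₀ + k * a₂, m - k * a₁) with hf
  have hsub : ↑((Finset.range s).image f)
      ⊆ {z : ℕ × ℕ | (a₁ : ℤ) * (z.1 : ℤ) + (a₂ : ℤ) * (z.2 : ℤ) = b} := by
    intro z hz
    simp only [Finset.coe_image, Set.mem_image, Finset.mem_coe, Finset.mem_range] at hz
    obtain ⟨k, hk, rfl⟩ := hz
    simp only [Set.mem_setOf_eq, hf]
    have hka : k * a₁ ≤ m := by
      calc k * a₁ ≤ (s - 1) * a₁ := Nat.mul_le_mul_right _ (by omega)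
        _ ≤ m := hmge
    push_cast [Nat.cast_sub hka]
    rw [hmm]
    linarith [hm', hbn]
  have hinj : Set.InjOn f ↑(Finset.range s) := by
    intro k1 _ k2 _ he
    have h1 : x₀ + k1 * a₂ = x₀ + k2 * a₂ := congrArg Prod.fst he
    have h2 : k1 * a₂ = k2 * a₂ := by omega
    exact Nat.eq_of_mul_eq_mul_right ha₂ h2
  -- finiteness of the big set
  have hfin : {z : ℕ × ℕ | (a₁ : ℤ) * (z.1 : ℤ) + (a₂ : ℤ) * (z.2 : ℤ) = b}.Finite := by
    apply Set.Finite.subset ((Finset.range (n + 1) ×ˢ Finset.range (n + 1)).finite_toSet)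
    rintro ⟨x, y⟩ hxy
    simp only [Set.mem_setOf_eq] at hxy
    simp only [Finset.coe_product, Set.mem_prod, Finset.mem_coe, Finset.mem_range]
    have ha₁' : (1 : ℤ) ≤ a₁ := by exact_mod_cast h₁
    have ha₂' : (1 : ℤ) ≤ a₂ := by exact_mod_cast ha₂
    have hx : (x : ℤ) ≤ n := by nlinarith [Int.natCast_nonneg x, Int.natCast_nonneg y, hbn]
    have hy : (y : ℤ) ≤ n := by nlinarith [Int.natCast_nonneg x, Int.natCast_nonneg y, hbn]
    constructor <;> omega
  calc s = ((Finset.range s).image f).card := by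
        rw [Finset.card_image_of_injOn (by exact_mod_cast hinj), Finset.card_range]
    _ = (↑((Finset.range s).image f) : Set (ℕ × ℕ)).ncard := (Set.ncard_coe_finset _).symm
    _ ≤ _ := Set.ncard_le_ncard hsub hfin

/-- **The s-Frobenius number of two coprime integers** (Beck–Robins):
for `0 < a₁ < a₂` with `gcd(a₁, a₂) = 1` and `s ≥ 1`, the largest integer having
fewer than `s` representations `a₁ x + a₂ y` with `x, y ∈ ℤ_{≥0}` equals
`s·a₁·a₂ − (a₁ + a₂)`. -/
theorem sFrobenius_dim_two {s a₁ a₂ : ℕ} (hs : 1 ≤ s) (h₁ : 0 < a₁) (h₁₂ : a₁ < a₂)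
    (hgcd : Nat.gcd a₁ a₂ = 1) (F : ℤ)
    (hF : IsGreatest
      {b : ℤ | {z : ℕ × ℕ | (a₁ : ℤ) * (z.1 : ℤ) + (a₂ : ℤ) * (z.2 : ℤ) = b}.ncard < s} F) :
    F = (s : ℤ) * a₁ * a₂ - (a₁ + a₂) := by
  have ha₂ : 0 < a₂ := h₁.trans h₁₂
  -- B is in the set: fewer than s representations
  have hmemB : ((s : ℤ) * a₁ * a₂ - (a₁ + a₂)) ∈
      {b : ℤ | {z : ℕ × ℕ | (a₁ : ℤ) * (z.1 : ℤ) + (a₂ : ℤ) * (z.2 : ℤ) = b}.ncard < s} := by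
    have hcard : {z : ℕ × ℕ | (a₁ : ℤ) * (z.1 : ℤ) + (a₂ : ℤ) * (z.2 : ℤ)
        = (s : ℤ) * a₁ * a₂ - (a₁ + a₂)}.ncard = s - 1 := by
      rw [sFrob_aux_atB h₁ h₁₂ hgcd, Set.ncard_coe_finset]
      rw [Finset.card_image_of_injOn, Nat.card_Ico]
      intro t1 ht1 t2 ht2 he
      simp only [Finset.coe_Ico, Set.mem_Ico] at ht1 ht2
      have h1 : a₂ * t1 - 1 = a₂ * t2 - 1 := congrArg Prod.fst he
      have h2 : 1 ≤ a₂ * t1 := Nat.one_le_iff_ne_zero.mpr (Nat.mul_ne_zero ha₂.ne' (by omega))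
      have h3 : 1 ≤ a₂ * t2 := Nat.one_le_iff_ne_zero.mpr (Nat.mul_ne_zero ha₂.ne' (by omega))
      have h4 : a₂ * t1 = a₂ * t2 := by omega
      exact Nat.eq_of_mul_eq_mul_left ha₂ h4
    simp only [Set.mem_setOf_eq, hcard]
    omega
  have hle : F ≤ (s : ℤ) * a₁ * a₂ - (a₁ + a₂) := by
    by_contra hc
    push_neg at hc
    have := sFrob_aux_big hs h₁ h₁₂ hgcd F hc
    have hFmem := hF.1
    simp only [Set.mem_setOf_eq] at hFmem
    omega
  have hge : (s : ℤ) * a₁ * a₂ - (a₁ + a₂) ≤ F := hF.2 hmemB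
  linarith
end

section
/- Let s ≥ 1 be an integer, let K ⊆ ℝ^n be a convex body (a compact convex set with non-empty interior) and let Λ ⊆ ℝ^n be a full-rank lattice. Then the s-covering radius satisfies the lower bound μ_s(K, Λ) ≥ s^{1/n} · (det Λ / vol K)^{1/n}, where vol K is the n-dimensional Lebesgue measure of K and det Λ is the covolume of Λ. -/
open MeasureTheory Set ENNReal Pointwise

set_option maxHeartbeats 1000000
set_option synthInstance.maxHeartbeats 400000

/-- **Lower bound for the s-covering radius** (Lemma 1 in Aliev–Fukshansky–Henk).
Let `K ⊆ ℝⁿ` be a convex body, `Λ = B·ℤⁿ` a full-rank lattice and let `μ` be the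
`s`-covering radius of `K` with respect to `Λ`, i.e. the smallest `μ > 0` such that every
`t ∈ ℝⁿ` lies in at least `s` distinct lattice translates of `μ K`. Then
`μ ≥ s^(1/n) * (det Λ / vol K)^(1/n)`. -/
theorem sCoveringRadius_lower_bound {n s : ℕ} (hs : 1 ≤ s)
    (K : Set (Fin n → ℝ)) (hKcpt : IsCompact K) (hKconv : Convex ℝ K)
    (hKint : (interior K).Nonempty)
    (B : Matrix (Fin n) (Fin n) ℝ) (hB : IsUnit B.det)
    (Λ : Set (Fin n → ℝ))
    (hΛ : Λ = {x | ∃ z : Fin n → ℤ, x = B.mulVec fun i => (z i : ℝ)})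
    (μ : ℝ)
    (hμ : IsLeast {r : ℝ | 0 < r ∧ ∀ t : Fin n → ℝ,
        ∃ b : Fin s → (Fin n → ℝ), Function.Injective b ∧
          ∀ i, b i ∈ Λ ∧ ∃ x ∈ K, t = b i + r • x} μ) :
    (s : ℝ) ^ ((1 : ℝ) / (n : ℝ)) *
        (|B.det| / (MeasureTheory.volume K).toReal) ^ ((1 : ℝ) / (n : ℝ)) ≤ μ := by
  classical
  obtain ⟨⟨hμpos, hcov⟩, hlb⟩ := hμ
  rcases Nat.eq_zero_or_pos n with hn | hn
  · -- degenerate case `n = 0`: the hypothesis `IsLeast` is contradictory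
    subst hn
    exfalso
    have h2 : μ / 2 ∈ {r : ℝ | 0 < r ∧ ∀ t : Fin 0 → ℝ,
        ∃ b : Fin s → (Fin 0 → ℝ), Function.Injective b ∧
          ∀ i, b i ∈ Λ ∧ ∃ x ∈ K, t = b i + r • x} := by
      refine ⟨by linarith, fun t => ?_⟩
      obtain ⟨b, hbinj, hb⟩ := hcov t
      refine ⟨b, hbinj, fun i => ⟨(hb i).1, ?_⟩⟩
      obtain ⟨x, hx, -⟩ := (hb i).2
      exact ⟨x, hx, Subsingleton.elim _ _⟩
    have := hlb h2
    linarith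
  · -- main case `n ≥ 1`
    have hn0 : (n : ℝ) ≠ 0 := Nat.cast_ne_zero.2 hn.ne'
    have hinv : Invertible B := B.invertibleOfIsUnitDet hB
    set bb : Module.Basis (Fin n) ℝ (Fin n → ℝ) :=
      (Pi.basisFun ℝ (Fin n)).map (B.toLinearEquiv' hinv) with hbbdef
    have hbbi : ∀ i, bb i = B.mulVec (Pi.single i 1) := by
      intro i
      simp [hbbdef, Matrix.toLinearEquiv', Matrix.toLin'_apply]
    set L : Submodule ℤ (Fin n → ℝ) := Submodule.span ℤ (Set.range ⇑bb) with hLdef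
    -- the lattice `Λ` is the ℤ-span of the basis `bb`
    have hmul : ∀ z : Fin n → ℤ, (B.mulVec fun i => (z i : ℝ)) = ∑ i, z i • bb i := by
      intro z
      funext j
      rw [Finset.sum_apply]
      simp only [hbbi, Matrix.mulVec_single, mul_one, Pi.smul_apply, zsmul_eq_mul]
      simp [Matrix.mulVec, dotProduct, mul_comm]
    have hΛL : Λ = (L : Set (Fin n → ℝ)) := by
      rw [hΛ]
      ext x
      constructor
      · rintro ⟨z, rfl⟩
        rw [hmul]
        exact Submodule.sum_mem _ fun i _ =>
          Submodule.smul_mem _ (z i) (Submodule.subset_span (Set.mem_range_self i))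
      · intro hx
        refine Submodule.span_induction ?_ ?_ ?_ ?_ hx
        · rintro y ⟨i, rfl⟩
          refine ⟨Pi.single i 1, ?_⟩
          have : (fun j => ((Pi.single i 1 : Fin n → ℤ) j : ℝ)) =
              (Pi.single i 1 : Fin n → ℝ) := by
            funext j
            rcases eq_or_ne j i with rfl | hj
            · simp
            · simp [Pi.single_apply, hj]
          rw [this, ← hbbi]
        · refine ⟨0, ?_⟩
          have : (fun j => ((0 : Fin n → ℤ) j : ℝ)) = (0 : Fin n → ℝ) := by
            funext j; simp
          rw [this, Matrix.mulVec_zero]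
        · rintro y₁ y₂ - - ⟨z₁, rfl⟩ ⟨z₂, rfl⟩
          refine ⟨z₁ + z₂, ?_⟩
          have : (fun j => (((z₁ + z₂) j : ℤ) : ℝ)) =
              (fun j => (z₁ j : ℝ)) + fun j => (z₂ j : ℝ) := by
            funext j; simp
          rw [this, Matrix.mulVec_add]
        · rintro c y - ⟨z, rfl⟩
          refine ⟨c • z, ?_⟩
          have : (fun j => (((c • z) j : ℤ) : ℝ)) =
              (c : ℝ) • fun j => (z j : ℝ) := by
            funext j; simp
          rw [this, Matrix.mulVec_smul, Int.cast_smul_eq_zsmul]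
    set F : Set (Fin n → ℝ) := ZSpan.fundamentalDomain bb with hFdef
    have hFvol : volume F = ENNReal.ofReal |B.det| := by
      rw [hFdef, ZSpan.volume_fundamentalDomain]
      congr 2
      rw [← Matrix.det_transpose B]
      congr 1
      ext i j
      simp [hbbi i]
    set A : Set (Fin n → ℝ) := μ • K with hAdef
    have hAcpt : IsCompact A := by
      rw [hAdef, ← Set.image_smul]
      exact hKcpt.image (continuous_const_smul μ)
    have hAmeas : ∀ g : Fin n → ℝ, MeasurableSet (g +ᵥ A) := by
      intro g
      rw [← Set.image_vadd]
      exact (hAcpt.image (continuous_add_left g)).measurableSet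
    -- pointwise multiplicity bound
    have hpt : ∀ x : Fin n → ℝ, (s : ℝ≥0∞) ≤
        ∑' g : L, ((g : Fin n → ℝ) +ᵥ A).indicator (fun _ => (1 : ℝ≥0∞)) x := by
      intro x
      obtain ⟨b, hbinj, hb⟩ := hcov x
      have hbL : ∀ i, b i ∈ L := fun i => by
        have := (hb i).1
        rwa [hΛL] at this
      set f : Fin s → L := fun i => ⟨b i, hbL i⟩ with hfdef
      have hfinj : Function.Injective f := fun i j hij => hbinj (congrArg Subtype.val hij)
      have hmem : ∀ i, x ∈ (b i : Fin n → ℝ) +ᵥ A := by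
        intro i
        obtain ⟨y, hy, hxy⟩ := (hb i).2
        exact ⟨μ • y, Set.smul_mem_smul_set hy, by rw [hxy]; rfl⟩
      calc (s : ℝ≥0∞) = ∑ i : Fin s, ((f i : Fin n → ℝ) +ᵥ A).indicator
            (fun _ => (1 : ℝ≥0∞)) x := by
            simp only [hfdef]
            rw [Finset.sum_congr rfl (fun i _ => Set.indicator_of_mem (hmem i) _)]
            simp
        _ = ∑ g ∈ Finset.univ.image f, ((g : Fin n → ℝ) +ᵥ A).indicator
            (fun _ => (1 : ℝ≥0∞)) x := by
            rw [Finset.sum_image (fun a _ b _ h => hfinj h)]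
        _ ≤ _ := ENNReal.sum_le_tsum _
    -- fundamental domain computation
    haveI : MeasurableVAdd L (Fin n → ℝ) :=
      { measurable_const_vadd := fun c => measurable_const.add measurable_id,
        measurable_vadd_const :=
          fun x => (measurable_id.add measurable_const).comp measurable_subtype_coe }
    haveI : VAddInvariantMeasure L (Fin n → ℝ) volume :=
      ⟨fun c t _ => measure_preimage_add volume (c : Fin n → ℝ) t⟩
    have hFD := ZSpan.isAddFundamentalDomain bb volume
    have hFmeas : MeasurableSet F := ZSpan.fundamentalDomain_measurableSet bb
    have hkey : (s : ℝ≥0∞) * volume F ≤ volume A := by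
      have h1 : ∀ g : L, volume (((g : Fin n → ℝ) +ᵥ A) ∩ F) =
          ∫⁻ x in F, ((g : Fin n → ℝ) +ᵥ A).indicator (fun _ => (1 : ℝ≥0∞)) x := by
        intro g
        have h2 : ∫⁻ x in F, ((g : Fin n → ℝ) +ᵥ A).indicator (fun _ => (1 : ℝ≥0∞)) x =
            (volume.restrict F) ((g : Fin n → ℝ) +ᵥ A) := lintegral_indicator_one (hAmeas g)
        rw [h2, Measure.restrict_apply (hAmeas g)]
      calc (s : ℝ≥0∞) * volume F = ∫⁻ _ in F, (s : ℝ≥0∞) := by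
            rw [setLIntegral_const, mul_comm]
        _ ≤ ∫⁻ x in F, ∑' g : L, ((g : Fin n → ℝ) +ᵥ A).indicator
              (fun _ => (1 : ℝ≥0∞)) x := lintegral_mono fun x => hpt x
        _ = ∑' g : L, ∫⁻ x in F, ((g : Fin n → ℝ) +ᵥ A).indicator
              (fun _ => (1 : ℝ≥0∞)) x := by
            exact lintegral_tsum fun g => (measurable_const.indicator (hAmeas g)).aemeasurable
        _ = ∑' g : L, volume (((g : Fin n → ℝ) +ᵥ A) ∩ F) := by
            exact tsum_congr fun g => (h1 g).symm
        _ = volume A := (hFD.measure_eq_tsum A).symm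
    have hAvol : volume A = ENNReal.ofReal |μ ^ Module.finrank ℝ (Fin n → ℝ)| * volume K := by
      rw [hAdef, Measure.addHaar_smul]
    have hfinrank : Module.finrank ℝ (Fin n → ℝ) = n := by simp
    set vK : ℝ := (volume K).toReal with hvKdef
    have hKne : volume K ≠ ⊤ := hKcpt.measure_lt_top.ne
    have hKpos : 0 < volume K := Measure.measure_pos_of_nonempty_interior _ hKint
    have hvKpos : 0 < vK := ENNReal.toReal_pos hKpos.ne' hKne
    -- real inequality: s * |det B| ≤ μ^n * vol K
    have hreal : (s : ℝ) * |B.det| ≤ μ ^ n * vK := by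
      have h2 : (s : ℝ≥0∞) * ENNReal.ofReal |B.det| ≤
          ENNReal.ofReal (μ ^ n) * volume K := by
        rw [← hFvol]
        calc (s : ℝ≥0∞) * volume F ≤ volume A := hkey
          _ = ENNReal.ofReal (μ ^ n) * volume K := by
              rw [hAvol, hfinrank, abs_of_pos (pow_pos hμpos n)]
      have h3 := ENNReal.toReal_mono (by
          exact ENNReal.mul_ne_top ENNReal.ofReal_ne_top hKne) h2
      rwa [ENNReal.toReal_mul, ENNReal.toReal_mul, ENNReal.toReal_natCast,
        ENNReal.toReal_ofReal (abs_nonneg _), ENNReal.toReal_ofReal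
        (by positivity)] at h3
    have key : (s : ℝ) * (|B.det| / vK) ≤ μ ^ n := by
      rw [← mul_div_assoc, div_le_iff₀ hvKpos]
      exact hreal
    -- take n-th roots
    have hsd : (0 : ℝ) ≤ (s : ℝ) * (|B.det| / vK) := by positivity
    have hmono := Real.rpow_le_rpow hsd key (by positivity : (0:ℝ) ≤ 1 / (n:ℝ))
    rw [Real.mul_rpow (by positivity) (by positivity)] at hmono
    calc (s : ℝ) ^ ((1:ℝ)/(n:ℝ)) * (|B.det| / vK) ^ ((1:ℝ)/(n:ℝ)) ≤
        (μ ^ n) ^ ((1:ℝ)/(n:ℝ)) := hmono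
      _ = μ := by
          rw [← Real.rpow_natCast μ n, ← Real.rpow_mul hμpos.le,
            mul_one_div_cancel hn0, Real.rpow_one]
end

section
/- Let s ≥ 1 be an integer, let K ⊆ ℝ^n be a convex body (a compact convex set with non-empty interior) and let Λ ⊆ ℝ^n be a full-rank lattice. Then the s-covering radius satisfies the upper bound μ_s(K, Λ) ≤ μ_1(K, Λ) + (s−1)^{1/n} · (det Λ / vol K)^{1/n}, where μ_1(K, Λ) is the classical covering radius, vol K is the n-dimensional Lebesgue measure of K and det Λ is the covolume of Λ. -/
open MeasureTheory Set Submodule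
open scoped Pointwise ENNReal

/-- Multi-point Blichfeldt: if `μ M > (s-1) · μ F` for a fundamental domain `F` of the
countable subgroup `L`, then there are `s` distinct elements of `L` whose translates of `M`
have a common point. -/
theorem multi_blichfeldt {E : Type*} [AddCommGroup E] [MeasurableSpace E] {μ : Measure E}
    {F M : Set E} {L : AddSubgroup E} [Countable L] [MeasurableSpace L] [MeasurableVAdd L E]
    [VAddInvariantMeasure L E μ]
    (fund : IsAddFundamentalDomain L F μ) (hF : MeasurableSet F)
    (hM : ∀ g : L, MeasurableSet (g +ᵥ M))
    {s : ℕ} (hs : 1 ≤ s) (h : ((s - 1 : ℕ) : ℝ≥0∞) * μ F < μ M) :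
    ∃ (l : Fin s → L) (x : E), Function.Injective l ∧ ∀ i, x ∈ (l i) +ᵥ M := by
  classical
  by_contra hc
  push_neg at hc
  refine absurd ?_ h.not_ge
  calc μ M = ∑' g : L, μ ((g +ᵥ M) ∩ F) := fund.measure_eq_tsum M
    _ = ∑' g : L, ∫⁻ x, ((g +ᵥ M) ∩ F).indicator 1 x ∂μ :=
        tsum_congr fun g => (lintegral_indicator_one ((hM g).inter hF)).symm
    _ = ∫⁻ x, ∑' g : L, ((g +ᵥ M) ∩ F).indicator 1 x ∂μ :=
        (lintegral_tsum fun g =>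
          (measurable_one.indicator ((hM g).inter hF)).aemeasurable).symm
    _ ≤ ∫⁻ x, F.indicator (fun _ => ((s - 1 : ℕ) : ℝ≥0∞)) x ∂μ := ?_
    _ = ((s - 1 : ℕ) : ℝ≥0∞) * μ F := lintegral_indicator_const hF _
  refine lintegral_mono fun x => ?_
  by_cases hx : x ∈ F
  · rw [Set.indicator_of_mem hx, ENNReal.tsum_eq_iSup_sum]
    refine iSup_le fun T => ?_
    have hsum : (∑ g ∈ T, ((g +ᵥ M) ∩ F).indicator (1 : E → ℝ≥0∞) x)
        = ((T.filter fun g => x ∈ (g +ᵥ M) ∩ F).card : ℝ≥0∞) := by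
      rw [← Finset.sum_boole]
      exact Finset.sum_congr rfl fun g _ => by simp [Set.indicator_apply]
    rw [hsum]
    have hcard : (T.filter fun g => x ∈ (g +ᵥ M) ∩ F).card ≤ s - 1 := by
      by_contra hgt
      push_neg at hgt
      obtain ⟨t, htsub, htcard⟩ :=
        Finset.exists_subset_card_eq (s := T.filter fun g => x ∈ (g +ᵥ M) ∩ F) (n := s) (by omega)
      set e : Fin s ≃ t := (t.equivFin.trans (finCongr htcard)).symm with he
      obtain ⟨i, hi⟩ := hc (fun i => ((e i : t) : L)) x
        (fun i j hij => e.injective (Subtype.ext hij))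
      exact hi (Finset.mem_filter.mp (htsub (e i).2)).2.1
    exact_mod_cast Nat.cast_le.mpr hcard
  · rw [Set.indicator_of_notMem hx]
    exact le_of_eq (ENNReal.tsum_eq_zero.mpr fun g =>
      Set.indicator_of_notMem (fun hmem => hx hmem.2) _)

set_option maxHeartbeats 1000000 in
/-- **Upper bound for the s-covering radius** (Lemma 1 in Aliev–Fukshansky–Henk).
Let `K ⊆ ℝⁿ` be a convex body, `Λ = B·ℤⁿ` a full-rank lattice, `μ₁` the classical
covering radius and `μ` the `s`-covering radius of `K` with respect to `Λ`. Then
`μ ≤ μ₁ + (s-1)^(1/n) * (det Λ / vol K)^(1/n)`. -/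
theorem sCoveringRadius_upper_bound {n s : ℕ} (hs : 1 ≤ s)
    (K : Set (Fin n → ℝ)) (hKcpt : IsCompact K) (hKconv : Convex ℝ K)
    (hKint : (interior K).Nonempty)
    (B : Matrix (Fin n) (Fin n) ℝ) (hB : IsUnit B.det)
    (Λ : Set (Fin n → ℝ))
    (hΛ : Λ = {x | ∃ z : Fin n → ℤ, x = B.mulVec fun i => (z i : ℝ)})
    (μ μ₁ : ℝ)
    (hμ : IsLeast {r : ℝ | 0 < r ∧ ∀ t : Fin n → ℝ,
        ∃ b : Fin s → (Fin n → ℝ), Function.Injective b ∧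
          ∀ i, b i ∈ Λ ∧ ∃ x ∈ K, t = b i + r • x} μ)
    (hμ₁ : IsLeast {r : ℝ | 0 < r ∧ ∀ t : Fin n → ℝ,
        ∃ b : Fin 1 → (Fin n → ℝ), Function.Injective b ∧
          ∀ i, b i ∈ Λ ∧ ∃ x ∈ K, t = b i + r • x} μ₁) :
    μ ≤ μ₁ + ((s : ℝ) - 1) ^ ((1 : ℝ) / (n : ℝ)) *
        (|B.det| / (MeasureTheory.volume K).toReal) ^ ((1 : ℝ) / (n : ℝ)) := by
  classical
  rcases eq_or_lt_of_le hs with hs1 | hs2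
  · -- case s = 1 : μ = μ₁ and the extra term is nonnegative
    subst hs1
    have hμeq : μ = μ₁ := hμ.unique hμ₁
    have h1 : (0:ℝ) ≤ ((1:ℕ) - 1 : ℝ) ^ ((1 : ℝ) / (n : ℝ)) *
        (|B.det| / (MeasureTheory.volume K).toReal) ^ ((1 : ℝ) / (n : ℝ)) :=
      mul_nonneg (Real.rpow_nonneg (by norm_num) _) (Real.rpow_nonneg (by positivity) _)
    push_cast at h1 ⊢
    linarith
  · -- now 2 ≤ s
    rcases Nat.eq_zero_or_pos n with hn | hn
    · -- impossible: no s distinct points in ℝ⁰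
      exfalso
      subst hn
      obtain ⟨b, hbinj, -⟩ := hμ.1.2 0
      have h01 : (⟨0, by omega⟩ : Fin s) ≠ ⟨1, by omega⟩ := by
        simp [Fin.ext_iff]
      exact h01 (hbinj (Subsingleton.elim _ _))
    -- main case
    have hdpos : 0 < |B.det| := abs_pos.mpr (isUnit_iff_ne_zero.mp hB)
    have hKvolpos : 0 < volume K :=
      (isOpen_interior.measure_pos volume hKint).trans_le (measure_mono interior_subset)
    have hKvolne : volume K ≠ ⊤ := hKcpt.measure_lt_top.ne
    set d : ℝ := |B.det| with hd
    set VK : ℝ := (volume K).toReal with hVKdef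
    have hVKpos : 0 < VK := ENNReal.toReal_pos hKvolpos.ne' hKvolne
    have hμ₁pos : 0 < μ₁ := hμ₁.1.1
    set γ : ℝ := ((s : ℝ) - 1) ^ ((1 : ℝ) / (n : ℝ)) * (d / VK) ^ ((1 : ℝ) / (n : ℝ)) with hγdef
    have hs1R : (0:ℝ) < (s:ℝ) - 1 := by
      have : (2:ℝ) ≤ (s:ℝ) := by exact_mod_cast hs2
      linarith
    have hdVK : 0 < d / VK := div_pos hdpos hVKpos
    have hγpos : 0 < γ :=
      mul_pos (Real.rpow_pos_of_pos hs1R _) (Real.rpow_pos_of_pos hdVK _)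
    have hnR : ((n:ℝ)) ≠ 0 := by exact_mod_cast hn.ne'
    have hγn : γ ^ n = ((s:ℝ) - 1) * (d / VK) := by
      rw [hγdef, mul_pow, ← Real.rpow_natCast (((s:ℝ) - 1) ^ ((1 : ℝ) / (n : ℝ))) n,
        ← Real.rpow_natCast ((d / VK) ^ ((1 : ℝ) / (n : ℝ))) n,
        ← Real.rpow_mul hs1R.le, ← Real.rpow_mul hdVK.le,
        one_div, inv_mul_cancel₀ hnR, Real.rpow_one, Real.rpow_one]
    -- the lattice as a ℤ-span of the columns of B
    set bb : Module.Basis (Fin n) ℝ (Fin n → ℝ) :=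
      (Pi.basisFun ℝ (Fin n)).map (B.toLinearEquiv' (B.invertibleOfIsUnitDet hB)) with hbbdef
    have hbbi : ∀ i, bb i = B.mulVec (Pi.single i 1) := by
      intro i
      have : bb i = Matrix.toLin' B ((Pi.basisFun ℝ (Fin n)) i) := by
        rw [hbbdef, Module.Basis.map_apply]
        rfl
      rw [this, Pi.basisFun_apply, Matrix.toLin'_apply]
    have h_mulVec : ∀ w : Fin n → ℝ, B.mulVec w = ∑ i, w i • bb i := by
      intro w
      funext j
      simp only [Matrix.mulVec, dotProduct, Finset.sum_apply, Pi.smul_apply,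
        hbbi, Matrix.mulVec_single, smul_eq_mul, mul_one]
      exact Finset.sum_congr rfl fun i _ => by simp [Matrix.col_apply, mul_comm]
    set L : AddSubgroup (Fin n → ℝ) := (span ℤ (Set.range ⇑bb)).toAddSubgroup with hLdef
    have hΛL : Λ = (L : Set (Fin n → ℝ)) := by
      rw [hΛ]
      ext x
      simp only [Set.mem_setOf_eq, SetLike.mem_coe, hLdef, Submodule.mem_toAddSubgroup,
        mem_span_range_iff_exists_fun]
      constructor
      · rintro ⟨z, rfl⟩
        refine ⟨z, ?_⟩
        rw [h_mulVec]
        exact Finset.sum_congr rfl fun i _ => (Int.cast_smul_eq_zsmul ℝ (z i) (bb i)).symm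
      · rintro ⟨z, rfl⟩
        refine ⟨z, ?_⟩
        rw [h_mulVec]
        exact Finset.sum_congr rfl fun i _ => (Int.cast_smul_eq_zsmul ℝ (z i) (bb i)).symm
    have hFmeas : MeasurableSet (ZSpan.fundamentalDomain bb) :=
      ZSpan.fundamentalDomain_measurableSet bb
    have hFvol : volume (ZSpan.fundamentalDomain bb) = ENNReal.ofReal d := by
      have hof : (Matrix.of ⇑bb) = B.transpose := by
        ext i j
        simp [hbbi, Matrix.mulVec_single]
      rw [ZSpan.volume_fundamentalDomain, hof, Matrix.det_transpose]
    have hfund : IsAddFundamentalDomain L (ZSpan.fundamentalDomain bb) volume :=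
      ZSpan.isAddFundamentalDomain' bb volume
    haveI : Countable L := inferInstanceAs (Countable (span ℤ (Set.range ⇑bb)))
    haveI : MeasurableVAdd L (Fin n → ℝ) :=
      { measurable_const_vadd := fun c => measurable_const_add (c : Fin n → ℝ)
        measurable_vadd_const := fun x => measurable_subtype_coe.add_const x }
    -- reduce to an ε-perturbed bound
    refine le_of_forall_pos_le_add fun ε hε => ?_
    set c : ℝ := γ + ε with hcdef
    have hcpos : 0 < c := by positivity
    have hcγ : γ < c := lt_add_of_pos_right _ hε
    set r : ℝ := μ₁ + c with hrdef
    have hrpos : 0 < r := by positivity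
    have key : ∀ t : Fin n → ℝ, ∃ b : Fin s → (Fin n → ℝ), Function.Injective b ∧
        ∀ i, b i ∈ Λ ∧ ∃ x ∈ K, t = b i + r • x := by
      intro t
      set M : Set (Fin n → ℝ) := (fun x : Fin n → ℝ => t + (-c) • x) '' K with hMdef
      have hMcpt : IsCompact M :=
        hKcpt.image (continuous_const.add (continuous_const_smul _))
      have hMvadd : ∀ g : L, MeasurableSet (g +ᵥ M) := by
        intro g
        have himg : (g +ᵥ M : Set (Fin n → ℝ)) = ((g : Fin n → ℝ) + ·) '' M := by
          ext y
          constructor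
          · rintro ⟨m, hm, rfl⟩
            exact ⟨m, hm, rfl⟩
          · rintro ⟨m, hm, rfl⟩
            exact ⟨m, hm, rfl⟩
        rw [himg]
        exact ((hMcpt.image (continuous_const.add continuous_id)).isClosed).measurableSet
      have hMvol : volume M = ENNReal.ofReal (c ^ n) * volume K := by
        have himg : M = t +ᵥ ((-c) • K) := by
          rw [← Set.image_vadd, ← Set.image_smul, Set.image_image]
          rfl
        rw [himg, measure_vadd, Measure.addHaar_smul]
        congr 1
        rw [Module.finrank_fin_fun, abs_pow, abs_neg, abs_of_pos hcpos]
      have hlt : ((s - 1 : ℕ) : ℝ≥0∞) * volume (ZSpan.fundamentalDomain bb) < volume M := by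
        rw [hFvol, hMvol]
        have hcast : ((s - 1 : ℕ) : ℝ≥0∞) = ENNReal.ofReal ((s:ℝ) - 1) := by
          rw [← ENNReal.ofReal_natCast]
          congr 1
          push_cast [Nat.cast_sub hs]
          ring
        rw [hcast, ← ENNReal.ofReal_toReal hKvolne, ← hVKdef,
          ← ENNReal.ofReal_mul hs1R.le, ← ENNReal.ofReal_mul (by positivity)]
        refine (ENNReal.ofReal_lt_ofReal_iff (by positivity)).mpr ?_
        have h1 : γ ^ n < c ^ n := by
          apply pow_lt_pow_left₀ hcγ hγpos.le hn.ne'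
        have h2 : γ ^ n * VK = ((s:ℝ) - 1) * d := by
          rw [hγn]
          field_simp
        nlinarith
      obtain ⟨l, x, hlinj, hlmem⟩ := multi_blichfeldt hfund hFmeas hMvadd hs2.le hlt
      have hxu : ∀ i : Fin s, ∃ u, u ∈ K ∧ x = (l i : Fin n → ℝ) + (t + (-c) • u) := by
        intro i
        obtain ⟨m, hmM, hmx⟩ := Set.mem_vadd_set.mp (hlmem i)
        obtain ⟨u, huK, rfl⟩ := hmM
        refine ⟨u, huK, ?_⟩
        rw [← hmx, AddSubgroup.vadd_def, vadd_eq_add]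
      choose u huK hxeq using hxu
      set i0 : Fin s := ⟨0, by omega⟩ with hi0
      obtain ⟨b0, -, hb0⟩ := hμ₁.1.2 (x - (l i0 : Fin n → ℝ))
      obtain ⟨hb0Λ, v, hvK, hveq⟩ := hb0 0
      have hx0 : x = b0 0 + μ₁ • v + (l i0 : Fin n → ℝ) := sub_eq_iff_eq_add.mp hveq
      refine ⟨fun i => b0 0 + (l i0 : Fin n → ℝ) - (l i : Fin n → ℝ), ?_, ?_⟩
      · intro i j hij
        have hcoe : (l i : Fin n → ℝ) = (l j : Fin n → ℝ) := sub_right_injective hij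
        exact hlinj (Subtype.ext hcoe)
      · intro i
        constructor
        · have hb0L : b0 0 ∈ L := by
            rw [hΛL] at hb0Λ
            exact hb0Λ
          rw [hΛL]
          exact L.sub_mem (L.add_mem hb0L (l i0).2) (l i).2
        · refine ⟨(μ₁ / r) • v + (c / r) • u i, ?_, ?_⟩
          · refine hKconv hvK (huK i) (div_nonneg hμ₁pos.le hrpos.le)
              (div_nonneg hcpos.le hrpos.le) ?_
            rw [← add_div]
            exact div_self hrpos.ne'
          · have hr : r • ((μ₁ / r) • v + (c / r) • u i) = μ₁ • v + c • u i := by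
              rw [smul_add, smul_smul, smul_smul, mul_div_cancel₀ _ hrpos.ne',
                mul_div_cancel₀ _ hrpos.ne']
            have hxi := hxeq i
            simp only [neg_smul] at hxi
            have ht : t = x - (l i : Fin n → ℝ) + c • u i := by
              rw [hxi]; abel
            rw [hr, ht, hx0]
            module
    have hle : μ ≤ r := hμ.2 ⟨hrpos, key⟩
    calc μ ≤ r := hle
      _ = μ₁ + γ + ε := by rw [hrdef, hcdef]; ring
end

section
/- Let s ≥ 1 be an integer, let K ⊆ ℝ^n be a convex body (a compact convex set with non-empty interior) and let Λ ⊆ ℝ^n be a full-rank lattice. Then μ_s(K, Λ) ≤ (1 + ((n!)^{1/n}/n)·(s−1)^{1/n}) · (λ_1(K,Λ) + λ_2(K,Λ) + … + λ_n(K,Λ)), where λ_i(K,Λ) are the successive minima of K with respect to Λ. -/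
open Pointwise

open MeasureTheory Set Pointwise

noncomputable def flr {n : ℕ} (w : Fin n → ℝ) : Fin n → ℤ := fun i => ⌊w i⌋

def cell {n : ℕ} (z : Fin n → ℤ) : Set (Fin n → ℝ) :=
  Set.univ.pi fun i => Set.Ico (z i : ℝ) (z i + 1)

lemma mem_cell_iff {n : ℕ} (z : Fin n → ℤ) (w : Fin n → ℝ) :
    w ∈ cell z ↔ flr w = z := by
  simp only [cell, Set.mem_pi, Set.mem_univ, forall_true_left, Set.mem_Ico, flr, funext_iff]
  constructor
  · intro h i
    exact Int.floor_eq_iff.mpr ⟨(h i).1, (h i).2⟩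
  · intro h i
    have := h i
    exact ⟨by simpa [← this] using Int.floor_le (w i),
           by simpa [← this] using Int.lt_floor_add_one (w i)⟩

lemma measurable_cell {n : ℕ} (z : Fin n → ℤ) : MeasurableSet (cell z) :=
  MeasurableSet.univ_pi fun i => measurableSet_Ico

lemma volume_cell {n : ℕ} (z : Fin n → ℤ) : volume (cell z) = 1 := by
  rw [cell, volume_pi_pi]
  simp [Real.volume_Ico]

lemma cell_count {n : ℕ} (hn : 0 < n) (M : Set (Fin n → ℝ)) (hM : M.Nonempty)
    (hc : IsCompact M) :
    ∃ Z : Finset (Fin n → ℤ), (volume M).toReal < Z.card ∧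
      ∀ z ∈ Z, ∃ m ∈ M, flr m = z := by
  classical
  have hMmeas : MeasurableSet M := hc.isClosed.measurableSet
  obtain ⟨R, hR⟩ := hc.isBounded.exists_norm_le
  have hfin : (flr '' M).Finite := by
    apply Set.Finite.subset
      (Set.Finite.pi (fun i : Fin n => Set.finite_Icc (⌊-R⌋) (⌊R⌋)))
    rintro z ⟨m, hm, rfl⟩ i _
    have h1 : |m i| ≤ R := (norm_le_pi_norm m i).trans (hR m hm)
    rw [abs_le] at h1
    exact ⟨Int.floor_le_floor h1.1, Int.floor_le_floor h1.2⟩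
  refine ⟨hfin.toFinset, ?_, ?_⟩
  swap
  · intro z hz
    rw [Set.Finite.mem_toFinset] at hz
    obtain ⟨m, hm, rfl⟩ := hz
    exact ⟨m, hm, rfl⟩
  have hZne : hfin.toFinset.Nonempty := by
    obtain ⟨m, hm⟩ := hM
    exact ⟨flr m, hfin.mem_toFinset.mpr ⟨m, hm, rfl⟩⟩
  -- decomposition
  have hdecomp : M = ⋃ z ∈ hfin.toFinset, M ∩ cell z := by
    ext w
    constructor
    · intro hw
      exact Set.mem_biUnion (hfin.mem_toFinset.mpr ⟨w, hw, rfl⟩)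
        ⟨hw, (mem_cell_iff _ _).mpr rfl⟩
    · rintro hw
      simp only [Set.mem_iUnion] at hw
      obtain ⟨z, _, hw, _⟩ := hw
      exact hw
  have hsum : volume M = ∑ z ∈ hfin.toFinset, volume (M ∩ cell z) := by
    calc volume M = volume (⋃ z ∈ hfin.toFinset, M ∩ cell z) := by rw [← hdecomp]
    _ = ∑ z ∈ hfin.toFinset, volume (M ∩ cell z) := by
        apply measure_biUnion_finset
        · intro z hz z' hz' hne
          apply Set.disjoint_left.mpr
          rintro w ⟨_, hw1⟩ ⟨_, hw2⟩
          exact hne (((mem_cell_iff _ _).mp hw1).symm.trans ((mem_cell_iff _ _).mp hw2))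
        · exact fun z _ => hMmeas.inter (measurable_cell z)
  have hfin1 : ∀ z ∈ hfin.toFinset, volume (M ∩ cell z) ≤ 1 := fun z _ =>
    (measure_mono Set.inter_subset_right).trans (volume_cell z).le
  by_contra hcon
  push_neg at hcon
  -- every cell is full
  have hfull : ∀ z ∈ hfin.toFinset, (1 : ENNReal) ≤ volume (M ∩ cell z) := by
    by_contra hnot
    push_neg at hnot
    obtain ⟨z₀, hz₀, hlt⟩ := hnot
    have hsumlt : ∑ z ∈ hfin.toFinset, (volume (M ∩ cell z)).toReal
        < hfin.toFinset.card := by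
      have h2 : ∑ z ∈ hfin.toFinset, (volume (M ∩ cell z)).toReal
          < ∑ z ∈ hfin.toFinset, (1:ℝ) := by
        apply Finset.sum_lt_sum
        · intro z hz
          exact ENNReal.toReal_le_of_le_ofReal zero_le_one (by simpa using hfin1 z hz)
        · refine ⟨z₀, hz₀, ?_⟩
          have hne : volume (M ∩ cell z₀) ≠ ⊤ :=
            ne_top_of_le_ne_top ENNReal.one_ne_top (hfin1 z₀ hz₀)
          have := (ENNReal.toReal_lt_toReal hne ENNReal.one_ne_top).mpr hlt
          simpa using this
      simpa using h2
    have heq : (volume M).toReal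
        = ∑ z ∈ hfin.toFinset, (volume (M ∩ cell z)).toReal := by
      rw [hsum, ENNReal.toReal_sum]
      intro z hz
      exact ne_top_of_le_ne_top ENNReal.one_ne_top (hfin1 z hz)
    rw [heq] at hcon
    exact absurd hsumlt (not_lt.mpr hcon)
  -- full cells are contained in M (via their open interior)
  have hsub : ∀ z ∈ hfin.toFinset, (fun i => (z i : ℝ) + 1) ∈ M := by
    intro z hz
    set U : Set (Fin n → ℝ) := Set.univ.pi fun i => Set.Ioo (z i : ℝ) (z i + 1) with hU
    have hUopen : IsOpen U := isOpen_set_pi Set.finite_univ (fun i _ => isOpen_Ioo)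
    have hUM : U ⊆ M := by
      by_contra hns
      obtain ⟨u, hu, hum⟩ := Set.not_subset.mp hns
      have hopen2 : IsOpen (U \ M) := hUopen.sdiff hc.isClosed
      have hpos : 0 < volume (U \ M) := hopen2.measure_pos volume ⟨u, hu, hum⟩
      have hdisj : Disjoint (U \ M) (M ∩ cell z) :=
        Set.disjoint_left.mpr (fun w hw hw2 => hw.2 hw2.1)
      have hunion : volume (U \ M) + volume (M ∩ cell z) ≤ 1 := by
        rw [← measure_union hdisj (hMmeas.inter (measurable_cell z))]
        refine (measure_mono ?_).trans (volume_cell z).le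
        rintro w (⟨hw, _⟩ | hw)
        · intro i _
          exact ⟨le_of_lt (hw i (Set.mem_univ i)).1, (hw i (Set.mem_univ i)).2⟩
        · exact hw.2
      have hle1 : volume (U \ M) + 1 ≤ 1 :=
        le_trans (add_le_add_right (hfull z hz) _) hunion
      have h2 : (1:ENNReal) < volume (U \ M) + 1 := by
        rw [add_comm]
        exact ENNReal.lt_add_right ENNReal.one_ne_top hpos.ne'
      exact absurd (lt_of_lt_of_le h2 hle1) (lt_irrefl 1)
    have hclos : closure U ⊆ M := hc.isClosed.closure_subset_iff.mpr hUM
    apply hclos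
    have hcl : closure U = Set.univ.pi fun i => Set.Icc (z i : ℝ) (z i + 1) := by
      rw [hU, closure_pi_set]
      refine Set.pi_congr rfl fun i _ => ?_
      exact closure_Ioo (by norm_num)
    rw [hcl]
    intro i _
    exact Set.mem_Icc.mpr ⟨by norm_num, le_rfl⟩
  -- corner of max cell gives contradiction
  obtain ⟨zm, hzm, hmax⟩ := hfin.toFinset.exists_max_image (fun z => ∑ i, z i) hZne
  have hcorner : flr (fun i => (zm i : ℝ) + 1) = fun i => zm i + 1 := by
    funext i
    rw [flr]
    norm_num
  have hmem : (fun i => zm i + 1) ∈ hfin.toFinset := by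
    rw [Set.Finite.mem_toFinset]
    exact ⟨_, hsub zm hzm, hcorner⟩
  have := hmax _ hmem
  simp only [Finset.sum_add_distrib, Finset.sum_const, Finset.card_univ,
    Fintype.card_fin, nsmul_eq_mul, mul_one] at this
  omega

lemma core {m : ℕ} (Q : Set (Fin (m+1) → ℝ)) (hQc : IsCompact Q) (hQconv : Convex ℝ Q)
    (p : Fin (m+1) → ℝ) (hp : p ∈ Q) (hp1 : p + Pi.single (Fin.last m) 1 ∈ Q) :
    volume ((fun q (j : Fin m) => q j.castSucc) '' Q)
      ≤ (m+1 : ENNReal) * volume Q := by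
  classical
  have hQmeas : MeasurableSet Q := hQc.isClosed.measurableSet
  set π : (Fin (m+1) → ℝ) → (Fin m → ℝ) := fun q (j : Fin m) => q j.castSucc with hπ
  set base : Set (Fin m → ℝ) := π '' Q with hbase
  have hπcont : Continuous π := continuous_pi fun j => continuous_apply _
  have hbc : IsCompact base := hQc.image hπcont
  set e := MeasurableEquiv.piFinSuccAbove (fun _ : Fin (m+1) => ℝ) (Fin.last m) with he
  have hefwd : ∀ q : Fin (m+1) → ℝ, e q = (q (Fin.last m), fun j => q j.castSucc) := by
    intro q
    simp [he, MeasurableEquiv.piFinSuccAbove, Fin.succAbove_last]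
    rfl
  have hesymm : ∀ (t : ℝ) (u : Fin m → ℝ), e.symm (t, u) = Fin.snoc u t := by
    intro t u
    apply e.injective
    rw [e.apply_symm_apply, hefwd]
    refine Prod.ext ?_ ?_
    · simp
    · funext j
      simp
  have heQ : MeasurableSet (⇑e '' Q) := e.measurableSet_image.mpr hQmeas
  set ℓ : (Fin m → ℝ) → ENNReal := fun u => volume ((fun t => (t, u)) ⁻¹' (⇑e '' Q))
    with hℓ
  have hslice : ∀ u, ℓ u = volume {t : ℝ | Fin.snoc u t ∈ Q} := by
    intro u
    have hseteq : ((fun t => (t, u)) ⁻¹' (⇑e '' Q)) = {t : ℝ | Fin.snoc u t ∈ Q} := by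
      ext t
      simp only [Set.mem_preimage, Set.mem_setOf_eq]
      constructor
      · rintro ⟨q, hq, hqe⟩
        have : e.symm (t, u) = q := by rw [← hqe]; exact e.symm_apply_apply q
        rw [hesymm] at this
        rwa [← this] at hq
      · intro h
        refine ⟨Fin.snoc u t, h, ?_⟩
        rw [← hesymm]
        exact e.apply_symm_apply _
    show volume _ = _
    rw [hseteq]
  have hℓmeas : Measurable ℓ := measurable_measure_prodMk_right heQ
  -- volume Q = ∫ ℓ
  have hvolQ : volume Q = ∫⁻ u, ℓ u := by
    have mp := measurePreserving_piFinSuccAbove (fun _ : Fin (m+1) => (volume : Measure ℝ))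
      (Fin.last m)
    have h1 : volume Q = (volume.prod volume) (⇑e '' Q) := by
      have := mp.measure_preimage (s := ⇑e '' Q) heQ.nullMeasurableSet
      rw [Set.preimage_image_eq Q e.injective] at this
      rw [← MeasureTheory.volume_pi] at this
      exact this
    rw [h1, Measure.prod_apply_symm heQ]
  -- the vertical segment estimate
  set u₀ : Fin m → ℝ := fun j => p j.castSucc with hu₀
  have c1 : ∀ τ ∈ Set.Icc (0:ℝ) 1, ∀ u ∈ base,
      ENNReal.ofReal (1 - τ) ≤ ℓ (u₀ + τ • (u - u₀)) := by
    rintro τ ⟨hτ0, hτ1⟩ u ⟨q, hq, hqu⟩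
    rcases eq_or_lt_of_le hτ1 with rfl | hτlt
    · simp
    rw [hslice]
    set b : ℝ := (1-τ) * p (Fin.last m) + τ * q (Fin.last m) with hb
    have hIcc : Set.Icc b (b + (1-τ)) ⊆ {t : ℝ | Fin.snoc (u₀ + τ • (u - u₀)) t ∈ Q} := by
      rintro t ⟨ht1, ht2⟩
      set σ := t - b with hσ
      have hσ0 : 0 ≤ σ := by simp [hσ]; linarith
      have hσ1 : σ ≤ 1 - τ := by simp [hσ]; linarith
      set c := σ / (1-τ) with hc
      have hc0 : 0 ≤ c := div_nonneg hσ0 (by linarith)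
      have hc1 : c ≤ 1 := (div_le_one (by linarith)).mpr hσ1
      have hP1 : p + c • (Pi.single (Fin.last m) 1 : Fin (m+1) → ℝ) ∈ Q := by
        have := hQconv hp hp1 (by linarith : (0:ℝ) ≤ 1 - c) hc0 (by ring)
        convert this using 1
        module
      have hTot : (1-τ) • (p + c • (Pi.single (Fin.last m) 1 : Fin (m+1) → ℝ)) + τ • q ∈ Q :=
        hQconv hP1 hq (by linarith) (by linarith) (by ring)
      have hEq : (1-τ) • (p + c • (Pi.single (Fin.last m) 1 : Fin (m+1) → ℝ)) + τ • q
          = Fin.snoc (u₀ + τ • (u - u₀)) t := by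
        funext k
        refine Fin.lastCases ?_ ?_ k
        · simp only [Pi.add_apply, Pi.smul_apply, smul_eq_mul, Fin.snoc_last,
            Pi.single_eq_same]
          have h1τ : (1:ℝ) - τ ≠ 0 := by linarith
          have : (1-τ) * c = σ := by
            rw [hc, mul_div_assoc']
            exact mul_div_cancel_left₀ σ h1τ
          nlinarith [this]
        · intro j
          simp only [Pi.add_apply, Pi.smul_apply, smul_eq_mul, Fin.snoc_castSucc,
            Pi.sub_apply]
          rw [Pi.single_eq_of_ne (by simp [Fin.ext_iff]; omega : j.castSucc ≠ Fin.last m)]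
          rw [hu₀, ← hqu]
          simp [hπ]
          ring
      simp only [Set.mem_setOf_eq]
      rw [← hEq]
      exact hTot
    calc ENNReal.ofReal (1-τ) = volume (Set.Icc b (b + (1-τ))) := by
          rw [Real.volume_Icc]; ring_nf
      _ ≤ _ := measure_mono hIcc
  -- double counting
  set ν : Measure ℝ := volume.restrict (Set.Ioo (0:ℝ) 1) with hν
  set SS : Set ((Fin m → ℝ) × ℝ) := {y | ENNReal.ofReal (1 - y.2) ≤ ℓ y.1} with hSS
  have hSSmeas : MeasurableSet SS := by
    apply measurableSet_le
    · exact (ENNReal.measurable_ofReal.comp ((measurable_const.sub measurable_snd)))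
    · exact hℓmeas.comp measurable_fst
  have claim1 : ∀ u, ν {τ | (u, τ) ∈ SS} ≤ ℓ u := by
    intro u
    rcases le_or_gt 1 (ℓ u) with h1 | h1
    · calc ν {τ | (u, τ) ∈ SS} ≤ ν Set.univ := measure_mono (Set.subset_univ _)
        _ ≤ 1 := by
            rw [hν, Measure.restrict_apply_univ, Real.volume_Ioo]
            simp
        _ ≤ ℓ u := h1
    · have hne : ℓ u ≠ ⊤ := (h1.trans ENNReal.one_lt_top).ne
      have hsub : {τ | (u, τ) ∈ SS} ∩ Set.Ioo 0 1 ⊆ Set.Icc (1 - (ℓ u).toReal) 1 := by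
        rintro τ ⟨hτS, hτI⟩
        simp only [hSS, Set.mem_setOf_eq] at hτS
        have : 1 - τ ≤ (ℓ u).toReal := by
          rw [← ENNReal.ofReal_toReal hne] at hτS
          exact (ENNReal.ofReal_le_ofReal_iff ENNReal.toReal_nonneg).mp hτS
        exact ⟨by linarith, hτI.2.le⟩
      calc ν {τ | (u, τ) ∈ SS} = volume ({τ | (u, τ) ∈ SS} ∩ Set.Ioo 0 1) := by
            rw [hν, Measure.restrict_apply]
            exact measurable_prodMk_left hSSmeas
        _ ≤ volume (Set.Icc (1 - (ℓ u).toReal) 1) := measure_mono hsub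
        _ = ENNReal.ofReal ((ℓ u).toReal) := by rw [Real.volume_Icc]; ring_nf
        _ = ℓ u := ENNReal.ofReal_toReal hne
  have claim2 : ∀ τ ∈ Set.Ioo (0:ℝ) 1,
      ENNReal.ofReal (τ^m) * volume base ≤ volume {u | (u, τ) ∈ SS} := by
    intro τ hτ
    set v0 : Fin m → ℝ := (1-τ) • u₀ with hv0
    have hsub : (v0 +ᵥ (τ • base) : Set (Fin m → ℝ)) ⊆ {u | (u, τ) ∈ SS} := by
      rintro w ⟨w', ⟨u, hu, rfl⟩, rfl⟩
      show ENNReal.ofReal (1 - τ) ≤ ℓ _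
      have hc1 := c1 τ ⟨hτ.1.le, hτ.2.le⟩ u hu
      convert hc1 using 2
      show v0 + τ • u = u₀ + τ • (u - u₀)
      rw [hv0]
      module
    calc ENNReal.ofReal (τ^m) * volume base
        = volume (v0 +ᵥ (τ • base) : Set (Fin m → ℝ)) := by
          rw [measure_vadd, Measure.addHaar_smul, Module.finrank_fintype_fun_eq_card,
            Fintype.card_fin, abs_of_nonneg (pow_nonneg hτ.1.le m)]
      _ ≤ _ := measure_mono hsub
  have hgmeas : Measurable (fun τ => volume {u | (u, τ) ∈ SS}) :=
    measurable_measure_prodMk_right hSSmeas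
  have hIint : ∫⁻ τ in Set.Ioo (0:ℝ) 1, ENNReal.ofReal (τ^m)
      = ENNReal.ofReal (1/(m+1)) := by
    rw [← ofReal_integral_eq_lintegral_ofReal]
    · congr 1
      rw [← integral_Ioc_eq_integral_Ioo, ← intervalIntegral.integral_of_le zero_le_one,
        integral_pow]
      push_cast
      norm_num
    · have h1 : IntervalIntegrable (fun τ : ℝ => τ^m) volume 0 1 :=
        intervalIntegral.intervalIntegrable_pow m
      have h2 := (intervalIntegrable_iff_integrableOn_Ioc_of_le zero_le_one).mp h1
      exact h2.mono_set Set.Ioo_subset_Ioc_self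
    · filter_upwards [ae_restrict_mem measurableSet_Ioo] with τ hτ
      exact pow_nonneg hτ.1.le m
  have hmain : volume base * ENNReal.ofReal (1/(m+1)) ≤ volume Q := by
    rw [hvolQ]
    have step1 : volume base * ENNReal.ofReal (1/(m+1))
        = ∫⁻ τ in Set.Ioo (0:ℝ) 1, ENNReal.ofReal (τ^m) * volume base := by
      rw [lintegral_mul_const _ ((continuous_pow m).measurable.ennreal_ofReal),
        hIint, mul_comm]
    have step2 : ∫⁻ τ in Set.Ioo (0:ℝ) 1, ENNReal.ofReal (τ^m) * volume base
        ≤ ∫⁻ τ in Set.Ioo (0:ℝ) 1, volume {u | (u, τ) ∈ SS} := by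
      apply setLIntegral_mono_ae hgmeas.aemeasurable
      filter_upwards with τ hτ
      exact claim2 τ hτ
    have step3 : ∫⁻ τ in Set.Ioo (0:ℝ) 1, volume {u | (u, τ) ∈ SS}
        = (volume.prod ν) SS := by
      rw [Measure.prod_apply_symm hSSmeas]
      rfl
    have step4 : (volume.prod ν) SS = ∫⁻ u, ν {τ | (u, τ) ∈ SS} := by
      rw [Measure.prod_apply hSSmeas]
      rfl
    calc volume base * ENNReal.ofReal (1/(m+1))
        = ∫⁻ τ in Set.Ioo (0:ℝ) 1, ENNReal.ofReal (τ^m) * volume base := step1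
      _ ≤ ∫⁻ τ in Set.Ioo (0:ℝ) 1, volume {u | (u, τ) ∈ SS} := step2
      _ = (volume.prod ν) SS := step3
      _ = ∫⁻ u, ν {τ | (u, τ) ∈ SS} := step4
      _ ≤ ∫⁻ u, ℓ u := lintegral_mono claim1
  -- conclude
  have hone : ((m:ENNReal)+1) * ENNReal.ofReal (1/(m+1)) = 1 := by
    have : ((m:ENNReal)+1) = ENNReal.ofReal ((m:ℝ)+1) := by
      rw [ENNReal.ofReal_add (by positivity) zero_le_one]
      simp [ENNReal.ofReal_natCast]
    rw [this, ← ENNReal.ofReal_mul (by positivity)]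
    rw [show ((m:ℝ)+1) * (1/(m+1)) = 1 by field_simp]
    exact ENNReal.ofReal_one
  calc volume base = volume base * (((m:ENNReal)+1) * ENNReal.ofReal (1/(m+1))) := by
        rw [hone, mul_one]
    _ = ((m:ENNReal)+1) * (volume base * ENNReal.ofReal (1/(m+1))) := by ring
    _ ≤ ((m:ENNReal)+1) * volume Q := by
        exact mul_le_mul_right hmain _

lemma NL : ∀ (m : ℕ) (Q : Set (Fin m → ℝ)), IsCompact Q → Convex ℝ Q → Q.Nonempty →
    ∀ (x y : Fin m → (Fin m → ℝ)), (∀ i, x i ∈ Q) → (∀ i, y i ∈ Q) →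
    (∀ i, x i - y i = Pi.single i 1) →
    1 ≤ (m.factorial : ENNReal) * volume Q := by
  intro m
  induction m with
  | zero =>
    intro Q _ _ hne x y _ _ _
    have hQu : Q = Set.univ := by
      ext w
      simp only [Set.mem_univ, iff_true]
      obtain ⟨q, hq⟩ := hne
      rwa [Subsingleton.elim w q]
    have hvol : (volume : Measure (Fin 0 → ℝ)) Set.univ = 1 := by
      rw [show (Set.univ : Set (Fin 0 → ℝ)) = Set.univ.pi (fun _ => Set.univ) from
        (Set.pi_univ _).symm, volume_pi_pi]
      simp
    rw [hQu, hvol]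
    simp [Nat.factorial]
  | succ m IH =>
    intro Q hc hconv hne x y hx hy hxy
    set π : (Fin (m+1) → ℝ) → (Fin m → ℝ) := fun q (j : Fin m) => q j.castSucc with hπ
    have hπcont : Continuous π := continuous_pi fun j => continuous_apply _
    set base : Set (Fin m → ℝ) := π '' Q with hbase
    have hbc : IsCompact base := hc.image hπcont
    have hbconv : Convex ℝ base := by
      have : base = (LinearMap.funLeft ℝ ℝ Fin.castSucc) '' Q := rfl
      rw [this]
      exact hconv.linear_image _
    have hbne : base.Nonempty := hne.image π
    set xb : Fin m → (Fin m → ℝ) := fun j => π (x j.castSucc) with hxb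
    set yb : Fin m → (Fin m → ℝ) := fun j => π (y j.castSucc) with hyb
    have hdiffb : ∀ j, xb j - yb j = Pi.single j 1 := by
      intro j
      funext k
      have h1 : (x j.castSucc - y j.castSucc) k.castSucc
          = (Pi.single (j.castSucc) 1 : Fin (m+1) → ℝ) k.castSucc := by rw [hxy]
      simp only [Pi.sub_apply] at h1
      simp only [Pi.sub_apply, hxb, hyb, hπ]
      rw [h1]
      rcases eq_or_ne j k with rfl | hne'
      · simp
      · rw [Pi.single_eq_of_ne (fun h => hne' ((Fin.castSucc_inj.mp h).symm)),
          Pi.single_eq_of_ne (Ne.symm hne')]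
    have hIH := IH base hbc hbconv hbne xb yb
      (fun j => Set.mem_image_of_mem π (hx j.castSucc))
      (fun j => Set.mem_image_of_mem π (hy j.castSucc)) hdiffb
    have hp1 : y (Fin.last m) + Pi.single (Fin.last m) (1:ℝ) ∈ Q := by
      have hxl : x (Fin.last m) = y (Fin.last m) + Pi.single (Fin.last m) 1 := by
        have := hxy (Fin.last m)
        rw [← this]
        abel
      rw [← hxl]
      exact hx _
    have hcore := core Q hc hconv (y (Fin.last m)) (hy _) hp1
    calc (1:ENNReal) ≤ (m.factorial : ENNReal) * volume base := hIH
      _ ≤ (m.factorial : ENNReal) * ((m+1 : ENNReal) * volume Q) :=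
          mul_le_mul_right hcore _
      _ = ((m+1).factorial : ENNReal) * volume Q := by
          rw [Nat.factorial_succ]
          push_cast
          ring

lemma DL {n : ℕ} (Q : Set (Fin n → ℝ)) (hc : IsCompact Q) (hconv : Convex ℝ Q)
    (hne : Q.Nonempty) (x y : Fin n → (Fin n → ℝ)) (hx : ∀ i, x i ∈ Q)
    (hy : ∀ i, y i ∈ Q) :
    ENNReal.ofReal |(Matrix.of fun i j => x i j - y i j).det|
      ≤ (n.factorial : ENNReal) * volume Q := by
  classical
  set A : Matrix (Fin n) (Fin n) ℝ := Matrix.of (fun i j => x j i - y j i) with hA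
  have hAt : (Matrix.of fun i j => x i j - y i j).det = A.det := by
    rw [← Matrix.det_transpose A]
    congr 1
  rw [hAt]
  by_cases hdet : A.det = 0
  · rw [hdet]
    simp
  · have hunit : IsUnit A.det := isUnit_iff_ne_zero.mpr hdet
    set g : (Fin n → ℝ) →ₗ[ℝ] (Fin n → ℝ) := Matrix.toLin' A⁻¹ with hg
    have hginv : ∀ v, g (Matrix.toLin' A v) = v := by
      intro v
      rw [hg, ← LinearMap.comp_apply, ← Matrix.toLin'_mul,
        Matrix.nonsing_inv_mul A hunit, Matrix.toLin'_one]
      rfl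
    have hwA : ∀ i, x i - y i = Matrix.toLin' A (Pi.single i 1) := by
      intro i
      funext j
      rw [Matrix.toLin'_apply]
      rw [Matrix.mulVec_single]
      simp [hA]
    have hgw : ∀ i, g (x i) - g (y i) = Pi.single i 1 := by
      intro i
      rw [← map_sub, hwA, hginv]
    have hgcont : Continuous g := g.continuous_of_finiteDimensional
    have hNL := NL n (g '' Q) (hc.image hgcont) (hconv.linear_image g) (hne.image g)
      (fun i => g (x i)) (fun i => g (y i))
      (fun i => Set.mem_image_of_mem g (hx i))
      (fun i => Set.mem_image_of_mem g (hy i)) hgw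
    have hvol : volume (⇑g '' Q) = ENNReal.ofReal |A.det|⁻¹ * volume Q := by
      rw [Measure.addHaar_image_linearMap]
      congr 2
      rw [hg, LinearMap.det_toLin', Matrix.det_nonsing_inv, Ring.inverse_eq_inv, abs_inv]
    rw [hvol] at hNL
    have hpos : 0 < |A.det| := abs_pos.mpr hdet
    have hcancel : ENNReal.ofReal |A.det| * ENNReal.ofReal |A.det|⁻¹ = 1 := by
      rw [← ENNReal.ofReal_mul hpos.le, mul_inv_cancel₀ hpos.ne', ENNReal.ofReal_one]
    calc ENNReal.ofReal |A.det| = ENNReal.ofReal |A.det| * 1 := (mul_one _).symm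
      _ ≤ ENNReal.ofReal |A.det|
          * ((n.factorial : ENNReal) * (ENNReal.ofReal |A.det|⁻¹ * volume Q)) :=
          mul_le_mul_right hNL _
      _ = (ENNReal.ofReal |A.det| * ENNReal.ofReal |A.det|⁻¹)
          * ((n.factorial : ENNReal) * volume Q) := by ring
      _ = (n.factorial : ENNReal) * volume Q := by rw [hcancel, one_mul]

lemma minima_extract {n : ℕ} (C Λ : Set (Fin n → ℝ)) (lam : Fin n → ℝ)
    (hlam : ∀ i : Fin n,
      (i : ℕ) + 1 ≤ Module.finrank ℝ (Submodule.span ℝ ((lam i • C) ∩ Λ))) :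
    ∃ v : Fin n → (Fin n → ℝ), LinearIndependent ℝ v ∧ ∀ i, v i ∈ (lam i • C) ∩ Λ := by
  classical
  suffices h : ∀ k : ℕ, (hk : k ≤ n) → ∃ v : Fin k → (Fin n → ℝ),
      LinearIndependent ℝ v ∧
      ∀ j : Fin k, v j ∈ (lam ⟨j, lt_of_lt_of_le j.isLt hk⟩ • C) ∩ Λ by
    obtain ⟨v, hv1, hv2⟩ := h n le_rfl
    exact ⟨v, hv1, fun i => by simpa using hv2 ⟨i, i.isLt⟩⟩
  intro k
  induction k with
  | zero =>
    intro _
    exact ⟨Fin.elim0, linearIndependent_empty_type, fun j => j.elim0⟩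
  | succ k IH =>
    intro hk
    obtain ⟨v, hv1, hv2⟩ := IH (Nat.le_of_succ_le hk)
    set i : Fin n := ⟨k, hk⟩ with hi
    have hrank : Module.finrank ℝ (Submodule.span ℝ (Set.range v)) ≤ k := by
      have h1 := finrank_span_le_card (R := ℝ) (Set.range v)
      have h2 : (Set.range v).toFinset.card ≤ k := by
        rw [Set.toFinset_range]
        exact (Finset.card_image_le).trans (by simp)
      exact h1.trans h2
    have hex : ∃ u ∈ (lam i • C) ∩ Λ, u ∉ Submodule.span ℝ (Set.range v) := by
      by_contra hno
      push_neg at hno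
      have hle : Submodule.span ℝ ((lam i • C) ∩ Λ) ≤ Submodule.span ℝ (Set.range v) :=
        Submodule.span_le.mpr hno
      have := (Submodule.finrank_mono hle).trans hrank
      have hlami := hlam i
      simp only [hi] at hlami this
      omega
    obtain ⟨u, hu1, hu2⟩ := hex
    refine ⟨Fin.snoc v u, linearIndependent_fin_snoc.mpr ⟨hv1, hu2⟩, ?_⟩
    intro j
    refine Fin.lastCases ?_ ?_ j
    · simpa using hu1
    · intro j'
      have := hv2 j'
      simpa using this

/-- **The s-covering radius is bounded by the successive minima**
(Proposition in Aliev–Fukshansky–Henk). Let `K ⊆ ℝⁿ` be a convex body, `Λ = B·ℤⁿ`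
a full-rank lattice, `μ` the `s`-covering radius of `K` with respect to `Λ` and
`lam i` the `i`-th successive minimum `λ_{i+1}(K, Λ)` (the least `l > 0` such that
`l•(K - K) ∩ Λ` spans a subspace of dimension at least `i+1`). Then
`μ ≤ (1 + ((n!)^(1/n)/n) * (s-1)^(1/n)) * (λ₁ + ⋯ + λ_n)`. -/
theorem sCoveringRadius_le_sum_successive_minima {n s : ℕ} (hs : 1 ≤ s)
    (K : Set (Fin n → ℝ)) (hKcpt : IsCompact K) (hKconv : Convex ℝ K)
    (hKint : (interior K).Nonempty)
    (B : Matrix (Fin n) (Fin n) ℝ) (hB : IsUnit B.det)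
    (Λ : Set (Fin n → ℝ))
    (hΛ : Λ = {x | ∃ z : Fin n → ℤ, x = B.mulVec fun i => (z i : ℝ)})
    (μ : ℝ)
    (hμ : IsLeast {r : ℝ | 0 < r ∧ ∀ t : Fin n → ℝ,
        ∃ b : Fin s → (Fin n → ℝ), Function.Injective b ∧
          ∀ i, b i ∈ Λ ∧ ∃ x ∈ K, t = b i + r • x} μ)
    (lam : Fin n → ℝ)
    (hlam : ∀ i : Fin n, IsLeast {l : ℝ | 0 < l ∧
        (i : ℕ) + 1 ≤ Module.finrank ℝ (Submodule.span ℝ ((l • (K - K)) ∩ Λ))} (lam i)) :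
    μ ≤ (1 + ((n.factorial : ℝ) ^ ((1 : ℝ) / (n : ℝ)) / (n : ℝ)) *
          ((s : ℝ) - 1) ^ ((1 : ℝ) / (n : ℝ))) * ∑ i, lam i := by
  classical
  rcases Nat.eq_zero_or_pos n with hn0 | hn
  · -- degenerate case n = 0 : the covering set has no least element
    exfalso
    subst hn0
    obtain ⟨⟨hμpos, hcov⟩, hlb⟩ := hμ
    have hhalf : μ/2 ∈ {r : ℝ | 0 < r ∧ ∀ t : Fin 0 → ℝ,
        ∃ b : Fin s → (Fin 0 → ℝ), Function.Injective b ∧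
          ∀ i, b i ∈ Λ ∧ ∃ x ∈ K, t = b i + r • x} := by
      refine ⟨by linarith, ?_⟩
      intro t
      obtain ⟨b, hbi, hb⟩ := hcov t
      refine ⟨b, hbi, fun i => ?_⟩
      obtain ⟨hbΛ, x, hx, _⟩ := hb i
      exact ⟨hbΛ, x, hx, Subsingleton.elim _ _⟩
    have := hlb hhalf
    linarith
  -- main case
  have hnR : (0:ℝ) < n := by exact_mod_cast hn
  have hKne : K.Nonempty := ⟨hKint.choose, interior_subset hKint.choose_spec⟩
  have lampos : ∀ i, 0 < lam i := fun i => (hlam i).1.1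
  set ρ : ℝ := ∑ i, lam i with hρdef
  have hρ : 0 < ρ := Finset.sum_pos (fun i _ => lampos i)
    (Finset.univ_nonempty_iff.mpr (Fin.pos_iff_nonempty.mp hn))
  set ε : ℝ := (n.factorial : ℝ) ^ ((1 : ℝ) / (n : ℝ)) / (n : ℝ)
      * ((s : ℝ) - 1) ^ ((1 : ℝ) / (n : ℝ)) with hεdef
  have hs1 : (0:ℝ) ≤ (s:ℝ) - 1 := by
    have : (1:ℝ) ≤ s := by exact_mod_cast hs
    linarith
  have hε : 0 ≤ ε := by
    apply mul_nonneg
    · apply div_nonneg (Real.rpow_nonneg (by positivity) _) hnR.le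
    · exact Real.rpow_nonneg hs1 _
  set r : ℝ := (1 + ε) * ρ with hrdef
  have hrpos : 0 < r := by
    apply mul_pos _ hρ
    linarith
  set δ : ℝ := ε * ρ with hδdef
  have hδ0 : 0 ≤ δ := mul_nonneg hε hρ.le
  have hrρδ : r = ρ + δ := by rw [hrdef, hδdef]; ring
  -- extract linearly independent lattice vectors
  obtain ⟨v, hvLI, hvmem⟩ := minima_extract (K - K) Λ lam (fun i => (hlam i).1.2)
  have hvΛ : ∀ i, v i ∈ Λ := fun i => (hvmem i).2
  have hvdec : ∀ i, ∃ xy : (Fin n → ℝ) × (Fin n → ℝ),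
      xy.1 ∈ K ∧ xy.2 ∈ K ∧ v i = lam i • (xy.1 - xy.2) := by
    intro i
    obtain ⟨d, hd, hdv⟩ := (hvmem i).1
    obtain ⟨a, ha, b, hb, hab⟩ := Set.mem_sub.mp hd
    exact ⟨(a, b), ha, hb, by rw [← hdv, ← hab]⟩
  choose xy hxx hyy hv using hvdec
  set xx : Fin n → (Fin n → ℝ) := fun i => (xy i).1 with hxxdef
  set yy : Fin n → (Fin n → ℝ) := fun i => (xy i).2 with hyydef
  -- the basis from v
  haveI : Nonempty (Fin n) := Fin.pos_iff_nonempty.mp hn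
  have hcard : Fintype.card (Fin n) = Module.finrank ℝ (Fin n → ℝ) := by
    simp [Module.finrank_fintype_fun_eq_card]
  set bV : Module.Basis (Fin n) ℝ (Fin n → ℝ) :=
    basisOfLinearIndependentOfCardEqFinrank hvLI hcard with hbVdef
  have hbV : ∀ i, bV i = v i := fun i => by
    rw [hbVdef, coe_basisOfLinearIndependentOfCardEqFinrank]
  -- apply least property
  refine hμ.2 ⟨hrpos, ?_⟩
  intro t
  set x₀ : Fin n → ℝ := ∑ i, lam i • yy i with hx₀def
  set c : Fin n → ℝ := t - x₀ with hcdef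
  -- Fact A
  have factA : ∀ θ : Fin n → ℝ, (∀ i, 0 ≤ θ i ∧ θ i ≤ 1) →
      x₀ + ∑ i, θ i • v i ∈ ρ • K := by
    intro θ hθ
    have heq : x₀ + ∑ i, θ i • v i
        = ∑ i, lam i • ((1 - θ i) • yy i + θ i • xx i) := by
      rw [hx₀def, ← Finset.sum_add_distrib]
      refine Finset.sum_congr rfl fun i _ => ?_
      rw [hv i]
      module
    rw [heq]
    have hmem : ∀ i, ((1 - θ i) • yy i + θ i • xx i) ∈ K := fun i =>
      hKconv (hyy i) (hxx i) (by linarith [(hθ i).2]) (hθ i).1 (by ring)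
    -- sum of lam-scaled elements of K lies in ρ • K
    have : (∑ i, lam i • ((1 - θ i) • yy i + θ i • xx i))
        = ρ • ∑ i, (lam i / ρ) • ((1 - θ i) • yy i + θ i • xx i) := by
      rw [Finset.smul_sum]
      refine Finset.sum_congr rfl fun i _ => ?_
      rw [smul_smul, mul_div_cancel₀ _ hρ.ne']
    rw [this]
    refine Set.smul_mem_smul_set ?_
    apply hKconv.sum_mem
    · exact fun i _ => div_nonneg (lampos i).le hρ.le
    · rw [← Finset.sum_div, ← hρdef, div_self hρ.ne']
    · exact fun i _ => hmem i
  -- lattice membership of integer combinations of v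
  have hΛsum : ∀ cz : Fin n → ℤ, (∑ i, (cz i : ℝ) • v i) ∈ Λ := by
    intro cz
    have hvB : ∀ i, ∃ ζ : Fin n → ℤ, v i = B.mulVec fun k => (ζ k : ℝ) := by
      intro i
      have := hvΛ i
      rw [hΛ] at this
      exact this
    choose ζ hζ using hvB
    rw [hΛ]
    refine ⟨fun k => ∑ i, cz i * ζ i k, ?_⟩
    have : ∑ i, (cz i : ℝ) • v i
        = ∑ i, (cz i : ℝ) • B.mulVecLin (fun k => (ζ i k : ℝ)) := by
      refine Finset.sum_congr rfl fun i _ => ?_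
      rw [hζ i]
      rfl
    have h2 : ∑ i, (cz i : ℝ) • B.mulVecLin (fun k => (ζ i k : ℝ))
        = B.mulVecLin (∑ i, (cz i : ℝ) • (fun k => (ζ i k : ℝ))) := by
      rw [map_sum]
      exact Finset.sum_congr rfl fun i _ => (map_smul _ _ _).symm
    rw [this, h2]
    have harg : (∑ i, (cz i : ℝ) • (fun k => (ζ i k : ℝ)))
        = fun k => ((∑ i, cz i * ζ i k : ℤ) : ℝ) := by
      funext k
      rw [Finset.sum_apply]
      push_cast
      simp [Pi.smul_apply]
    rw [Matrix.mulVecLin_apply, harg]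
  -- the region M and its image under coordinates
  set M : Set (Fin n → ℝ) := (fun w => c + (-δ) • w) '' K with hMdef
  have hMne : M.Nonempty := hKne.image _
  have hMcpt : IsCompact M := hKcpt.image
    (continuous_const.add (continuous_id.const_smul (-δ)))
  have hMvol : volume M = ENNReal.ofReal (δ^n) * volume K := by
    have h1 : M = c +ᵥ ((-δ) • K) := by
      ext m
      simp only [hMdef, Set.mem_image, Set.mem_vadd_set, Set.mem_smul_set, vadd_eq_add]
      constructor
      · rintro ⟨k, hk, rfl⟩
        exact ⟨(-δ) • k, ⟨k, hk, rfl⟩, rfl⟩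
      · rintro ⟨w, ⟨k, hk, rfl⟩, rfl⟩
        exact ⟨k, hk, rfl⟩
    rw [h1, measure_vadd, Measure.addHaar_smul, Module.finrank_fintype_fun_eq_card,
      Fintype.card_fin, abs_pow, abs_neg, abs_of_nonneg hδ0]
  set f : (Fin n → ℝ) →ₗ[ℝ] (Fin n → ℝ) := bV.equivFun.toLinearMap with hfdef
  set M' : Set (Fin n → ℝ) := f '' M with hM'def
  have hM'ne : M'.Nonempty := hMne.image f
  have hM'cpt : IsCompact M' := hMcpt.image f.continuous_of_finiteDimensional
  have hM'vol : volume M' = ENNReal.ofReal |LinearMap.det f| * volume M :=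
    Measure.addHaar_image_linearMap volume f M
  -- determinants
  set W : Matrix (Fin n) (Fin n) ℝ := Matrix.of (fun i j => xx i j - yy i j) with hWdef
  have hDL : ENNReal.ofReal |W.det| ≤ (n.factorial : ENNReal) * volume K :=
    DL K hKcpt hKconv hKne xx yy hxx hyy
  set g : (Fin n → ℝ) →ₗ[ℝ] (Fin n → ℝ) := bV.equivFun.symm.toLinearMap with hgdef
  set Vrow : Matrix (Fin n) (Fin n) ℝ := Matrix.of (fun i j => v i j) with hVrowdef
  have hgsingle : ∀ j, g (Pi.single j 1) = v j := by
    intro j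
    show bV.equivFun.symm (Pi.single j 1) = v j
    rw [Module.Basis.equivFun_symm_apply]
    rw [Finset.sum_eq_single j]
    · rw [Pi.single_eq_same, one_smul, hbV]
    · intro i _ hi
      rw [Pi.single_eq_of_ne hi, zero_smul]
    · intro h
      exact absurd (Finset.mem_univ j) h
  have hdetg : LinearMap.det g = Vrow.det := by
    rw [← LinearMap.det_toMatrix' g]
    have h2 : LinearMap.toMatrix' g = Vrow.transpose := by
      ext i j
      rw [LinearMap.toMatrix'_apply]
      have : (fun j' => if j' = j then (1:ℝ) else 0) = Pi.single j 1 := by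
        funext j'
        rw [Pi.single_apply]
      rw [hgsingle]
      rfl
    rw [h2, Matrix.det_transpose]
  have hfg : LinearMap.det f * Vrow.det = 1 := by
    rw [← hdetg, ← LinearMap.det_comp]
    have hid : f ∘ₗ g = LinearMap.id := by
      apply LinearMap.ext
      intro w
      simp [hfdef, hgdef]
    rw [hid, LinearMap.det_id]
  have hVdet0 : Vrow.det ≠ 0 := by
    intro h0
    rw [h0, mul_zero] at hfg
    exact zero_ne_one hfg
  have hVpos : 0 < |Vrow.det| := abs_pos.mpr hVdet0
  have habsf : |LinearMap.det f| = |Vrow.det|⁻¹ := by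
    have : LinearMap.det f = (Vrow.det)⁻¹ := eq_inv_of_mul_eq_one_left hfg
    rw [this, abs_inv]
  have hVrowW : Vrow.det = (∏ i, lam i) * W.det := by
    have h1 : Vrow = Matrix.of (fun i j => lam i * W i j) := by
      ext i j
      show v i j = lam i * W i j
      rw [hv i]
      rfl
    rw [h1, ← Matrix.det_transpose]
    have h2 : (Matrix.of (fun i j => lam i * W i j)).transpose
        = Matrix.of (fun i j => lam j * W.transpose i j) := rfl
    rw [h2, Matrix.det_mul_row, Matrix.det_transpose]
  -- real volume facts
  have hKvolfin : volume K ≠ ⊤ := hKcpt.measure_lt_top.ne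
  set volKr : ℝ := (volume K).toReal with hvolKrdef
  have hvolKpos : 0 < volKr := by
    have h0 : 0 < volume K :=
      lt_of_lt_of_le (isOpen_interior.measure_pos volume hKint) (measure_mono interior_subset)
    exact ENNReal.toReal_pos h0.ne' hKvolfin
  have hWle : |W.det| ≤ (n.factorial : ℝ) * volKr := by
    have hfin : ((n.factorial : ENNReal) * volume K) ≠ ⊤ :=
      ENNReal.mul_ne_top (ENNReal.natCast_ne_top _) hKvolfin
    have := ENNReal.toReal_mono hfin hDL
    rwa [ENNReal.toReal_ofReal (abs_nonneg _), ENNReal.toReal_mul, ENNReal.toReal_natCast]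
      at this
  -- AM-GM
  have hprodlam : (∏ i, lam i) ≤ (ρ/n)^n := by
    have hgm := Real.geom_mean_le_arith_mean_weighted Finset.univ (fun _ => 1/(n:ℝ)) lam
      (fun i _ => by positivity)
      (by rw [Finset.sum_const, Finset.card_univ, Fintype.card_fin, nsmul_eq_mul]
          field_simp)
      (fun i _ => (lampos i).le)
    have hRHS : ∑ i, (1/(n:ℝ)) * lam i = ρ/n := by
      rw [← Finset.mul_sum, ← hρdef]
      ring
    rw [hRHS] at hgm
    have hpow := pow_le_pow_left₀
      (Finset.prod_nonneg fun i _ => Real.rpow_nonneg (lampos i).le _) hgm n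
    rw [← Finset.prod_pow] at hpow
    have hcanc : ∀ i : Fin n, (lam i ^ ((1:ℝ)/(n:ℝ)))^n = lam i := by
      intro i
      rw [← Real.rpow_natCast (lam i ^ ((1:ℝ)/(n:ℝ))) n, ← Real.rpow_mul (lampos i).le,
        one_div, inv_mul_cancel₀ (ne_of_gt hnR), Real.rpow_one]
    calc (∏ i, lam i) = ∏ i, (lam i ^ ((1:ℝ)/(n:ℝ)))^n :=
          (Finset.prod_congr rfl fun i _ => (hcanc i)).symm
      _ ≤ (ρ/n)^n := hpow
  have hεpow : ε^n = (n.factorial : ℝ) * ((s:ℝ)-1) / (n:ℝ)^n := by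
    rw [hεdef, mul_pow, div_pow,
      ← Real.rpow_natCast ((n.factorial:ℝ) ^ ((1:ℝ)/(n:ℝ))) n,
      ← Real.rpow_mul (by positivity),
      ← Real.rpow_natCast (((s:ℝ)-1) ^ ((1:ℝ)/(n:ℝ))) n,
      ← Real.rpow_mul hs1,
      one_div, inv_mul_cancel₀ (ne_of_gt hnR), Real.rpow_one, Real.rpow_one]
    ring
  have hkey : ((s:ℝ)-1) * |Vrow.det| ≤ δ^n * volKr := by
    have h1 : |Vrow.det| = (∏ i, lam i) * |W.det| := by
      rw [hVrowW, abs_mul, abs_of_nonneg (Finset.prod_nonneg fun i _ => (lampos i).le)]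
    rw [h1]
    have h2 : ((s:ℝ)-1) * ((∏ i, lam i) * |W.det|)
        ≤ ((s:ℝ)-1) * ((ρ/n)^n * ((n.factorial:ℝ) * volKr)) := by
      apply mul_le_mul_of_nonneg_left _ hs1
      exact mul_le_mul hprodlam hWle (abs_nonneg _) (by positivity)
    refine h2.trans (le_of_eq ?_)
    rw [hδdef, mul_pow, hεpow, div_pow]
    field_simp
  have hM'big : (s:ℝ) - 1 ≤ (volume M').toReal := by
    have hMfin : volume M ≠ ⊤ := hMcpt.measure_lt_top.ne
    have h2 : (volume M').toReal = |Vrow.det|⁻¹ * (δ^n * volKr) := by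
      rw [hM'vol, hMvol, ENNReal.toReal_mul, ENNReal.toReal_mul,
        ENNReal.toReal_ofReal (abs_nonneg _), ENNReal.toReal_ofReal (by positivity),
        habsf, hvolKrdef]
    rw [h2, inv_mul_eq_div, le_div_iff₀ hVpos]
    exact hkey
  -- counting
  obtain ⟨Z, hZvol, hZmem⟩ := cell_count hn M' hM'ne hM'cpt
  have hZcard : s ≤ Z.card := by
    have h1 : (s:ℝ) - 1 < Z.card := lt_of_le_of_lt hM'big hZvol
    have h2 : (s:ℝ) < (Z.card : ℝ) + 1 := by linarith
    exact_mod_cast Nat.lt_succ_iff.mp (by exact_mod_cast h2)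
  have hLlen : s ≤ Z.toList.length := by rwa [Finset.length_toList]
  set zfun : Fin s → (Fin n → ℤ) := fun idx => Z.toList.get (Fin.castLE hLlen idx)
    with hzfundef
  have hzinj : Function.Injective zfun := by
    intro a a' hab
    have hnodup := Z.nodup_toList
    have h1 := (List.nodup_iff_injective_get).mp hnodup hab
    have h2 : (Fin.castLE hLlen a : ℕ) = (Fin.castLE hLlen a' : ℕ) := by rw [h1]
    exact Fin.ext h2
  have hzZ : ∀ idx, zfun idx ∈ Z := fun idx => by
    rw [← Finset.mem_toList]
    exact List.get_mem _ _
  have hsum_eq : ∀ z : Fin n → ℤ, (∑ i, (z i : ℝ) • v i)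
      = bV.equivFun.symm (fun i => (z i : ℝ)) := by
    intro z
    rw [Module.Basis.equivFun_symm_apply]
    exact Finset.sum_congr rfl fun i _ => by rw [hbV]
  set b : Fin s → (Fin n → ℝ) := fun idx => ∑ i, ((zfun idx i : ℝ)) • v i with hbdef
  have hbinj : Function.Injective b := by
    intro a a' h
    apply hzinj
    rw [hbdef] at h
    simp only at h
    rw [hsum_eq, hsum_eq] at h
    have h2 := bV.equivFun.symm.injective h
    funext i
    exact_mod_cast congrFun h2 i
  refine ⟨b, hbinj, ?_⟩
  intro idx
  refine ⟨hΛsum _, ?_⟩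
  obtain ⟨m', hm'M', hflr⟩ := hZmem (zfun idx) (hzZ idx)
  obtain ⟨m, hmM, rfl⟩ := hm'M'
  obtain ⟨k, hkK, hmk⟩ := hmM
  set z : Fin n → ℤ := zfun idx with hzdef
  have hθ : ∀ i, 0 ≤ (f m) i - (z i : ℝ) ∧ (f m) i - (z i : ℝ) < 1 := by
    intro i
    have h1 : z i = ⌊(f m) i⌋ := by rw [← hflr]; rfl
    constructor
    · rw [h1]
      have := Int.floor_le ((f m) i)
      linarith
    · rw [h1]
      have := Int.lt_floor_add_one ((f m) i)
      linarith
  have hm : m = ∑ i, (f m) i • v i := by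
    have h1 : (∑ i, (f m) i • v i) = bV.equivFun.symm (f m) := by
      rw [Module.Basis.equivFun_symm_apply]
      exact Finset.sum_congr rfl fun i _ => by rw [hbV]
    rw [h1]
    exact (bV.equivFun.symm_apply_apply m).symm
  have hdiff : m - b idx = ∑ i, ((f m) i - (z i : ℝ)) • v i := by
    rw [hbdef]
    simp only
    rw [← hzdef]
    calc m - ∑ i, ((z i : ℝ)) • v i = (∑ i, (f m) i • v i) - ∑ i, ((z i : ℝ)) • v i := by
          rw [← hm]
      _ = ∑ i, ((f m) i - (z i : ℝ)) • v i := by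
          rw [← Finset.sum_sub_distrib]
          exact Finset.sum_congr rfl fun i _ => (sub_smul _ _ _).symm
  have hmeq : m = c + (-δ) • k := hmk.symm
  have ht : t - b idx = (x₀ + ∑ i, ((f m) i - (z i : ℝ)) • v i) + δ • k := by
    have h3 : t - b idx = (m - b idx) + (t - m) := by abel
    rw [h3, hdiff, hmeq, hcdef]
    module
  have hmemρ := factA (fun i => (f m) i - (z i : ℝ)) (fun i => ⟨(hθ i).1, (hθ i).2.le⟩)
  have hmemr : t - b idx ∈ r • K := by
    rw [ht, hrρδ, hKconv.add_smul hρ.le hδ0]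
    exact Set.add_mem_add hmemρ (Set.smul_mem_smul_set hkK)
  obtain ⟨kk, hkk, hkkeq⟩ := hmemr
  refine ⟨kk, hkk, ?_⟩
  have : t - b idx = r • kk := hkkeq.symm
  linear_combination (norm := module) this
end

section
/- Let n ≥ 2 and s ≥ 1 be integers and let a = (a_1,…,a_n) be a vector of positive integers with gcd(a_1,…,a_n) = 1. Then the integral s-covering radius satisfies μ_s(S_a, Λ_a; ℤ^{n-1}) = F_s(a) + a_n, where μ_s(S_a, Λ_a; ℤ^{n-1}) = min{ρ > 0 : for every z ∈ ℤ^{n-1}, the set (z + ρ·S_a) ∩ Λ_a contains at least s points}. -/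
private lemma aux_exists_inj {α : Type*} {S : Set α} (h : S.Finite) {k : ℕ}
    (h1 : k ≤ S.ncard) : ∃ g : Fin k → α, Function.Injective g ∧ ∀ j, g j ∈ S := by
  have h1' : k ≤ h.toFinset.card := by rwa [Set.ncard_eq_toFinset_card _ h] at h1
  obtain ⟨t, hts, htcard⟩ := Finset.exists_subset_card_eq h1'
  refine ⟨fun j => ((t.equivFin.symm (Fin.cast htcard.symm j) : {x // x ∈ t}) : α),
    ?_, fun j => ?_⟩
  · intro j j' hh
    have h2 := t.equivFin.symm.injective (Subtype.ext hh)
    have h3 := congrArg Fin.val h2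
    exact Fin.ext h3
  · have hmem : ((t.equivFin.symm (Fin.cast htcard.symm j) : {x // x ∈ t}) : α) ∈ t :=
      (t.equivFin.symm _).2
    have := hts hmem
    rwa [Set.Finite.mem_toFinset] at this

private lemma aux_le_ncard {α : Type*} {S : Set α} (h : S.Finite) {k : ℕ} (g : Fin k → α)
    (hg : Function.Injective g) (hmem : ∀ j, g j ∈ S) : k ≤ S.ncard := by
  have h2 : (Set.range g).ncard = k := by
    rw [← Nat.card_coe_set_eq, Nat.card_range_of_injective hg, Nat.card_eq_fintype_card,
      Fintype.card_fin]
  rw [← h2]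
  exact Set.ncard_le_ncard (by rintro _ ⟨j, rfl⟩; exact hmem j) h

private lemma aux_residue {m : ℕ} (a : Fin (m+1) → ℕ) (hgcd : Finset.univ.gcd a = 1) :
    ∀ c : ℤ, ∃ (z : Fin m → ℤ) (k : ℤ),
      ∑ i, (a (Fin.castSucc i) : ℤ) * z i + k * (a (Fin.last m) : ℤ) = c := by
  set H : Set ℤ := {x | ∃ (z : Fin m → ℤ) (k : ℤ),
    ∑ i, (a (Fin.castSucc i) : ℤ) * z i + k * (a (Fin.last m) : ℤ) = x} with hH
  have hzero : (0:ℤ) ∈ H := ⟨0, 0, by simp⟩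
  have hmul : ∀ x ∈ H, ∀ e : ℤ, x * e ∈ H := by
    rintro x ⟨z1, k1, h1⟩ e
    refine ⟨fun i => z1 i * e, k1 * e, ?_⟩
    have hsum : ∑ i, (a (Fin.castSucc i) : ℤ) * (z1 i * e)
        = (∑ i, (a (Fin.castSucc i) : ℤ) * z1 i) * e := by
      rw [Finset.sum_mul]; exact Finset.sum_congr rfl fun i _ => by ring
    rw [hsum, ← h1]; ring
  have hadd : ∀ x ∈ H, ∀ y ∈ H, x + y ∈ H := by
    rintro x ⟨z1, k1, h1⟩ y ⟨z2, k2, h2⟩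
    refine ⟨z1 + z2, k1 + k2, ?_⟩
    have hsum : ∑ i, (a (Fin.castSucc i) : ℤ) * ((z1 + z2) i)
        = ∑ i, (a (Fin.castSucc i) : ℤ) * z1 i + ∑ i, (a (Fin.castSucc i) : ℤ) * z2 i := by
      rw [← Finset.sum_add_distrib]; exact Finset.sum_congr rfl fun i _ => by simp [mul_add]
    rw [hsum, ← h1, ← h2]; ring
  have hmemH : ∀ j : Fin (m+1), (a j : ℤ) ∈ H := by
    intro j
    by_cases hj : (j : ℕ) < m
    · refine ⟨fun i => if i = ⟨(j : ℕ), hj⟩ then 1 else 0, 0, ?_⟩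
      have hcast : Fin.castSucc (⟨(j : ℕ), hj⟩ : Fin m) = j := Fin.ext rfl
      simp [Finset.sum_ite_eq', hcast]
    · have hj' : j = Fin.last m := by
        apply Fin.ext; have := j.isLt; simp only [Fin.val_last]; omega
      exact ⟨0, 1, by simp [hj']⟩
  have hgcdmem : ∀ x ∈ H, ∀ y ∈ H, gcd x y ∈ H := by
    intro x hx y hy
    rw [← Int.coe_gcd, Int.gcd_eq_gcd_ab]
    exact hadd _ (hmul _ hx _) _ (hmul _ hy _)
  have hgcdH : ∀ t : Finset (Fin (m+1)), (t.gcd fun j => (a j : ℤ)) ∈ H := by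
    intro t
    induction t using Finset.induction_on with
    | empty => simpa using hzero
    | insert _ _ hnm ih =>
      rw [Finset.gcd_insert]
      exact hgcdmem _ (hmemH _) _ ih
  have hcastgcd : ∀ t : Finset (Fin (m+1)),
      ((t.gcd a : ℕ) : ℤ) = t.gcd fun j => (a j : ℤ) := by
    intro t
    induction t using Finset.induction_on with
    | empty => simp
    | insert _ _ hnm ih =>
      rw [Finset.gcd_insert, Finset.gcd_insert, ← ih, ← Int.coe_gcd, Int.gcd_natCast_natCast]
      rfl
  have h1H : (1 : ℤ) ∈ H := by
    have h := hgcdH Finset.univ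
    rw [← hcastgcd, hgcd] at h
    simpa using h
  intro c
  have := hmul _ h1H c
  rwa [one_mul] at this

private lemma aux_finite {m : ℕ} (a : Fin (m+1) → ℕ) (ha : ∀ i, 0 < a i) :
    ∀ b : ℤ, ({z : Fin (m+1) → ℕ | ∑ i, (a i : ℤ) * (z i : ℤ) = b}).Finite := by
  intro b
  apply Set.Finite.subset (Set.Finite.pi (t := fun _ : Fin (m+1) => Set.Iic b.toNat)
    fun i => Set.finite_Iic _)
  intro z hz
  simp only [Set.mem_setOf_eq] at hz
  simp only [Set.mem_pi, Set.mem_univ, Set.mem_Iic, forall_true_left]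
  intro i
  have h1 : (a i : ℤ) * z i ≤ b := by
    rw [← hz]
    exact Finset.single_le_sum (f := fun i => (a i : ℤ) * (z i : ℤ))
      (fun i _ => by positivity) (Finset.mem_univ i)
  have h2 : (z i : ℤ) ≤ (a i : ℤ) * z i := by
    have : (1 : ℤ) ≤ (a i : ℤ) := by exact_mod_cast ha i
    nlinarith [Int.ofNat_nonneg (z i)]
  have h3 := Int.self_le_toNat b
  have : (z i : ℤ) ≤ (b.toNat : ℤ) := by linarith
  exact_mod_cast this



/-- **Integral s-covering radius and the s-Frobenius number**
(Lemma 2 in Aliev–Fukshansky–Henk, generalizing Kannan). Let `a` be a primitive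
vector of positive integers, `F` its `s`-Frobenius number,
`S_a = {x ∈ ℝ^{n-1} : x ≥ 0, ∑ aᵢ xᵢ ≤ 1}` and
`Λ_a = {w ∈ ℤ^{n-1} : aₙ ∣ ∑ aᵢ wᵢ}`. If `ρ` is the least `ρ > 0` such that for every
`z ∈ ℤ^{n-1}` the set `(z + ρ S_a) ∩ Λ_a` contains at least `s` points, then
`ρ = F + aₙ`. -/
theorem integral_sCoveringRadius_eq_sFrobenius_add {n s : ℕ} (hn : 2 ≤ n) (hs : 1 ≤ s)
    (a : Fin n → ℕ) (ha : ∀ i, 0 < a i) (hgcd : Finset.univ.gcd a = 1)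
    (F : ℤ)
    (hF : IsGreatest
      {b : ℤ | {z : Fin n → ℕ | ∑ i, (a i : ℤ) * (z i : ℤ) = b}.ncard < s} F)
    (ρ : ℝ)
    (hρ : IsLeast {r : ℝ | 0 < r ∧ ∀ z : Fin (n - 1) → ℤ,
        ∃ v : Fin s → (Fin (n - 1) → ℤ), Function.Injective v ∧
          ∀ j, (a ⟨n - 1, by omega⟩ : ℤ) ∣
                 (∑ i, (a (Fin.castLE (n.sub_le 1) i) : ℤ) * v j i) ∧
            ∃ y : Fin (n - 1) → ℝ, (∀ i, 0 ≤ y i) ∧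
              (∑ i, (a (Fin.castLE (n.sub_le 1) i) : ℝ) * y i) ≤ 1 ∧
              (fun i => (v j i : ℝ)) = (fun i => (z i : ℝ)) + r • y} ρ) :
    ρ = (F : ℝ) + (a ⟨n - 1, by omega⟩ : ℝ) := by
  obtain ⟨m, rfl⟩ : ∃ m, n = m + 1 := ⟨n - 1, by omega⟩
  have key : IsLeast {r : ℝ | 0 < r ∧ ∀ z : Fin m → ℤ,
      ∃ v : Fin s → (Fin m → ℤ), Function.Injective v ∧
        ∀ j, (a (Fin.last m) : ℤ) ∣
               (∑ i, (a (Fin.castSucc i) : ℤ) * v j i) ∧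
          ∃ y : Fin m → ℝ, (∀ i, 0 ≤ y i) ∧
            (∑ i, (a (Fin.castSucc i) : ℝ) * y i) ≤ 1 ∧
            (fun i => (v j i : ℝ)) = (fun i => (z i : ℝ)) + r • y} ρ := hρ
  clear hρ
  have haN0 : (0 : ℤ) < (a (Fin.last m) : ℤ) := by exact_mod_cast ha _
  have hfin := aux_finite a ha
  -- at least s representations above F
  have hdistinct : ∀ b : ℤ, F < b → ∃ g : Fin s → (Fin (m+1) → ℕ),
      Function.Injective g ∧ ∀ j, ∑ i, (a i : ℤ) * (g j i : ℤ) = b := by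
    intro b hb
    have h1 : s ≤ ({z : Fin (m+1) → ℕ | ∑ i, (a i : ℤ) * (z i : ℤ) = b}).ncard := by
      by_contra h
      push_neg at h
      have : b ≤ F := hF.2 h
      exact absurd this (not_le.mpr hb)
    exact aux_exists_inj (hfin b) h1
  -- PART A : any r ≥ F + aN (with r > 0) is in the covering set
  have partA : ∀ r : ℝ, 0 < r → (F : ℝ) + (a (Fin.last m) : ℝ) ≤ r →
      (0 < r ∧ ∀ z : Fin m → ℤ, ∃ v : Fin s → (Fin m → ℤ), Function.Injective v ∧
        ∀ j, (a (Fin.last m) : ℤ) ∣ (∑ i, (a (Fin.castSucc i) : ℤ) * v j i) ∧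
          ∃ y : Fin m → ℝ, (∀ i, 0 ≤ y i) ∧ (∑ i, (a (Fin.castSucc i) : ℝ) * y i) ≤ 1 ∧
            (fun i => (v j i : ℝ)) = (fun i => (z i : ℝ)) + r • y) := by
    intro r hr0 hrF
    refine ⟨hr0, fun z => ?_⟩
    obtain ⟨c, hc⟩ : ∃ c, c = ∑ i, (a (Fin.castSucc i) : ℤ) * z i := ⟨_, rfl⟩
    obtain ⟨q, hq⟩ : ∃ q, q = (F + c) / (a (Fin.last m) : ℤ) := ⟨_, rfl⟩
    obtain ⟨e, heq⟩ : ∃ e, e = (F + c) % (a (Fin.last m) : ℤ) := ⟨_, rfl⟩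
    obtain ⟨b, hbdef⟩ : ∃ b, b = F + (a (Fin.last m) : ℤ) - e := ⟨_, rfl⟩
    have hdiv : (a (Fin.last m) : ℤ) * q + e = F + c := by
      rw [hq, heq]; exact Int.mul_ediv_add_emod _ _
    have he0 : 0 ≤ e := heq ▸ Int.emod_nonneg _ (ne_of_gt haN0)
    have he1 : e < (a (Fin.last m) : ℤ) := heq ▸ Int.emod_lt_of_pos _ haN0
    have hFb : F < b := by omega
    have hbF : b ≤ F + (a (Fin.last m) : ℤ) := by omega
    have hbc : b + c = (a (Fin.last m) : ℤ) * (q + 1) := by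
      rw [hbdef]; linear_combination -hdiv
    obtain ⟨g, hginj, hgsum⟩ := hdistinct b hFb
    have hsplit : ∀ j, ∑ i : Fin m, (a (Fin.castSucc i) : ℤ) * (g j (Fin.castSucc i) : ℤ)
        + (a (Fin.last m) : ℤ) * (g j (Fin.last m) : ℤ) = b := by
      intro j
      have h1 := hgsum j
      rwa [Fin.sum_univ_castSucc] at h1
    refine ⟨fun j i => z i + (g j (Fin.castSucc i) : ℤ), ?_, fun j => ?_⟩
    · intro j j' hjj'
      have hfirst : ∀ i : Fin m, g j (Fin.castSucc i) = g j' (Fin.castSucc i) := by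
        intro i
        have h1 : z i + (g j (Fin.castSucc i) : ℤ) = z i + (g j' (Fin.castSucc i) : ℤ) :=
          congrFun hjj' i
        omega
      apply hginj
      funext i
      induction i using Fin.lastCases with
      | last =>
        have h1 := hsplit j
        have h2 := hsplit j'
        have h3 : ∑ i : Fin m, (a (Fin.castSucc i) : ℤ) * (g j (Fin.castSucc i) : ℤ)
            = ∑ i : Fin m, (a (Fin.castSucc i) : ℤ) * (g j' (Fin.castSucc i) : ℤ) :=
          Finset.sum_congr rfl fun i _ => by rw [hfirst i]
        have h4 : (a (Fin.last m) : ℤ) * (g j (Fin.last m) : ℤ)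
            = (a (Fin.last m) : ℤ) * (g j' (Fin.last m) : ℤ) := by linarith
        have h5 := mul_left_cancel₀ (ne_of_gt haN0) h4
        exact_mod_cast h5
      | cast i => exact hfirst i
    · constructor
      · refine ⟨q + 1 - (g j (Fin.last m) : ℤ), ?_⟩
        have hexp : ∑ i : Fin m, (a (Fin.castSucc i) : ℤ) * (z i + (g j (Fin.castSucc i) : ℤ))
            = c + ∑ i : Fin m, (a (Fin.castSucc i) : ℤ) * (g j (Fin.castSucc i) : ℤ) := by
          rw [hc, ← Finset.sum_add_distrib]
          exact Finset.sum_congr rfl fun i _ => by ring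
        rw [hexp]
        linear_combination hsplit j + hbc
      · refine ⟨fun i => (g j (Fin.castSucc i) : ℝ) / r, fun i => by positivity, ?_, ?_⟩
        · have hdivsum : ∑ i : Fin m, (a (Fin.castSucc i) : ℝ) * ((g j (Fin.castSucc i) : ℝ) / r)
              = (∑ i : Fin m, (a (Fin.castSucc i) : ℝ) * (g j (Fin.castSucc i) : ℝ)) / r := by
            rw [Finset.sum_div]; exact Finset.sum_congr rfl fun i _ => by ring
          rw [hdivsum, div_le_one hr0]
          have h2 : ∑ i : Fin m, (a (Fin.castSucc i) : ℤ) * (g j (Fin.castSucc i) : ℤ)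
              ≤ F + (a (Fin.last m) : ℤ) := by
            have h1 := hsplit j
            have h5 : (0:ℤ) ≤ (a (Fin.last m) : ℤ) * (g j (Fin.last m) : ℤ) := by positivity
            linarith
          have h4 : (∑ i : Fin m, (a (Fin.castSucc i) : ℝ) * (g j (Fin.castSucc i) : ℝ))
              ≤ (F : ℝ) + (a (Fin.last m) : ℝ) := by exact_mod_cast h2
          linarith
        · funext i
          simp only [Pi.add_apply, Pi.smul_apply, smul_eq_mul]
          push_cast
          rw [mul_div_cancel₀ _ (ne_of_gt hr0)]
  -- PART B : ρ ≥ F + aN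
  obtain ⟨⟨hρ0, hρall⟩, hρlb⟩ := key
  have partB : (F : ℝ) + (a (Fin.last m) : ℝ) ≤ ρ := by
    by_contra hcon
    push_neg at hcon
    obtain ⟨z0, k, hz0⟩ := aux_residue a hgcd (-F)
    obtain ⟨v, hvinj, hv⟩ := hρall z0
    have hv1 : ∀ j, ∃ d, ∑ i, (a (Fin.castSucc i) : ℤ) * v j i = (a (Fin.last m) : ℤ) * d :=
      fun j => (hv j).1
    choose d hd using hv1
    choose y hy0 hy1 hyeq using fun j => (hv j).2
    have hvz : ∀ j i, ((v j i - z0 i : ℤ) : ℝ) = ρ * y j i := by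
      intro j i
      have h1 : ((v j i : ℤ) : ℝ) = (z0 i : ℝ) + ρ * y j i := by
        have := congrFun (hyeq j) i
        simpa using this
      push_cast
      push_cast at h1
      linarith
    have hu0 : ∀ j i, 0 ≤ v j i - z0 i := by
      intro j i
      have h1 : (0:ℝ) ≤ ρ * y j i := mul_nonneg hρ0.le (hy0 j i)
      have h2 := hvz j i
      have h3 : (0:ℝ) ≤ ((v j i - z0 i : ℤ) : ℝ) := by linarith
      exact_mod_cast h3
    have hsumlt : ∀ j, ∑ i, (a (Fin.castSucc i) : ℤ) * (v j i - z0 i)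
        < F + (a (Fin.last m) : ℤ) := by
      intro j
      have h1 : (∑ i, (a (Fin.castSucc i) : ℝ) * ((v j i - z0 i : ℤ) : ℝ))
          = ρ * ∑ i, (a (Fin.castSucc i) : ℝ) * y j i := by
        rw [Finset.mul_sum]
        exact Finset.sum_congr rfl fun i _ => by rw [hvz j i]; ring
      have h2 : ρ * ∑ i, (a (Fin.castSucc i) : ℝ) * y j i ≤ ρ * 1 :=
        mul_le_mul_of_nonneg_left (hy1 j) hρ0.le
      have h3 : ((∑ i, (a (Fin.castSucc i) : ℤ) * (v j i - z0 i) : ℤ) : ℝ)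
          < (F : ℝ) + (a (Fin.last m) : ℝ) := by
        push_cast
        push_cast at h1
        linarith
      exact_mod_cast h3
    have hsumu : ∀ j, ∑ i, (a (Fin.castSucc i) : ℤ) * (v j i - z0 i)
        = F + (a (Fin.last m) : ℤ) * (d j + k) := by
      intro j
      have hexp : ∑ i, (a (Fin.castSucc i) : ℤ) * (v j i - z0 i)
          = ∑ i, (a (Fin.castSucc i) : ℤ) * v j i - ∑ i, (a (Fin.castSucc i) : ℤ) * z0 i := by
        rw [← Finset.sum_sub_distrib]
        exact Finset.sum_congr rfl fun i _ => by ring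
      rw [hexp, hd j]
      linear_combination -hz0
    have hdk : ∀ j, d j + k ≤ 0 := by
      intro j
      have h1 := hsumlt j
      have h2 := hsumu j
      have h3 : (a (Fin.last m) : ℤ) * (d j + k) < (a (Fin.last m) : ℤ) * 1 := by
        rw [mul_one]; linarith
      have h4 : d j + k < 1 := lt_of_mul_lt_mul_left h3 haN0.le
      omega
    have hgsum : ∀ j, ∑ i, (a i : ℤ)
        * ((Fin.snoc (fun i => (v j i - z0 i).toNat) ((-(d j + k)).toNat) : Fin (m+1) → ℕ) i : ℤ)
        = F := by
      intro j
      rw [Fin.sum_univ_castSucc]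
      simp only [Fin.snoc_castSucc, Fin.snoc_last]
      have h1 : ∀ i : Fin m, ((v j i - z0 i).toNat : ℤ) = v j i - z0 i :=
        fun i => Int.toNat_of_nonneg (hu0 j i)
      have h2 : ((-(d j + k)).toNat : ℤ) = -(d j + k) :=
        Int.toNat_of_nonneg (by linarith [hdk j])
      have h3 : ∑ i : Fin m, (a (Fin.castSucc i) : ℤ) * ((v j i - z0 i).toNat : ℤ)
          = ∑ i : Fin m, (a (Fin.castSucc i) : ℤ) * (v j i - z0 i) :=
        Finset.sum_congr rfl fun i _ => by rw [h1 i]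
      rw [h3, h2, hsumu j]
      ring
    have hginj : Function.Injective (fun j =>
        (Fin.snoc (fun i => (v j i - z0 i).toNat) ((-(d j + k)).toNat) : Fin (m+1) → ℕ)) := by
      intro j j' hjj'
      apply hvinj
      funext i
      have h1 : ((v j i - z0 i).toNat : ℕ) = (v j' i - z0 i).toNat := by
        have := congrFun hjj' (Fin.castSucc i)
        simpa [Fin.snoc_castSucc] using this
      have h2 := hu0 j i
      have h3 := hu0 j' i
      omega
    have hcount := aux_le_ncard (hfin F) _ hginj (fun j => hgsum j)
    exact absurd hcount (not_le.mpr hF.1)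
  -- conclusion
  show ρ = (F : ℝ) + (a (Fin.last m) : ℝ)
  rcases lt_or_ge 0 ((F : ℝ) + (a (Fin.last m) : ℝ)) with hpos | hneg
  · have h2 : ρ ≤ (F : ℝ) + (a (Fin.last m) : ℝ) := hρlb (partA _ hpos le_rfl)
    linarith
  · have h2 : ρ ≤ ρ / 2 := hρlb (partA (ρ / 2) (by linarith) (by linarith))
    linarith
end

section
/- Let n ≥ 2 and s ≥ 1 be integers and let a = (a_1,…,a_n) be a vector of positive integers with gcd(a_1,…,a_n) = 1. Then X_s(a) ≤ s^{-1/(n-1)}·X_1(a) + ((n−1)!)^{1/(n-1)}, where X_s(a) = F_s(a)/(s·a_1·a_2·…·a_n)^{1/(n-1)} is the normalized s-Frobenius number. -/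
open Finset


-- (N+1)^(k+1) ≤ N^(k+1) + (k+1)*(N+1)^k
lemma aux_pow_succ_le (N k : ℕ) : (N+1)^(k+1) ≤ N^(k+1) + (k+1)*(N+1)^k := by
  induction k with
  | zero => simp
  | succ k ih =>
    have h1 : (N+1)^(k+2) = (N+1) * (N+1)^(k+1) := by ring
    have h2 : N^(k+1) ≤ (N+1)^(k+1) := Nat.pow_le_pow_left (by omega) _
    calc (N+1)^(k+2) = (N+1) * (N+1)^(k+1) := h1
    _ ≤ (N+1) * (N^(k+1) + (k+1)*(N+1)^k) := Nat.mul_le_mul_left _ ih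
    _ = N^(k+2) + N^(k+1) + (k+1)*((N+1)*(N+1)^k) := by ring
    _ ≤ N^(k+2) + (N+1)^(k+1) + (k+1)*(N+1)^(k+1) := by
        have h3 : (N+1)*(N+1)^k = (N+1)^(k+1) := by ring
        rw [h3]; omega
    _ = N^(k+2) + (k+2)*(N+1)^(k+1) := by ring

lemma aux_pow_le_sum (k N : ℕ) : N^(k+1) ≤ (k+1) * ∑ u ∈ range N, (u+1)^k := by
  induction N with
  | zero => simp
  | succ N ih =>
    rw [sum_range_succ, Nat.mul_add]
    calc (N+1)^(k+1) ≤ N^(k+1) + (k+1)*(N+1)^k := aux_pow_succ_le N k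
    _ ≤ (k+1) * ∑ u ∈ range N, (u+1)^k + (k+1)*(N+1)^k := by omega


lemma aux_sum_group (T α k : ℕ) (hα : 0 < α) :
    ∑ x ∈ range (T+1), (T - x + 1)^k ≤ α * ∑ j ∈ range (T/α + 1), (T - α*j + 1)^k := by
  have hmaps : ∀ x ∈ range (T+1), x / α ∈ range (T/α + 1) := by
    intro x hx
    rw [mem_range] at hx ⊢
    have : x / α ≤ T / α := Nat.div_le_div_right (by omega)
    omega
  rw [← Finset.sum_fiberwise_of_maps_to hmaps (fun x => (T - x + 1)^k)]
  rw [Finset.mul_sum]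
  apply Finset.sum_le_sum
  intro j hj
  have hcard : ((range (T+1)).filter (fun x => x / α = j)).card ≤ α := by
    have hsub : (range (T+1)).filter (fun x => x / α = j) ⊆ Ico (α*j) (α*j + α) := by
      intro x hx
      simp only [mem_filter, mem_range] at hx
      rw [mem_Ico]
      obtain ⟨hx1, hx2⟩ := hx
      constructor
      · calc α * j = α * (x / α) := by rw [hx2]
          _ ≤ x := Nat.mul_div_le x α
      · rcases Nat.lt_or_ge x (α*j + α) with h | h
        · exact h
        · exfalso
          have hax : α * (j+1) ≤ x := by
            have : α*j + α = α * (j+1) := by ring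
            omega
          have : x / α ≥ j + 1 := (Nat.le_div_iff_mul_le hα).2 (by
            calc (j+1) * α = α * (j+1) := by ring
              _ ≤ x := hax)
          omega
    calc _ ≤ (Ico (α*j) (α*j + α)).card := Finset.card_le_card hsub
      _ = α := by rw [Nat.card_Ico]; omega
  calc ∑ x ∈ (range (T+1)).filter (fun x => x / α = j), (T - x + 1)^k
      ≤ ∑ _x ∈ (range (T+1)).filter (fun x => x / α = j), (T - α*j + 1)^k := by
        apply Finset.sum_le_sum
        intro x hx
        simp only [mem_filter, mem_range] at hx
        have : α * j ≤ x := by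
          calc α * j = α * (x / α) := by rw [hx.2]
            _ ≤ x := Nat.mul_div_le x α
        exact Nat.pow_le_pow_left (by omega) _
    _ = ((range (T+1)).filter (fun x => x / α = j)).card * (T - α*j + 1)^k := by
        rw [Finset.sum_const, smul_eq_mul]
    _ ≤ α * (T - α*j + 1)^k := Nat.mul_le_mul_right _ hcard


noncomputable def cntF (k : ℕ) (α : Fin k → ℕ) (T : ℕ) : Finset (Fin k → ℕ) :=
  (Fintype.piFinset fun _ => Finset.range (T+1)).filter fun y => ∑ i, α i * y i ≤ T

lemma mem_cntF {k : ℕ} {α : Fin k → ℕ} (hα : ∀ i, 0 < α i) {T : ℕ} {y : Fin k → ℕ} :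
    y ∈ cntF k α T ↔ ∑ i, α i * y i ≤ T := by
  simp only [cntF, mem_filter, Fintype.mem_piFinset, mem_range]
  constructor
  · exact fun h => h.2
  · intro h
    refine ⟨fun i => ?_, h⟩
    have h1 : α i * y i ≤ ∑ j, α j * y j :=
      Finset.single_le_sum (f := fun j => α j * y j) (fun j _ => Nat.zero_le _) (mem_univ i)
    have h2 : y i ≤ α i * y i := Nat.le_mul_of_pos_left _ (hα i)
    omega

lemma cntF_card_succ (k : ℕ) (α : Fin (k+1) → ℕ) (hα : ∀ i, 0 < α i) (T : ℕ) :
    (cntF (k+1) α T).card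
      = ∑ j ∈ range (T / α 0 + 1), (cntF k (fun i => α i.succ) (T - α 0 * j)).card := by
  have hα0 : 0 < α 0 := hα 0
  have hαs : ∀ i : Fin k, 0 < α i.succ := fun i => hα i.succ
  have hmaps : ∀ y ∈ cntF (k+1) α T, y 0 ∈ range (T / α 0 + 1) := by
    intro y hy
    rw [mem_cntF hα] at hy
    rw [mem_range]
    have h1 : α 0 * y 0 ≤ ∑ i, α i * y i :=
      Finset.single_le_sum (f := fun i => α i * y i) (fun j _ => Nat.zero_le _) (mem_univ 0)
    have h2 : y 0 * α 0 ≤ T := by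
      calc y 0 * α 0 = α 0 * y 0 := Nat.mul_comm _ _
        _ ≤ T := le_trans h1 hy
    have h3 : y 0 ≤ T / α 0 := (Nat.le_div_iff_mul_le hα0).2 h2
    omega
  rw [Finset.card_eq_sum_card_fiberwise (f := fun y => y 0)
    (t := range (T / α 0 + 1)) (s := cntF (k+1) α T) (fun y hy => hmaps y hy)]
  · apply Finset.sum_congr rfl
    intro j hj
    rw [mem_range] at hj
    have hj' : α 0 * j ≤ T := by
      have h := (Nat.le_div_iff_mul_le hα0).1 (by omega : j ≤ T / α 0)
      calc α 0 * j = j * α 0 := Nat.mul_comm _ _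
        _ ≤ T := h
    apply Finset.card_nbij' (i := fun y => y ∘ Fin.succ) (j := fun w => Fin.cons j w)
    · intro y hy
      simp only [Finset.mem_coe, mem_filter] at hy
      obtain ⟨hy1, hy2⟩ := hy
      rw [mem_cntF hα] at hy1
      rw [Finset.mem_coe, mem_cntF hαs]
      rw [Fin.sum_univ_succ, hy2] at hy1
      simp only [Function.comp]
      omega
    · intro w hw
      rw [Finset.mem_coe, mem_cntF hαs] at hw
      simp only [Finset.mem_coe, mem_filter, Fin.cons_zero, and_true]
      rw [mem_cntF hα, Fin.sum_univ_succ, Fin.cons_zero]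
      have : ∑ i : Fin k, α i.succ * Fin.cons (α := fun _ => ℕ) j w i.succ
          = ∑ i : Fin k, α i.succ * w i := by
        apply Finset.sum_congr rfl; intro i _; rw [Fin.cons_succ]
      rw [this]
      omega
    · intro y hy
      simp only [Finset.mem_coe, mem_filter] at hy
      funext i
      refine Fin.cases ?_ ?_ i
      · beta_reduce; rw [Fin.cons_zero, hy.2]
      · intro i; beta_reduce; rw [Fin.cons_succ]; rfl
    · intro w hw
      funext i
      simp only [Function.comp, Fin.cons_succ]

lemma cntF_lb : ∀ (k : ℕ) (α : Fin k → ℕ), (∀ i, 0 < α i) → ∀ T : ℕ,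
    (T+1)^k ≤ k.factorial * ((∏ i, α i) * (cntF k α T).card) := by
  intro k
  induction k with
  | zero =>
    intro α hα T
    have hne : (finZeroElim : Fin 0 → ℕ) ∈ cntF 0 α T := by
      simp only [cntF, Finset.mem_filter, Fintype.mem_piFinset]
      exact ⟨fun i => i.elim0, by simp⟩
    have : 0 < (cntF 0 α T).card := Finset.card_pos.2 ⟨_, hne⟩
    simpa using this
  | succ k ih =>
    intro α hα T
    have hα0 : 0 < α 0 := hα 0
    have hαs : ∀ i : Fin k, 0 < α i.succ := fun i => hα i.succ
    have step1 : (T+1)^(k+1) ≤ (k+1) * ∑ x ∈ Finset.range (T+1), (T - x + 1)^k := by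
      have hrefl := Finset.sum_range_reflect (fun x => (x+1)^k) (T+1)
      have h2 : ∑ x ∈ Finset.range (T+1), (T + 1 - 1 - x + 1)^k
          = ∑ x ∈ Finset.range (T+1), (T - x + 1)^k := by
        apply Finset.sum_congr rfl; intro x _
        have : T + 1 - 1 - x = T - x := by omega
        rw [this]
      calc (T+1)^(k+1) ≤ (k+1) * ∑ u ∈ Finset.range (T+1), (u+1)^k := aux_pow_le_sum k (T+1)
        _ = (k+1) * ∑ x ∈ Finset.range (T+1), (T - x + 1)^k := by rw [← hrefl, h2]
    have step2 : ∑ x ∈ Finset.range (T+1), (T - x + 1)^k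
        ≤ α 0 * ∑ j ∈ Finset.range (T / α 0 + 1), (T - α 0 * j + 1)^k :=
      aux_sum_group T (α 0) k hα0
    have step3 : ∑ j ∈ Finset.range (T / α 0 + 1), (T - α 0 * j + 1)^k
        ≤ k.factorial * ((∏ i : Fin k, α i.succ) * (cntF (k+1) α T).card) := by
      rw [cntF_card_succ k α hα T, Finset.mul_sum, Finset.mul_sum]
      apply Finset.sum_le_sum
      intro j _
      have := ih (fun i => α i.succ) hαs (T - α 0 * j)
      calc (T - α 0 * j + 1)^k
          ≤ k.factorial * ((∏ i : Fin k, α i.succ) * (cntF k (fun i => α i.succ) (T - α 0 * j)).card) := this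
        _ = k.factorial * (∏ i : Fin k, α i.succ) * (cntF k (fun i => α i.succ) (T - α 0 * j)).card := by ring
        _ = k.factorial * ((∏ i : Fin k, α i.succ) * (cntF k (fun i => α i.succ) (T - α 0 * j)).card) := by ring
    calc (T+1)^(k+1)
        ≤ (k+1) * ∑ x ∈ Finset.range (T+1), (T - x + 1)^k := step1
      _ ≤ (k+1) * (α 0 * ∑ j ∈ Finset.range (T / α 0 + 1), (T - α 0 * j + 1)^k) :=
          Nat.mul_le_mul_left _ step2
      _ ≤ (k+1) * (α 0 * (k.factorial * ((∏ i : Fin k, α i.succ) * (cntF (k+1) α T).card))) := by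
          exact Nat.mul_le_mul_left _ (Nat.mul_le_mul_left _ step3)
      _ = (k+1).factorial * ((∏ i : Fin (k+1), α i) * (cntF (k+1) α T).card) := by
          rw [Fin.prod_univ_succ, Nat.factorial_succ]
          ring

/-- **Bound on the normalized s-Frobenius number** (equation (8) in
Aliev–Fukshansky–Henk): `X_s(a) ≤ s^(-1/(n-1)) · X₁(a) + ((n-1)!)^(1/(n-1))`, where
`X_s(a) = F_s(a) / (s · a₁ ⋯ aₙ)^(1/(n-1))` is the normalized `s`-Frobenius number. -/
theorem normalized_sFrobenius_bound {n s : ℕ} (hn : 2 ≤ n) (hs : 1 ≤ s)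
    (a : Fin n → ℕ) (ha : ∀ i, 0 < a i) (hgcd : Finset.univ.gcd a = 1)
    (Fs F1 : ℤ)
    (hFs : IsGreatest
      {b : ℤ | {z : Fin n → ℕ | ∑ i, (a i : ℤ) * (z i : ℤ) = b}.ncard < s} Fs)
    (hF1 : IsGreatest
      {b : ℤ | {z : Fin n → ℕ | ∑ i, (a i : ℤ) * (z i : ℤ) = b}.ncard < 1} F1) :
    (Fs : ℝ) / ((s : ℝ) * ∏ i, (a i : ℝ)) ^ ((1 : ℝ) / ((n : ℝ) - 1))
      ≤ (s : ℝ) ^ (-((1 : ℝ) / ((n : ℝ) - 1))) *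
          ((F1 : ℝ) / ((1 : ℝ) * ∏ i, (a i : ℝ)) ^ ((1 : ℝ) / ((n : ℝ) - 1)))
        + (((n - 1).factorial : ℝ)) ^ ((1 : ℝ) / ((n : ℝ) - 1)) := by
  obtain ⟨m, rfl⟩ : ∃ m, n = m + 1 := ⟨n - 1, by omega⟩
  have hm1 : 1 ≤ m := by omega
  have hmR : ((m : ℝ)) ≠ 0 := by positivity
  -- notation
  set Rep : ℤ → Set (Fin (m+1) → ℕ) :=
    fun v => {z : Fin (m+1) → ℕ | ∑ i, (a i : ℤ) * (z i : ℤ) = v} with hRep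
  -- basic facts
  have hrepneg : ∀ v : ℤ, v < 0 → Rep v = ∅ := by
    intro v hv
    ext z
    simp only [hRep, Set.mem_setOf_eq, Set.mem_empty_iff_false, iff_false]
    intro h
    have : (0:ℤ) ≤ ∑ i, (a i : ℤ) * (z i : ℤ) :=
      Finset.sum_nonneg fun i _ => by positivity
    omega
  have hF1neg : -1 ≤ F1 := by
    apply hF1.2
    simp only [Set.mem_setOf_eq]
    rw [show {z : Fin (m+1) → ℕ | ∑ i, (a i : ℤ) * (z i : ℤ) = (-1:ℤ)} = Rep (-1) from rfl,
      hrepneg (-1) (by norm_num)]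
    simp
  have hne : ∀ v : ℤ, F1 < v → (Rep v).Nonempty := by
    intro v hv
    by_contra hcon
    rw [Set.not_nonempty_iff_eq_empty] at hcon
    have : v ∈ {b : ℤ | {z : Fin (m+1) → ℕ | ∑ i, (a i : ℤ) * (z i : ℤ) = b}.ncard < 1} := by
      simp only [Set.mem_setOf_eq]
      rw [show {z : Fin (m+1) → ℕ | ∑ i, (a i : ℤ) * (z i : ℤ) = v} = Rep v from rfl, hcon]
      simp
    exact absurd (hF1.2 this) (by omega)
  -- key inequality
  have key : (Fs : ℝ) ≤ (F1 : ℝ) +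
      ((m.factorial : ℝ) * ((s : ℝ) * ∏ i, (a i : ℝ))) ^ ((1 : ℝ) / (m : ℝ)) := by
    by_cases hcle : Fs ≤ F1
    · have h0 : (0:ℝ) ≤ ((m.factorial : ℝ) * ((s : ℝ) * ∏ i, (a i : ℝ))) ^ ((1:ℝ)/(m:ℝ)) :=
        Real.rpow_nonneg (by positivity) _
      have h1 : (Fs:ℝ) ≤ (F1:ℝ) := by exact_mod_cast hcle
      linarith
    · push_neg at hcle
      set C : ℕ := (Fs - F1 - 1).toNat with hCdef
      have hC : (C : ℤ) = Fs - F1 - 1 := Int.toNat_of_nonneg (by omega)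
      have hFs0 : 0 ≤ Fs := by omega
      set α : Fin m → ℕ := fun i => a i.succ with hαdef
      have hα : ∀ i, 0 < α i := fun i => ha i.succ
      set A : (Fin m → ℕ) → ℕ := fun y => ∑ i, α i * y i with hAdef
      set tailA : (Fin (m+1) → ℕ) → ℕ := fun z => ∑ i : Fin m, α i * z i.succ with htAdef
      -- choice of minimal-tail representatives
      have hZex : ∀ v : ℤ, ∃ z : Fin (m+1) → ℕ,
          F1 < v → z ∈ Rep v ∧ ∀ z' ∈ Rep v, tailA z ≤ tailA z' := by
        intro v
        by_cases hv : F1 < v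
        · have hvne := hne v hv
          have hTne : (tailA '' Rep v).Nonempty := hvne.image _
          obtain ⟨z, hz, hzt⟩ := Nat.sInf_mem hTne
          exact ⟨z, fun _ => ⟨hz, fun z' hz' => by
            rw [hzt]
            exact Nat.sInf_le ⟨z', hz', rfl⟩⟩⟩
        · exact ⟨fun _ => 0, fun h => absurd h hv⟩
      choose Z hZ using hZex
      set Φ : (Fin m → ℕ) → (Fin (m+1) → ℕ) :=
        fun y => fun i => Z (Fs - (A y : ℤ)) i + Fin.cons (α := fun _ => ℕ) 0 y i with hΦdef
      set D : Finset (Fin m → ℕ) := cntF m α C with hDdef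
      have hDmem : ∀ y ∈ D, A y ≤ C := fun y hy => (mem_cntF hα).1 hy
      have hvD : ∀ y ∈ D, F1 < Fs - (A y : ℤ) := by
        intro y hy
        have h1 := hDmem y hy
        have h2 : (A y : ℤ) ≤ (C:ℤ) := by exact_mod_cast h1
        omega
      have hconsum : ∀ y : Fin m → ℕ,
          ∑ i, (a i : ℤ) * (((Fin.cons (α := fun _ => ℕ) 0 y)) i : ℤ) = (A y : ℤ) := by
        intro y
        rw [Fin.sum_univ_succ]
        simp only [Fin.cons_zero, Fin.cons_succ, Nat.cast_zero, mul_zero, zero_add]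
        simp only [hAdef, hαdef]
        push_cast
        rfl
      have hΦmem : ∀ y ∈ D, Φ y ∈ Rep Fs := by
        intro y hy
        have hzv := (hZ (Fs - (A y:ℤ)) (hvD y hy)).1
        simp only [hRep, Set.mem_setOf_eq] at hzv ⊢
        have hpt : ∀ i : Fin (m+1), ((Φ y i : ℕ) : ℤ)
            = (Z (Fs - (A y:ℤ)) i : ℤ) + (((Fin.cons (α := fun _ => ℕ) 0 y)) i : ℤ) := by
          intro i; simp [hΦdef]
        calc ∑ i, (a i:ℤ) * ((Φ y i : ℕ) : ℤ)
            = ∑ i, ((a i:ℤ) * (Z (Fs - (A y:ℤ)) i:ℤ)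
                + (a i:ℤ) * (((Fin.cons (α := fun _ => ℕ) 0 y)) i:ℤ)) := by
              apply Finset.sum_congr rfl; intro i _; rw [hpt i]; ring
          _ = (Fs - (A y:ℤ)) + (A y:ℤ) := by rw [Finset.sum_add_distrib, hzv, hconsum y]
          _ = Fs := by ring
      set SF : Finset (Fin (m+1) → ℕ) :=
        (Fintype.piFinset fun _ => Finset.range (Fs.toNat + 1)).filter
          (fun z => ∑ i, (a i : ℤ) * (z i : ℤ) = Fs) with hSFdef
      have hSFiff : ∀ z : Fin (m+1) → ℕ, z ∈ SF ↔ z ∈ Rep Fs := by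
        intro z
        simp only [hSFdef, mem_filter, Fintype.mem_piFinset, mem_range, hRep, Set.mem_setOf_eq]
        constructor
        · exact fun h => h.2
        · intro h
          refine ⟨fun i => ?_, h⟩
          have h1 : (a i:ℤ) * (z i:ℤ) ≤ Fs := by
            rw [← h]
            exact Finset.single_le_sum (f := fun j => (a j:ℤ) * (z j:ℤ))
              (fun j _ => by positivity) (mem_univ i)
          have h2 : (z i : ℤ) ≤ (a i:ℤ) * (z i:ℤ) :=
            le_mul_of_one_le_left (by positivity) (by exact_mod_cast ha i)
          have h3 : (z i : ℤ) ≤ Fs := le_trans h2 h1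
          omega
      have hSFcard : SF.card < s := by
        have hcoe : Rep Fs = ↑SF := by
          ext z
          rw [Finset.mem_coe, hSFiff z]
        have hlt := hFs.1
        simp only [Set.mem_setOf_eq] at hlt
        rw [show {z : Fin (m+1) → ℕ | ∑ i, (a i:ℤ)*(z i:ℤ) = Fs} = Rep Fs from rfl, hcoe,
          Set.ncard_coe_finset] at hlt
        exact hlt
      -- fiber bound
      have hAeq : ∀ y y' : Fin m → ℕ, Φ y = Φ y' → A y = A y' → y = y' := by
        intro y y' hΦe hAe
        funext i
        have hcf := congrFun hΦe i.succ
        simp only [hΦdef, Fin.cons_succ] at hcf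
        rw [hAe] at hcf
        omega
      have hAlt : ∀ y y' : Fin m → ℕ, y ∈ D → y' ∈ D → Φ y = Φ y' →
          A y % a 0 = A y' % a 0 → A y < A y' → False := by
        intro y y' hyD hy'D hΦe hmod hlt2
        set v : ℤ := Fs - (A y : ℤ) with hv
        set v' : ℤ := Fs - (A y' : ℤ) with hv'
        have hvF : F1 < v := hvD y hyD
        have hv'F : F1 < v' := hvD y' hy'D
        obtain ⟨d, hd⟩ : a 0 ∣ A y' - A y := (Nat.modEq_iff_dvd' (le_of_lt hlt2)).1 hmod
        have hd1 : 1 ≤ d := by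
          rcases Nat.eq_zero_or_pos d with h | h
          · rw [h, Nat.mul_zero] at hd; omega
          · exact h
        have had : 1 ≤ a 0 * d := Nat.mul_pos (ha 0) hd1
        set z' : Fin (m+1) → ℕ := Function.update (Z v') 0 (Z v' 0 + d) with hz'def
        have hz'0 : z' 0 = Z v' 0 + d := by simp [hz'def]
        have hz's : ∀ i : Fin m, z' i.succ = Z v' i.succ := by
          intro i
          simp [hz'def, Function.update_of_ne (Fin.succ_ne_zero i)]
        have hz'mem : z' ∈ Rep v := by
          have hzv' := (hZ v' hv'F).1
          simp only [hRep, Set.mem_setOf_eq] at hzv' ⊢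
          rw [Fin.sum_univ_succ] at hzv' ⊢
          have heq : ∑ i : Fin m, (a i.succ:ℤ) * ((z' i.succ : ℕ):ℤ)
              = ∑ i : Fin m, (a i.succ:ℤ) * ((Z v' i.succ : ℕ):ℤ) := by
            apply Finset.sum_congr rfl; intro i _; rw [hz's i]
          rw [heq, hz'0]
          have hADZ : ((A y' : ℕ) : ℤ) = ((A y : ℕ):ℤ) + (a 0:ℤ)*(d:ℤ) := by omega
          have hexp : (a 0:ℤ) * (((Z v' 0 + d : ℕ)):ℤ)
              = (a 0:ℤ)*((Z v' 0 : ℕ):ℤ) + (a 0:ℤ)*(d:ℤ) := by push_cast; ring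
          rw [hexp, hv]
          rw [hv'] at hzv'
          linarith [hzv', hADZ]
        have htail' : tailA z' = tailA (Z v') := by
          simp only [htAdef]
          apply Finset.sum_congr rfl; intro i _; rw [hz's i]
        have hmin : tailA (Z v) ≤ tailA (Z v') := by
          have h6 := (hZ v hvF).2 z' hz'mem
          rwa [htail'] at h6
        have hsum : tailA (Z v) + A y = tailA (Z v') + A y' := by
          have h1 : ∀ i : Fin m, Z v i.succ + y i = Z v' i.succ + y' i := by
            intro i
            have hcf := congrFun hΦe i.succ
            simpa [hΦdef, Fin.cons_succ, hv, hv'] using hcf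
          simp only [htAdef, hAdef]
          rw [← Finset.sum_add_distrib, ← Finset.sum_add_distrib]
          apply Finset.sum_congr rfl
          intro i _
          calc α i * Z v i.succ + α i * y i = α i * (Z v i.succ + y i) := by ring
            _ = α i * (Z v' i.succ + y' i) := by rw [h1 i]
            _ = α i * Z v' i.succ + α i * y' i := by ring
        omega
      have hfib : ∀ w ∈ SF, ((D.filter fun y => Φ y = w)).card ≤ a 0 := by
        intro w hw
        have hinjOn : Set.InjOn (fun y => A y % a 0) ↑(D.filter fun y => Φ y = w) := by
          intro y hy y' hy' hmod
          simp only [Finset.coe_filter, Set.mem_setOf_eq] at hy hy'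
          obtain ⟨hyD, hyw⟩ := hy
          obtain ⟨hy'D, hy'w⟩ := hy'
          have hΦe : Φ y = Φ y' := by rw [hyw, hy'w]
          simp only at hmod
          rcases lt_trichotomy (A y) (A y') with h | h | h
          · exact absurd (hAlt y y' hyD hy'D hΦe hmod h) id
          · exact hAeq y y' hΦe h
          · exact absurd (hAlt y' y hy'D hyD hΦe.symm hmod.symm h) id
        calc ((D.filter fun y => Φ y = w)).card
            ≤ (Finset.range (a 0)).card := Finset.card_le_card_of_injOn _
              (fun y _ => Finset.mem_range.2 (Nat.mod_lt _ (ha 0))) hinjOn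
          _ = a 0 := Finset.card_range _
      -- main counting chain
      have hmain : (C+1)^m ≤ m.factorial * ((∏ i, a i) * (s - 1)) := by
        have h1 := cntF_lb m α hα C
        have h2 : D.card ≤ a 0 * SF.card :=
          Finset.card_le_mul_card_image_of_maps_to (f := Φ)
            (fun y hy => (hSFiff (Φ y)).2 (hΦmem y hy)) (a 0) hfib
        have h3 : D.card ≤ a 0 * (s-1) := by
          have h4 : SF.card ≤ s - 1 := by omega
          calc D.card ≤ a 0 * SF.card := h2
            _ ≤ a 0 * (s-1) := Nat.mul_le_mul_left _ h4
        calc (C+1)^m ≤ m.factorial * ((∏ i, α i) * D.card) := h1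
          _ ≤ m.factorial * ((∏ i, α i) * (a 0 * (s-1))) :=
              Nat.mul_le_mul_left _ (Nat.mul_le_mul_left _ h3)
          _ = m.factorial * ((∏ i : Fin (m+1), a i) * (s-1)) := by
              rw [Fin.prod_univ_succ]
              simp only [hαdef]
              ring
      -- pass to the reals
      have hCreal : ((C:ℝ) + 1) = (Fs:ℝ) - (F1:ℝ) := by
        have h5 := congrArg (fun t : ℤ => (t:ℝ)) hC
        push_cast at h5
        linarith
      have hrpow : ((C:ℝ)+1) ≤ ((m.factorial : ℝ) * ((s : ℝ) * ∏ i, (a i : ℝ))) ^ ((1:ℝ)/(m:ℝ)) := by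
        have hK0 : (0:ℝ) ≤ (m.factorial : ℝ) * ((s : ℝ) * ∏ i, (a i : ℝ)) := by positivity
        have hx0 : (0:ℝ) ≤ (C:ℝ)+1 := by positivity
        have hP0 : (0:ℝ) ≤ ∏ i, (a i:ℝ) := by positivity
        have hpow : ((C:ℝ)+1)^(m:ℕ) ≤ (m.factorial : ℝ) * ((s : ℝ) * ∏ i, (a i : ℝ)) := by
          have hcast : (((C+1)^m : ℕ) : ℝ) ≤ ((m.factorial * ((∏ i, a i) * (s-1)) : ℕ) : ℝ) := by
            exact_mod_cast hmain
          push_cast [Nat.cast_sub hs] at hcast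
          have h6 : (0:ℝ) ≤ (m.factorial:ℝ) * ∏ i, (a i:ℝ) := by positivity
          nlinarith [hcast, h6]
        calc ((C:ℝ)+1) = (((C:ℝ)+1)^(m:ℕ))^((1:ℝ)/(m:ℝ)) := by
              rw [← Real.rpow_natCast ((C:ℝ)+1) m, ← Real.rpow_mul hx0]
              rw [mul_one_div, div_self hmR, Real.rpow_one]
          _ ≤ ((m.factorial : ℝ) * ((s : ℝ) * ∏ i, (a i : ℝ))) ^ ((1:ℝ)/(m:ℝ)) :=
              Real.rpow_le_rpow (by positivity) hpow (by positivity)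
      rw [hCreal] at hrpow
      linarith
  -- conclude
  have hcast1 : ((m+1 : ℕ) : ℝ) - 1 = (m : ℝ) := by push_cast; ring
  have hcast2 : (m+1) - 1 = m := by omega
  rw [hcast1, hcast2]
  set e : ℝ := (1 : ℝ) / (m : ℝ) with he
  set Q : ℝ := ∏ i, (a i : ℝ) with hQ
  have hQ0 : 0 < Q := Finset.prod_pos fun i _ => by exact_mod_cast ha i
  have hs0 : (0 : ℝ) < s := by exact_mod_cast hs
  have hG0 : 0 < ((s : ℝ) * Q) ^ e := Real.rpow_pos_of_pos (by positivity) _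
  have hsQ : ((s : ℝ) * Q) ^ e = (s : ℝ) ^ e * Q ^ e :=
    Real.mul_rpow (le_of_lt hs0) (le_of_lt hQ0)
  have hse : (0:ℝ) < (s : ℝ) ^ e := Real.rpow_pos_of_pos hs0 _
  have hQe : (0:ℝ) < Q ^ e := Real.rpow_pos_of_pos hQ0 _
  have hterm1 : (s : ℝ) ^ (-e) * ((F1 : ℝ) / ((1:ℝ) * Q) ^ e) = (F1 : ℝ) / ((s : ℝ) * Q) ^ e := by
    rw [one_mul, Real.rpow_neg (le_of_lt hs0), hsQ]
    field_simp
  have hterm2 : ((m.factorial : ℝ) * ((s : ℝ) * Q)) ^ e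
      = (m.factorial : ℝ) ^ e * ((s : ℝ) * Q) ^ e :=
    Real.mul_rpow (by positivity) (by positivity)
  rw [hterm1]
  have key' : (Fs : ℝ) ≤ (F1 : ℝ) + (m.factorial : ℝ) ^ e * ((s : ℝ) * Q) ^ e := by
    rw [← hterm2]; exact key
  calc (Fs : ℝ) / ((s : ℝ) * Q) ^ e
      ≤ ((F1 : ℝ) + (m.factorial : ℝ) ^ e * ((s : ℝ) * Q) ^ e) / ((s : ℝ) * Q) ^ e :=
        by apply div_le_div_of_nonneg_right key' hG0.le
    _ = (F1 : ℝ) / ((s : ℝ) * Q) ^ e + (m.factorial : ℝ) ^ e := by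
        rw [add_div, mul_div_assoc, div_self (ne_of_gt hG0), mul_one]
end
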